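/- arXiv:2112.05281 — 8 statements merged into one kernel-verified Lean document; each statement's English description precedes it below -/
import Mathlib

section
/- For all integers k ≥ 1, n ≥ 1 and m ≥ 0, if k does not divide n then C_k(n,m) = n·C_k(n-1,m). -/
/-- `C k n m` is the number of permutations of `n` letters whose cycle
decomposition contains exactly `m` cycles of length `k`. -/
noncomputable def C (k n m : ℕ) : ℕ :=
  Nat.card {π : Equiv.Perm (Fin n) // π.cycleType.count k = m}

set_option linter.unusedSectionVars false
set_option linter.unreachableTactic false
set_option linter.unusedTactic false

open Equiv Equiv.Perm Finset

section Aux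

variable {α : Type*} [Fintype α] [DecidableEq α]


/-- number of k-cycles statistic -/
def stat (k : ℕ) (π : Perm α) : ℕ := π.cycleType.count k

/-- the cycle-set of `a` under `π` -/
def cset (a : α) (π : Perm α) : Finset α := univ.filter (π.SameCycle a)

lemma C_eq (k n m : ℕ) :
    C k n m = (univ.filter fun π : Perm (Fin n) => stat k π = m).card := by
  rw [C, Nat.card_eq_fintype_card, Fintype.card_subtype]
  rfl

lemma mem_cset {a : α} {π : Perm α} {x : α} : x ∈ cset a π ↔ π.SameCycle a x := by
  simp [cset]

lemma self_mem_cset (a : α) (π : Perm α) : a ∈ cset a π := mem_cset.2 (SameCycle.refl _ _)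

lemma cset_of_fixed {a : α} {π : Perm α} (h : π a = a) : cset a π = {a} := by
  ext x
  simp only [mem_cset, mem_singleton]
  constructor
  · rintro ⟨i, rfl⟩
    simp [zpow_apply_eq_self_of_apply_eq_self h]
  · rintro rfl; exact SameCycle.refl _ _

lemma cset_of_not_fixed {a : α} {π : Perm α} (h : π a ≠ a) :
    cset a π = (π.cycleOf a).support := by
  ext x
  rw [mem_cset, mem_support_cycleOf_iff]
  simp [Perm.mem_support, h]

-- `Cyc a s` : the candidate cycle parts
lemma cycleOf_cycleOf (π : Perm α) (a : α) :
    (π.cycleOf a).cycleOf a = π.cycleOf a := by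
  by_cases h : π a = a
  · rw [(cycleOf_eq_one_iff π).2 h, cycleOf_one]
  · exact ((isCycle_cycleOf π h).cycleOf_eq (by rwa [cycleOf_apply_self]))

lemma cset_cycleOf (π : Perm α) (a : α) : cset a (π.cycleOf a) = cset a π := by
  by_cases h : π a = a
  · rw [(cycleOf_eq_one_iff π).2 h, cset_of_fixed h, cset_of_fixed (by simp)]
  · have h2 : (π.cycleOf a) a ≠ a := by rwa [cycleOf_apply_self]
    rw [cset_of_not_fixed h, cset_of_not_fixed h2, cycleOf_cycleOf]

-- facts about members of Cyc: c with cycleOf c a = c fixes points outside cset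
lemma fix_of_not_mem_cset {a : α} {c : Perm α} (hc : c.cycleOf a = c) {x : α}
    (hx : x ∉ cset a c) : c x = x := by
  rw [mem_cset] at hx
  conv_lhs => rw [← hc]
  exact cycleOf_apply_of_not_sameCycle hx

lemma cyc_eq_one_iff {a : α} {c : Perm α} (hc : c.cycleOf a = c) : c = 1 ↔ c a = a := by
  constructor
  · intro h; rw [h]; rfl
  · intro h; rw [← hc]; exact (cycleOf_eq_one_iff c).2 h

lemma support_cyc {a : α} {c : Perm α} (hc : c.cycleOf a = c) (h : c a ≠ a) :
    c.support = cset a c := by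
  rw [cset_of_not_fixed h, hc]

lemma isCycle_cyc {a : α} {c : Perm α} (hc : c.cycleOf a = c) (h : c a ≠ a) : c.IsCycle := by
  rw [← hc]; exact isCycle_cycleOf c h

-- count of k in cycleType of a cyc element
lemma stat_cyc {a : α} {c : Perm α} (hc : c.cycleOf a = c) {s : Finset α}
    (hs : cset a c = s) {k : ℕ} (hk : 2 ≤ k) :
    stat k c = if s.card = k then 1 else 0 := by
  by_cases h : c a = a
  · have h1 : c = 1 := (cyc_eq_one_iff hc).2 h
    have : s = {a} := by rw [← hs, h1, cset_of_fixed rfl]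
    subst this
    simp only [card_singleton]
    rw [if_neg (by omega), h1]
    simp [stat]
  · have h1 : c.cycleType = {s.card} := by
      rw [(isCycle_cyc hc h).cycleType, ← hs, ← support_cyc hc h]
    rw [stat, h1]
    simp only [Multiset.count_singleton]
    by_cases h2 : s.card = k
    · simp [h2]
    · rw [if_neg h2, if_neg (fun h => h2 h.symm)]

lemma disjoint_cyc_rest {a : α} {c ρ : Perm α} (hc : c.cycleOf a = c) {s : Finset α}
    (hcs : cset a c = s) (hρ : ∀ x ∈ s, ρ x = x) : Perm.Disjoint c ρ := by
  intro x
  by_cases hx : x ∈ s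
  · exact Or.inr (hρ x hx)
  · exact Or.inl (fix_of_not_mem_cset hc (hcs ▸ hx))

lemma decomp_fixes {a : α} (π : Perm α) {x : α} (hx : x ∈ cset a π) :
    ((π.cycleOf a)⁻¹ * π) x = x := by
  by_cases h : π a = a
  · rw [cset_of_fixed h, mem_singleton] at hx
    subst hx
    simp [(cycleOf_eq_one_iff π).2 h, h]
  · have hmem : π.cycleOf a ∈ π.cycleFactorsFinset :=
      cycleOf_mem_cycleFactorsFinset_iff.2 (Perm.mem_support.2 h)
    have hcomm : Commute (π.cycleOf a) π := self_mem_cycle_factors_commute hmem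
    have hd := disjoint_mul_inv_of_mem_cycleFactorsFinset hmem
    have he : π * (π.cycleOf a)⁻¹ = (π.cycleOf a)⁻¹ * π := (hcomm.inv_left.symm).eq
    rw [← he]
    rcases hd x with h1 | h2
    · exact h1
    · exfalso
      rw [cset_of_not_fixed h, Perm.mem_support] at hx
      exact hx h2

lemma decomp_disjoint {a : α} (π : Perm α) :
    Perm.Disjoint (π.cycleOf a) ((π.cycleOf a)⁻¹ * π) := by
  apply disjoint_cyc_rest (cycleOf_cycleOf π a) rfl
  intro x hx
  rw [cset_cycleOf] at hx
  exact decomp_fixes π hx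

lemma stat_mul_disjoint {c ρ : Perm α} (h : Perm.Disjoint c ρ) (k : ℕ) :
    stat k (c * ρ) = stat k c + stat k ρ := by
  rw [stat, h.cycleType_mul, Multiset.count_add]; rfl

lemma comp_cycleOf {a : α} {s : Finset α} (ha : a ∈ s) {c ρ : Perm α}
    (hc : c.cycleOf a = c) (hcs : cset a c = s) (hρ : ∀ x ∈ s, ρ x = x) :
    (c * ρ).cycleOf a = c ∧ cset a (c * ρ) = s := by
  have hρa : ρ a = a := hρ a ha
  by_cases h : c a = a
  · have h1 : c = 1 := (cyc_eq_one_iff hc).2 h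
    have hs : s = {a} := by rw [← hcs, h1, cset_of_fixed rfl]
    subst h1
    rw [one_mul]
    constructor
    · rw [(cycleOf_eq_one_iff ρ).2 hρa]
    · rw [cset_of_fixed hρa, hs]
  · have hd := disjoint_cyc_rest hc hcs hρ
    have h1 : (c * ρ).cycleOf a = c := by
      rw [hd.cycleOf_mul_distrib, hc, (cycleOf_eq_one_iff ρ).2 hρa, mul_one]
    refine ⟨h1, ?_⟩
    have h2 : (c * ρ) a ≠ a := by
      simp only [Perm.mul_apply, hρa]; exact h
    rw [cset_of_not_fixed h2, h1, support_cyc hc h, hcs]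

lemma fiber_count {a : α} {s : Finset α} (ha : a ∈ s) (k m : ℕ) (hk : 2 ≤ k) :
    (univ.filter fun π : Perm α => cset a π = s ∧ stat k π = m).card =
    (univ.filter fun c : Perm α => c.cycleOf a = c ∧ cset a c = s).card *
    (univ.filter fun ρ : Perm α =>
      (∀ x ∈ s, ρ x = x) ∧ stat k ρ + (if s.card = k then 1 else 0) = m).card := by
  rw [← card_product]
  refine Finset.card_bij'
    (fun π _ => (π.cycleOf a, (π.cycleOf a)⁻¹ * π))
    (fun p _ => p.1 * p.2) ?_ ?_ ?_ ?_
  · -- forward membership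
    intro π hπ
    simp only [mem_filter, mem_univ, true_and] at hπ
    obtain ⟨hs, hstat⟩ := hπ
    simp only [mem_product, mem_filter, mem_univ, true_and]
    have hc1 : (π.cycleOf a).cycleOf a = π.cycleOf a := cycleOf_cycleOf π a
    have hc2 : cset a (π.cycleOf a) = s := by rw [cset_cycleOf, hs]
    refine ⟨⟨hc1, hc2⟩, ?_, ?_⟩
    · intro x hx
      exact decomp_fixes π (by rwa [hs])
    · have hd := decomp_disjoint (a := a) π
      have heq : π = π.cycleOf a * ((π.cycleOf a)⁻¹ * π) := by
        rw [mul_inv_cancel_left]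
      have := stat_mul_disjoint hd k
      rw [← heq] at this
      rw [← hstat, this, stat_cyc hc1 hc2 hk, add_comm]
  · -- backward membership
    intro p hp
    simp only [mem_product, mem_filter, mem_univ, true_and] at hp
    obtain ⟨⟨hc1, hc2⟩, hfix, hstat⟩ := hp
    simp only [mem_filter, mem_univ, true_and]
    obtain ⟨h1, h2⟩ := comp_cycleOf ha hc1 hc2 hfix
    refine ⟨h2, ?_⟩
    rw [stat_mul_disjoint (disjoint_cyc_rest hc1 hc2 hfix) k,
      stat_cyc hc1 hc2 hk, add_comm, hstat]
  · -- left inverse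
    intro π hπ
    simp only
    rw [mul_inv_cancel_left]
  · -- right inverse
    intro p hp
    simp only [mem_product, mem_filter, mem_univ, true_and] at hp
    obtain ⟨⟨hc1, hc2⟩, hfix, hstat⟩ := hp
    obtain ⟨h1, h2⟩ := comp_cycleOf ha hc1 hc2 hfix
    simp only [h1]
    rw [inv_mul_cancel_left]

lemma mem_listperms_iff {t : Finset α} {l : List α} :
    l ∈ t.toList.permutations.toFinset ↔ l.Nodup ∧ l.toFinset = t := by
  rw [List.mem_toFinset, List.mem_permutations]
  constructor
  · intro h
    refine ⟨h.nodup_iff.2 t.nodup_toList, ?_⟩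
    ext x
    rw [List.mem_toFinset, h.mem_iff, Finset.mem_toList]
  · rintro ⟨h1, h2⟩
    rw [List.perm_ext_iff_of_nodup h1 t.nodup_toList]
    intro x
    rw [← List.mem_toFinset, h2, Finset.mem_toList]

lemma card_listperms (t : Finset α) :
    t.toList.permutations.toFinset.card = t.card.factorial := by
  rw [List.toFinset_card_of_nodup (List.nodup_permutations _ t.nodup_toList),
    List.length_permutations, Finset.length_toList]

lemma cyc_ne_fix {a : α} {s : Finset α} {c : Perm α} (hc : c.cycleOf a = c)
    (hcs : cset a c = s) (h2 : 2 ≤ s.card) : c a ≠ a := by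
  intro h
  have h1 : c = 1 := (cyc_eq_one_iff hc).2 h
  rw [h1, cset_of_fixed rfl] at hcs
  rw [← hcs] at h2
  simp at h2

lemma card_cycles {a : α} {s : Finset α} (ha : a ∈ s) :
    (univ.filter fun c : Perm α => c.cycleOf a = c ∧ cset a c = s).card
      = (s.card - 1).factorial := by
  rcases Nat.lt_or_ge s.card 2 with h2 | h2
  · -- s = {a}
    have hcard : s.card = 1 := le_antisymm (by omega) (card_pos.2 ⟨a, ha⟩)
    obtain ⟨b, rfl⟩ := card_eq_one.1 hcard
    rw [mem_singleton] at ha; subst ha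
    have : (univ.filter fun c : Perm α => c.cycleOf a = c ∧ cset a c = {a}) = {1} := by
      ext c
      simp only [mem_filter, mem_univ, true_and, mem_singleton]
      constructor
      · rintro ⟨hc, hcs⟩
        refine (cyc_eq_one_iff hc).2 ?_
        by_contra hne
        rw [cset_of_not_fixed hne] at hcs
        have : c a ∈ (c.cycleOf a).support := by
          rw [mem_support_cycleOf_iff]
          exact ⟨⟨1, by simp⟩, Perm.mem_support.2 hne⟩
        rw [hcs, mem_singleton] at this
        exact hne this
      · rintro rfl
        exact ⟨by rw [cycleOf_one], cset_of_fixed rfl⟩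
    rw [this, hcard]
    simp
  · -- genuine cycles
    rw [show s.card - 1 = (s.erase a).card by rw [card_erase_of_mem ha],
      ← card_listperms (s.erase a)]
    refine Finset.card_bij' (fun c _ => (c.toList a).tail)
      (fun l _ => (a :: l).formPerm) ?_ ?_ ?_ ?_
    · intro c hc
      simp only [mem_filter, mem_univ, true_and] at hc
      obtain ⟨hc1, hc2⟩ := hc
      have hfix := cyc_ne_fix hc1 hc2 h2
      have hsupp : a ∈ c.support := Perm.mem_support.2 hfix
      have hnodup := Perm.nodup_toList c a
      have hlen : (c.toList a).length = s.card := by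
        rw [Perm.length_toList, hc1, support_cyc hc1 hfix, hc2]
      have hne : c.toList a ≠ [] := by
        intro h; rw [h] at hlen; simp at hlen; omega
      have hhead : c.toList a = a :: (c.toList a).tail := by
        obtain ⟨x, t, hxt⟩ := List.exists_cons_of_ne_nil hne
        have h0 := toList_getElem_zero c a hsupp
        have hx : x = a := by simpa [hxt] using h0
        rw [hxt, hx]
        rfl
      have htf : (c.toList a).toFinset = s := by
        ext x
        rw [List.mem_toFinset, mem_toList_iff]
        constructor
        · rintro ⟨hsc, -⟩
          rw [← hc2, mem_cset]; exact hsc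
        · intro hx
          exact ⟨mem_cset.1 (hc2 ▸ hx), hsupp⟩
      rw [mem_listperms_iff]
      constructor
      · exact (List.Nodup.of_cons (hhead ▸ hnodup))
      · have hnotmem : a ∉ (c.toList a).tail := by
          have := hhead ▸ hnodup
          exact (List.nodup_cons.1 this).1
        show (c.toList a).tail.toFinset = s.erase a
        rw [← htf]
        conv_rhs => rw [hhead]
        rw [List.toFinset_cons, Finset.erase_insert (by rwa [List.mem_toFinset])]
    · intro l hl
      rw [mem_listperms_iff] at hl
      obtain ⟨hln, hlt⟩ := hl
      have hanotin : a ∉ l := by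
        intro h
        have := hlt ▸ List.mem_toFinset.2 h
        exact (Finset.notMem_erase a s) this
      have hnodup : (a :: l).Nodup := List.nodup_cons.2 ⟨hanotin, hln⟩
      have hllen : l.length = s.card - 1 := by
        rw [← List.toFinset_card_of_nodup hln, hlt, card_erase_of_mem ha]
      have hlen2 : 2 ≤ (a :: l).length := by
        simp only [List.length_cons]; omega
      have hcyc := List.isCycle_formPerm hnodup hlen2
      have hsupp : (a :: l).formPerm.support = (a :: l).toFinset := by
        apply List.support_formPerm_of_nodup _ hnodup
        intro x hx
        rw [hx] at hlen2; simp at hlen2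
      have hfix : (a :: l).formPerm a ≠ a := by
        rw [← Perm.mem_support, hsupp, List.toFinset_cons]
        exact Finset.mem_insert_self a _
      simp only [mem_filter, mem_univ, true_and]
      have hc1 : (a :: l).formPerm.cycleOf a = (a :: l).formPerm :=
        hcyc.cycleOf_eq hfix
      refine ⟨hc1, ?_⟩
      rw [cset_of_not_fixed hfix, hc1, hsupp, List.toFinset_cons, hlt,
        Finset.insert_erase ha]
    · intro c hc
      simp only [mem_filter, mem_univ, true_and] at hc
      obtain ⟨hc1, hc2⟩ := hc
      have hfix := cyc_ne_fix hc1 hc2 h2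
      have hsupp : a ∈ c.support := Perm.mem_support.2 hfix
      have hlen : (c.toList a).length = s.card := by
        rw [Perm.length_toList, hc1, support_cyc hc1 hfix, hc2]
      have hne : c.toList a ≠ [] := by
        intro h; rw [h] at hlen; simp at hlen; omega
      have hhead : c.toList a = a :: (c.toList a).tail := by
        obtain ⟨x, t, hxt⟩ := List.exists_cons_of_ne_nil hne
        have h0 := toList_getElem_zero c a hsupp
        have hx : x = a := by simpa [hxt] using h0
        rw [hxt, hx]
        rfl
      rw [← hhead, formPerm_toList, hc1]
    · intro l hl
      rw [mem_listperms_iff] at hl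
      obtain ⟨hln, hlt⟩ := hl
      have hanotin : a ∉ l := by
        intro h
        have := hlt ▸ List.mem_toFinset.2 h
        exact (Finset.notMem_erase a s) this
      have hnodup : (a :: l).Nodup := List.nodup_cons.2 ⟨hanotin, hln⟩
      have hllen : l.length = s.card - 1 := by
        rw [← List.toFinset_card_of_nodup hln, hlt, card_erase_of_mem ha]
      have hlen2 : 2 ≤ (a :: l).length := by
        simp only [List.length_cons]; omega
      have := toList_formPerm_nontrivial (a :: l) hlen2 hnodup
      simp only [List.get] at this
      show ((a :: l).formPerm.toList a).tail = l
      rw [this]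
      rfl

lemma cycleType_ofSubtype' {p : α → Prop} [DecidablePred p] (f : Perm (Subtype p)) :
    (ofSubtype f).cycleType = f.cycleType := by
  have h : ofSubtype f = f.extendDomain (Equiv.refl (Subtype p)) := by
    ext x
    by_cases hx : p x
    · rw [extendDomain_apply_subtype _ _ hx, ofSubtype_apply_of_mem f hx]
      rfl
    · rw [extendDomain_apply_not_subtype _ _ hx, ofSubtype_apply_of_not_mem f hx]
  rw [h, cycleType_extendDomain]

lemma fixes_iff {s : Finset α} {ρ : Perm α} (h : ∀ x ∈ s, ρ x = x) (x : α) :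
    x ∉ s ↔ ρ x ∉ s := by
  constructor
  · intro hx hρx
    have h2 : ρ x = x := ρ.injective (h _ hρx)
    rw [h2] at hρx
    exact hx hρx
  · intro hx hxx
    have := h x hxx
    rw [this] at hx
    exact hx hxx

lemma cycleType_permCongr {β γ : Type*} [Fintype β] [DecidableEq β] [Fintype γ]
    [DecidableEq γ] (e : β ≃ γ) (f : Perm β) : (e.permCongr f).cycleType = f.cycleType := by
  have h : e.permCongr f
      = f.extendDomain (e.trans (Equiv.subtypeUnivEquiv (fun _ : γ => trivial)).symm) := by
    ext x
    rw [extendDomain_apply_subtype _ _ trivial]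
    rfl
  rw [h, cycleType_extendDomain]

lemma card_perm_fixing (k m' : ℕ) (s : Finset α) :
    (univ.filter fun ρ : Perm α => (∀ x ∈ s, ρ x = x) ∧ stat k ρ = m').card
      = C k (Fintype.card α - s.card) m' := by
  classical
  have hq : Fintype.card {x : α // x ∉ s} = Fintype.card α - s.card := by
    rw [Fintype.card_subtype_compl, Fintype.card_coe]
  obtain e : {x : α // x ∉ s} ≃ Fin (Fintype.card α - s.card) :=
    Fintype.equivFinOfCardEq hq
  rw [C_eq]
  refine Finset.card_bij'
    (fun ρ hρ => e.permCongr (ρ.subtypePerm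
      (fun x => (fixes_iff (fun x hx => ((mem_filter.1 hρ).2).1 x hx) x).symm)))
    (fun g _ => ofSubtype (e.permCongr.symm g)) ?_ ?_ ?_ ?_
  · intro ρ hρ
    simp only [mem_filter, mem_univ, true_and] at hρ ⊢
    have hfeq : ofSubtype (ρ.subtypePerm (p := fun x => x ∉ s)
        (fun x => (fixes_iff (fun x hx => hρ.1 x hx) x).symm)) = ρ :=
      ofSubtype_subtypePerm _ (fun x hx => by
        by_contra hmem
        exact hx (hρ.1 x hmem))
    rw [stat, cycleType_permCongr, ← cycleType_ofSubtype', hfeq]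
    exact hρ.2
  · intro g hg
    simp only [mem_filter, mem_univ, true_and] at hg ⊢
    constructor
    · intro x hx
      exact ofSubtype_apply_of_not_mem _ (by simp [hx])
    · rw [stat, cycleType_ofSubtype', Equiv.permCongr_symm, cycleType_permCongr, ← hg, stat]
  · intro ρ hρ
    simp only [Equiv.symm_apply_apply]
    simp only [mem_filter, mem_univ, true_and] at hρ
    exact ofSubtype_subtypePerm _ (fun x hx => by
      by_contra hmem
      exact hx (hρ.1 x hmem))
  · intro g hg
    rw [subtypePerm_ofSubtype, Equiv.apply_symm_apply]

lemma card_sets (a : α) (r : ℕ) (hr : 1 ≤ r) :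
    ((univ : Finset (Finset α)).filter (fun s => a ∈ s ∧ s.card = r)).card
      = (Fintype.card α - 1).choose (r - 1) := by
  have h1 : (Fintype.card α - 1).choose (r-1) = ((univ : Finset α).erase a).card.choose (r-1) := by
    rw [Finset.card_erase_of_mem (Finset.mem_univ a), Finset.card_univ]
  rw [h1, ← Finset.card_powersetCard (r-1) (univ.erase a)]
  refine Finset.card_bij' (fun s _ => s.erase a) (fun t _ => insert a t) ?_ ?_ ?_ ?_
  · intro s hs
    simp only [mem_filter, mem_univ, true_and] at hs
    rw [Finset.mem_powersetCard]
    exact ⟨Finset.erase_subset_erase a (Finset.subset_univ s),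
      by rw [Finset.card_erase_of_mem hs.1, hs.2]⟩
  · intro t ht
    rw [Finset.mem_powersetCard] at ht
    have hat : a ∉ t := fun h => (Finset.notMem_erase a univ) (ht.1 h)
    simp only [mem_filter, mem_univ, true_and]
    refine ⟨Finset.mem_insert_self a t, ?_⟩
    rw [Finset.card_insert_of_notMem hat, ht.2]
    omega
  · intro s hs
    simp only [mem_filter, mem_univ, true_and] at hs
    exact Finset.insert_erase hs.1
  · intro t ht
    rw [Finset.mem_powersetCard] at ht
    have hat : a ∉ t := fun h => (Finset.notMem_erase a univ) (ht.1 h)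
    exact Finset.erase_insert hat

lemma recN (k n m : ℕ) (hk : 2 ≤ k) (hn : 1 ≤ n) :
    C k n m = ∑ r ∈ Finset.Icc 1 n, (n-1).choose (r-1) * ((r-1).factorial *
      (if r = k then (if m = 0 then 0 else C k (n-r) (m-1)) else C k (n-r) m)) := by
  have hpos : 0 < n := hn
  set a : Fin n := ⟨0, hpos⟩ with ha
  set G : ℕ → ℕ := fun r =>
      (if r = k then (if m = 0 then 0 else C k (n-r) (m-1)) else C k (n-r) m) with hG
  have step1 : C k n m =
      ∑ s ∈ (univ : Finset (Finset (Fin n))).filter (fun s => a ∈ s),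
        ((univ : Finset (Perm (Fin n))).filter
          (fun π => cset a π = s ∧ stat k π = m)).card := by
    rw [C_eq]
    rw [Finset.card_eq_sum_card_fiberwise
      (f := fun π : Perm (Fin n) => cset a π)
      (t := (univ : Finset (Finset (Fin n))).filter (fun s => a ∈ s))
      (fun π _ => by simp [self_mem_cset])]
    apply Finset.sum_congr rfl
    intro s _
    congr 1
    rw [Finset.filter_filter]
    apply Finset.filter_congr
    intro π _
    tauto
  have step2 : ∀ s ∈ (univ : Finset (Finset (Fin n))).filter (fun s => a ∈ s),
      ((univ : Finset (Perm (Fin n))).filter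
        (fun π => cset a π = s ∧ stat k π = m)).card = (s.card - 1).factorial * G s.card := by
    intro s hs
    simp only [mem_filter, mem_univ, true_and] at hs
    have hcp1 := card_perm_fixing (α := Fin n) k (m-1) s
    have hcp2 := card_perm_fixing (α := Fin n) k m s
    rw [Fintype.card_fin] at hcp1 hcp2
    rw [fiber_count hs k m hk, card_cycles hs]
    congr 1
    simp only [hG]
    split_ifs with hsk hm
    · rw [Finset.card_eq_zero, Finset.eq_empty_iff_forall_notMem]
      intro ρ hρ
      simp only [mem_filter, mem_univ, true_and, if_pos hsk] at hρ
      omega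
    · rw [← hcp1]
      congr 1
      ext ρ
      simp only [mem_filter, mem_univ, true_and, if_pos hsk]
      constructor
      · rintro ⟨h1, h2⟩; exact ⟨h1, by omega⟩
      · rintro ⟨h1, h2⟩; exact ⟨h1, by omega⟩
    · rw [← hcp2]
      congr 1
      ext ρ
      simp only [mem_filter, mem_univ, true_and, if_neg hsk]
      constructor
      · rintro ⟨h1, h2⟩; exact ⟨h1, by omega⟩
      · rintro ⟨h1, h2⟩; exact ⟨h1, by omega⟩
  rw [step1, Finset.sum_congr rfl step2]
  rw [← Finset.sum_fiberwise_of_maps_to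
    (g := fun s : Finset (Fin n) => s.card) (t := Finset.Icc 1 n)
    (fun s hs => by
      simp only [mem_filter, mem_univ, true_and] at hs
      rw [Finset.mem_Icc]
      refine ⟨Finset.card_pos.2 ⟨a, hs⟩, ?_⟩
      have := Finset.card_le_univ s
      simpa using this)]
  apply Finset.sum_congr rfl
  intro r hr
  rw [Finset.mem_Icc] at hr
  have hstep : ∀ s ∈ ((univ : Finset (Finset (Fin n))).filter (fun s => a ∈ s)).filter
      (fun s => s.card = r), (s.card - 1).factorial * G s.card = (r-1).factorial * G r := by
    intro s hs
    simp only [mem_filter] at hs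
    rw [hs.2]
  rw [Finset.sum_congr rfl hstep, Finset.sum_const, smul_eq_mul, Finset.filter_filter]
  have hcs : ((univ : Finset (Finset (Fin n))).filter
      (fun s => a ∈ s ∧ s.card = r)).card = (n-1).choose (r-1) := by
    rw [card_sets a r hr.1, Fintype.card_fin]
  rw [hcs]

lemma sum_reindex (n : ℕ) (f : ℕ → ℚ) :
    ∑ r ∈ Finset.Icc 1 n, f r = ∑ j ∈ Finset.range n, f (n - j) := by
  refine Finset.sum_nbij' (fun r => n - r) (fun j => n - j) ?_ ?_ ?_ ?_ ?_ <;>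
    · intro x hx
      simp only [Finset.mem_Icc, Finset.mem_range] at hx ⊢
      first
        | omega
        | (congr 1; omega)

lemma key1 (k n m : ℕ) (hk : 2 ≤ k) (hn : 1 ≤ n) :
    (C k n m : ℚ) = (n-1).factorial * ∑ j ∈ Finset.range n,
      (if j + k = n then (if m = 0 then 0 else (C k j (m-1) : ℚ) / j.factorial)
       else (C k j m : ℚ) / j.factorial) := by
  have h := recN k n m hk hn
  have hcast : (C k n m : ℚ) = ∑ r ∈ Finset.Icc 1 n, ((n-1).choose (r-1) : ℚ) *
      ((r-1).factorial * (if r = k then (if m = 0 then 0 else (C k (n-r) (m-1) : ℚ))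
        else (C k (n-r) m : ℚ))) := by
    rw [h]
    push_cast
    apply Finset.sum_congr rfl
    intro r _
    by_cases h1 : r = k
    · by_cases h2 : m = 0 <;> simp [h1, h2]
    · simp [h1]
  rw [hcast, sum_reindex, Finset.mul_sum]
  apply Finset.sum_congr rfl
  intro j hj
  rw [Finset.mem_range] at hj
  have hfac : ((n-1).choose (n-j-1) * (n-j-1).factorial * j.factorial : ℕ)
      = (n-1).factorial := by
    have h3 : (n-1) - (n-j-1) = j := by omega
    have := Nat.choose_mul_factorial_mul_factorial (n := n-1) (k := n-j-1) (by omega)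
    rwa [h3] at this
  have hfq : ((n-1).choose (n-j-1) : ℚ) * (n-j-1).factorial * j.factorial
      = (n-1).factorial := by
    exact_mod_cast congrArg (Nat.cast (R := ℚ)) hfac
  have hjfac : (j.factorial : ℚ) ≠ 0 := by
    exact_mod_cast Nat.factorial_ne_zero j
  have hcond : (n - j = k) ↔ (j + k = n) := by omega
  by_cases h1 : j + k = n
  · rw [if_pos (hcond.2 h1), if_pos h1]
    by_cases h2 : m = 0
    · simp [h2]
    · rw [if_neg h2, if_neg h2]
      rw [show n - (n - j) = j by omega]
      field_simp
      rw [← hfq]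
      ring
  · rw [if_neg (fun hh => h1 (hcond.1 hh)), if_neg h1,
      show n - (n - j) = j by omega]
    field_simp
    rw [← hfq]
    ring

lemma key2 (k : ℕ) (hk : 2 ≤ k) : ∀ n, ¬ k ∣ n → ∀ m : ℕ,
    (C k n m : ℚ) = n * C k (n-1) m := by
  intro n
  induction n using Nat.strong_induction_on with
  | _ n IH =>
  intro hdvd m
  have hn : 1 ≤ n := by
    rcases Nat.eq_zero_or_pos n with h | h
    · exact absurd (h ▸ Dvd.intro 0 rfl) hdvd
    · exact h
  have hkn : k ≠ n := fun h => hdvd (h ▸ dvd_refl k)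
  -- abbreviations
  set T : ℕ → ℕ → ℚ := fun N j =>
      (if j + k = N then (if m = 0 then 0 else (C k j (m-1) : ℚ) / j.factorial)
       else (C k j m : ℚ) / j.factorial) with hT
  have h1 : (C k n m : ℚ) = (n-1).factorial * ∑ j ∈ Finset.range n, T n j :=
    key1 k n m hk hn
  have hsplit : ∑ j ∈ Finset.range n, T n j
      = (∑ j ∈ Finset.range (n-1), T n j) + T n (n-1) := by
    have : n = (n-1) + 1 := by omega
    rw [this, Finset.sum_range_succ]
    congr 2 <;> omega
  have hlast : T n (n-1) = (C k (n-1) m : ℚ) / (n-1).factorial := by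
    rw [hT]
    simp only
    rw [if_neg (by omega)]
  -- the middle sums agree
  have hmid : ∑ j ∈ Finset.range (n-1), T n j = ∑ j ∈ Finset.range (n-1), T (n-1) j := by
    rcases Nat.lt_or_ge n k with hlt | hge
    · -- k > n : no special terms
      apply Finset.sum_congr rfl
      intro j hj
      rw [Finset.mem_range] at hj
      rw [hT]
      simp only
      rw [if_neg (by omega), if_neg (by omega)]
    · -- k < n
      have hkn' : k < n := lt_of_le_of_ne hge hkn
      set j0 := n - k with hj0
      set j1 := n - k - 1 with hj1
      have hj0n : ¬ k ∣ j0 := by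
        intro h
        apply hdvd
        have : n = j0 + k := by omega
        rw [this]
        exact Nat.dvd_add h (dvd_refl k)
      have hj0pos : 1 ≤ j0 := by omega
      have hIH : ∀ mm, (C k j0 mm : ℚ) / j0.factorial
          = (C k j1 mm : ℚ) / j1.factorial := by
        intro mm
        have := IH j0 (by omega) hj0n mm
        have hfac : (j0.factorial : ℚ) = j0 * j1.factorial := by
          have : j0 = j1 + 1 := by omega
          rw [this, Nat.factorial_succ]
          push_cast
          ring
        rw [this, show j0 - 1 = j1 by omega, hfac]
        have h0 : (j0 : ℚ) ≠ 0 := by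
          exact_mod_cast (by omega : j0 ≠ 0)
        have h1 : (j1.factorial : ℚ) ≠ 0 := by
          exact_mod_cast Nat.factorial_ne_zero j1
        field_simp
      rw [← sub_eq_zero, ← Finset.sum_sub_distrib]
      have hzero : ∀ j ∈ Finset.range (n-1), j ∉ ({j1, j0} : Finset ℕ) →
          T n j - T (n-1) j = 0 := by
        intro j hj hjn
        simp only [Finset.mem_insert, Finset.mem_singleton] at hjn
        push_neg at hjn
        rw [hT]
        simp only
        rw [if_neg (by omega), if_neg (by omega)]
        ring
      rw [← Finset.sum_subset (by
          intro x hx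
          simp only [Finset.mem_insert, Finset.mem_singleton] at hx
          rw [Finset.mem_range]
          rcases hx with rfl | rfl <;> omega) hzero]
      rw [Finset.sum_pair (by omega : j1 ≠ j0)]
      have e1 : T n j1 - T (n-1) j1
          = (C k j1 m : ℚ) / j1.factorial
            - (if m = 0 then 0 else (C k j1 (m-1) : ℚ) / j1.factorial) := by
        rw [hT]; simp only
        rw [if_neg (show ¬ (j1 + k = n) by omega),
          if_pos (show j1 + k = n - 1 by omega)]
      have e0 : T n j0 - T (n-1) j0
          = (if m = 0 then 0 else (C k j0 (m-1) : ℚ) / j0.factorial)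
            - (C k j0 m : ℚ) / j0.factorial := by
        rw [hT]; simp only
        rw [if_pos (show j0 + k = n by omega),
          if_neg (show ¬ (j0 + k = n - 1) by omega)]
      rw [e1, e0, hIH m]
      by_cases hm : m = 0
      · simp [hm]
      · rw [if_neg hm, if_neg hm, hIH (m-1)]
        ring
  -- put it together
  rcases Nat.eq_or_lt_of_le hn with h1' | h2'
  · -- n = 1
    have hn1 : n = 1 := h1'.symm
    subst hn1
    rw [h1, hsplit]
    simp only [Finset.range_zero, Finset.sum_empty, zero_add, hlast]
    norm_num
  · -- n ≥ 2
    have hn2 : 2 ≤ n := h2'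
    have h2 : (C k (n-1) m : ℚ) = (n-2).factorial * ∑ j ∈ Finset.range (n-1), T (n-1) j := by
      have := key1 k (n-1) m hk (by omega)
      rw [show n - 1 - 1 = n - 2 by omega] at this
      exact this
    have hffac : ((n-1).factorial : ℚ) = ((n:ℚ)-1) * (n-2).factorial := by
      have h' : n - 1 = (n-2) + 1 := by omega
      rw [h', Nat.factorial_succ, Nat.cast_mul, Nat.cast_add, Nat.cast_one,
        Nat.cast_sub hn2]
      push_cast
      ring
    have hf2 : ((n-2).factorial : ℚ) ≠ 0 := by
      exact_mod_cast Nat.factorial_ne_zero (n-2)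
    have hS : ∑ j ∈ Finset.range (n-1), T (n-1) j = (C k (n-1) m : ℚ) / (n-2).factorial := by
      rw [h2]; field_simp
    have hf1 : ((n-1).factorial : ℚ) ≠ 0 := by
      exact_mod_cast Nat.factorial_ne_zero (n-1)
    have hq1 : ((n:ℚ) - 1) ≠ 0 := by
      have : (2:ℚ) ≤ (n:ℚ) := by exact_mod_cast hn2
      intro hq
      nlinarith
    have hkey : ((n-1).factorial : ℚ) *
        ((C k (n-1) m : ℚ) / (n-2).factorial + (C k (n-1) m : ℚ) / (n-1).factorial)
        = n * C k (n-1) m := by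
      rw [hffac]
      field_simp
      ring
    rw [h1, hsplit, hmid, hlast, hS, hkey]

end Aux

theorem stmt1 (k n m : ℕ) (hk : 1 ≤ k) (hn : 1 ≤ n) (hkn : ¬ k ∣ n) :
    C k n m = n * C k (n - 1) m := by
  have hk2 : 2 ≤ k := by
    rcases Nat.lt_or_ge k 2 with h | h
    · have hk1 : k = 1 := by omega
      subst hk1
      exact absurd (one_dvd n) hkn
    · exact h
  have h := key2 k hk2 n hkn m
  exact_mod_cast h
end

section
/- For all integers k > 1, n ≥ 1 and m ≥ 0 with C_k(n,m) > 0, the expected value of π(1) over permutations π ∈ S_n with exactly m k-cycles satisfies E[π(1)] = (n/2)·(1 - C_k(n-1,m)/C_k(n,m)) + 1; equivalently, 2·Σ_{π} π(1) = (n+2)·C_k(n,m) - n·C_k(n-1,m), where the sum is over all permutations π ∈ S_n with exactly m k-cycles. -/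
open Equiv Equiv.Perm Finset

lemma C_eq_card (k n m : ℕ) :
    C k n m = (univ.filter fun π : Perm (Fin n) => π.cycleType.count k = m).card := by
  rw [C, Nat.card_eq_fintype_card, Fintype.card_subtype]

lemma sum_range_rat (n : ℕ) : ∑ i ∈ Finset.range n, (i : ℚ) = n * (n - 1) / 2 := by
  induction n with
  | zero => simp
  | succ n ih => rw [Finset.sum_range_succ, ih]; push_cast; ring

section
variable {n' : ℕ}

private lemma hp_aux (π : Perm (Fin (n' + 1))) (h0 : π 0 = 0) :
    ∀ x : Fin (n' + 1), x ≠ 0 ↔ π x ≠ 0 := by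
  intro x
  constructor
  · intro hx h
    exact hx (by rwa [← h0, Equiv.apply_eq_iff_eq] at h)
  · intro hx h
    exact hx (by rw [h, h0])

private lemma key_ext (π : Perm (Fin (n' + 1))) (h0 : π 0 = 0) :
    (((finSuccAboveEquiv (0 : Fin (n' + 1))).symm.permCongr
        (π.subtypePerm (fun x => (hp_aux π h0 x).symm))).extendDomain
        (finSuccAboveEquiv (0 : Fin (n' + 1)))) = π := by
  ext b
  by_cases hb : b = (0 : Fin (n' + 1))
  · subst hb
    rw [Perm.extendDomain_apply_not_subtype _ (finSuccAboveEquiv (0 : Fin (n' + 1)))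
      (by simp), h0]
  · rw [Perm.extendDomain_apply_subtype _ (finSuccAboveEquiv (0 : Fin (n' + 1))) hb]
    simp [Equiv.permCongr_apply, Equiv.Perm.subtypePerm_apply]

private lemma fiber0 (k m : ℕ) :
    ((univ : Finset (Perm (Fin (n' + 1)))).filter
        fun π => π.cycleType.count k = m ∧ π 0 = 0).card = C k n' m := by
  rw [C_eq_card]
  refine (Finset.card_bij
      (fun (e : Perm (Fin n')) _ => e.extendDomain (finSuccAboveEquiv (0 : Fin (n' + 1))))
      ?_ ?_ ?_).symm
  · intro e he
    have h1 : e.cycleType.count k = m := by simpa using he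
    simp only [Finset.mem_filter, Finset.mem_univ, true_and]
    constructor
    · rw [Equiv.Perm.cycleType_extendDomain]; exact h1
    · exact Perm.extendDomain_apply_not_subtype _ _ (by simp)
  · intro e1 h1 e2 h2 heq
    exact Equiv.Perm.extendDomainHom_injective (finSuccAboveEquiv (0 : Fin (n' + 1))) heq
  · intro π hπ
    obtain ⟨-, h1, h2⟩ := Finset.mem_filter.mp hπ
    refine ⟨(finSuccAboveEquiv (0 : Fin (n' + 1))).symm.permCongr
        (π.subtypePerm (fun x => (hp_aux π h2 x).symm)), ?_, key_ext π h2⟩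
    simp only [Finset.mem_filter, Finset.mem_univ, true_and]
    rw [← Equiv.Perm.cycleType_extendDomain (finSuccAboveEquiv (0 : Fin (n' + 1))),
      key_ext π h2]
    exact h1

private lemma fiberj (k m : ℕ) (j j' : Fin (n' + 1)) (hj : j ≠ 0) (hj' : j' ≠ 0) :
    ((univ : Finset (Perm (Fin (n' + 1)))).filter
        fun π => π.cycleType.count k = m ∧ π 0 = j).card
      = ((univ : Finset (Perm (Fin (n' + 1)))).filter
        fun π => π.cycleType.count k = m ∧ π 0 = j').card := by
  have hswap : Equiv.swap j j' 0 = 0 :=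
    Equiv.swap_apply_of_ne_of_ne (Ne.symm hj) (Ne.symm hj')
  have hct : ∀ π : Perm (Fin (n' + 1)),
      (Equiv.swap j j' * π * Equiv.swap j j').cycleType = π.cycleType := by
    intro π
    have h : Equiv.swap j j' * π * Equiv.swap j j'
        = Equiv.swap j j' * π * (Equiv.swap j j')⁻¹ := by rw [Equiv.swap_inv]
    rw [h, Equiv.Perm.cycleType_conj]
  have hinv : ∀ π : Perm (Fin (n' + 1)),
      Equiv.swap j j' * (Equiv.swap j j' * π * Equiv.swap j j') * Equiv.swap j j' = π := by
    intro π
    simp [← mul_assoc, Equiv.swap_mul_self, mul_assoc]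
  refine Finset.card_bij'
    (fun π _ => Equiv.swap j j' * π * Equiv.swap j j')
    (fun π _ => Equiv.swap j j' * π * Equiv.swap j j') ?_ ?_ ?_ ?_
  · intro π hπ
    obtain ⟨-, h1, h2⟩ := Finset.mem_filter.mp hπ
    simp only [Finset.mem_filter, Finset.mem_univ, true_and]
    refine ⟨hct π ▸ h1, ?_⟩
    simp only [Equiv.Perm.mul_apply, hswap, h2, Equiv.swap_apply_left]
  · intro π hπ
    obtain ⟨-, h1, h2⟩ := Finset.mem_filter.mp hπ
    simp only [Finset.mem_filter, Finset.mem_univ, true_and]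
    refine ⟨hct π ▸ h1, ?_⟩
    simp only [Equiv.Perm.mul_apply, hswap, h2, Equiv.swap_apply_right]
  · intro π _; exact hinv π
  · intro π _; exact hinv π

end

theorem stmt6 (k n m : ℕ) (hk : 1 < k) (hn : 1 ≤ n) (hpos : 0 < C k n m) :
    (∑ π : Equiv.Perm (Fin n),
        if π.cycleType.count k = m then ((π ⟨0, hn⟩ : Fin n) : ℚ) + 1 else 0)
        / C k n m
      = (n : ℚ) / 2 * (1 - (C k (n - 1) m : ℚ) / C k n m) + 1 := by
  obtain ⟨n', rfl⟩ : ∃ n', n = n' + 1 := ⟨n - 1, (Nat.succ_pred_eq_of_pos hn).symm⟩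
  have h0 : (⟨0, hn⟩ : Fin (n' + 1)) = 0 := rfl
  rw [h0]
  simp only [Nat.add_sub_cancel]
  set T : Finset (Perm (Fin (n' + 1))) :=
    univ.filter fun π => π.cycleType.count k = m with hT
  set N : Fin (n' + 1) → ℕ := fun j => (T.filter fun π => π 0 = j).card with hN
  have hfilter : ∀ j : Fin (n' + 1), T.filter (fun π => π 0 = j)
      = univ.filter fun π => π.cycleType.count k = m ∧ π 0 = j := by
    intro j; rw [hT, Finset.filter_filter]
  -- A : common value of N j for j ≠ 0
  set A : ℕ := if h : n' = 0 then 0 else N ⟨1, by omega⟩ with hA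
  have hNA : ∀ j : Fin (n' + 1), j ≠ 0 → N j = A := by
    intro j hj
    have hn1 : ¬ n' = 0 := by
      intro h; subst h
      exact hj (Fin.ext (by have := j.isLt; omega))
    rw [hA, dif_neg hn1, hN]
    simp only [hfilter]
    exact fiberj k m j ⟨1, by omega⟩ hj (by simp [Fin.ext_iff])
  have hN0 : N 0 = C k n' m := by rw [hN]; simp only [hfilter]; exact fiber0 k m
  -- the total count
  have hCsum : C k (n' + 1) m = ∑ j : Fin (n' + 1), N j := by
    rw [C_eq_card, ← hT]
    exact Finset.card_eq_sum_card_fiberwise fun x _ => Finset.mem_univ (x 0)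
  -- the sum
  have hS : (∑ π : Equiv.Perm (Fin (n' + 1)),
      if π.cycleType.count k = m then ((π 0 : Fin (n' + 1)) : ℚ) + 1 else 0)
      = ∑ j : Fin (n' + 1), (N j : ℚ) * ((j : ℚ) + 1) := by
    rw [← Finset.sum_filter, ← hT, ← Finset.sum_fiberwise T (fun π => π 0)
      (fun π => ((π 0 : Fin (n' + 1)) : ℚ) + 1)]
    refine Finset.sum_congr rfl fun j _ => ?_
    rw [Finset.sum_congr rfl (fun π hπ => ?_), Finset.sum_const, hN, nsmul_eq_mul]
    have : π 0 = j := (Finset.mem_filter.mp hπ).2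
    rw [this]
  rw [hS]
  -- split off j = 0
  have hsum1 : (∑ j : Fin (n' + 1), (N j : ℚ) * ((j : ℚ) + 1))
      = (N 0 : ℚ) + (A : ℚ) * ((n' : ℚ) * ((n' : ℚ) - 1) / 2 + 2 * n') := by
    rw [Fin.sum_univ_succ]
    simp only [Fin.val_zero, Nat.cast_zero, zero_add, mul_one]
    congr 1
    have hterm : ∀ i : Fin n', (N i.succ : ℚ) * ((i.succ : ℚ) + 1)
        = (A : ℚ) * ((i : ℚ) + 2) := by
      intro i
      rw [hNA i.succ (Fin.succ_ne_zero i)]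
      have : ((i.succ : Fin (n' + 1)) : ℚ) = (i : ℚ) + 1 := by
        simp [Fin.val_succ]
      rw [this]; ring
    rw [Finset.sum_congr rfl fun i _ => hterm i, ← Finset.mul_sum]
    congr 1
    rw [Finset.sum_add_distrib, Finset.sum_const, Finset.card_univ, Fintype.card_fin,
      Fin.sum_univ_eq_sum_range (fun i => (i : ℚ)), sum_range_rat, nsmul_eq_mul]
    ring
  rw [hsum1]
  have hCsum' : (C k (n' + 1) m : ℚ) = (N 0 : ℚ) + (n' : ℚ) * A := by
    rw [hCsum, Fin.sum_univ_succ]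
    push_cast
    rw [Finset.sum_congr rfl fun i _ => by rw [hNA i.succ (Fin.succ_ne_zero i)],
      Finset.sum_const, Finset.card_univ, Fintype.card_fin, nsmul_eq_mul]
  have hCpos : (0 : ℚ) < (C k (n' + 1) m : ℚ) := by exact_mod_cast hpos
  have hCne : (C k (n' + 1) m : ℚ) ≠ 0 := ne_of_gt hCpos
  rw [hN0] at hCsum' ⊢
  rw [hCsum'] at hCne ⊢
  push_cast
  have hCne2 : (C k n' m : ℚ) + (A : ℚ) * (n' : ℚ) ≠ 0 := by rwa [mul_comm]
  field_simp
  ring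
end

section
/- For all integers k > 1, n ≥ 1 and m ≥ 0 with C_k(n,m) > 0, if k does not divide n then the expected value of π(1) over permutations π ∈ S_n with exactly m k-cycles equals (n+1)/2. -/
open Equiv Equiv.Perm Finset

namespace Stmt7Aux

variable {α : Type*} [DecidableEq α] [Fintype α]

/-- Length of the cycle of `y` under `σ` (`1` if `y` is fixed). -/
def clen (σ : Perm α) (y : α) : ℕ := if σ y = y then 1 else (σ.cycleOf y).support.card

lemma clen_eq_card {σ : Perm α} {y : α} (h : σ y ≠ y) :
    clen σ y = (σ.cycleOf y).support.card := if_neg h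

lemma clen_fixed {σ : Perm α} {y : α} (h : σ y = y) : clen σ y = 1 := if_pos h

lemma two_le_clen {σ : Perm α} {y : α} (h : σ y ≠ y) : 2 ≤ clen σ y := by
  rw [clen_eq_card h]; exact two_le_card_support_cycleOf_iff.mpr h

lemma clen_eq_one_iff {σ : Perm α} {y : α} : clen σ y = 1 ↔ σ y = y := by
  refine ⟨fun h => ?_, clen_fixed⟩
  by_contra hy
  have := two_le_clen (σ := σ) (y := y) hy
  omega

lemma clen_apply_self (σ : Perm α) (y : α) : clen σ (σ y) = clen σ y := by
  have h : σ (σ y) = σ y ↔ σ y = y := ⟨fun h => σ.injective h, fun h => by rw [h, h]⟩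
  unfold clen
  rw [cycleOf_self_apply]
  by_cases hy : σ y = y
  · rw [if_pos hy, if_pos (h.mpr hy)]
  · rw [if_neg hy, if_neg (fun hh => hy (h.mp hh))]

lemma clen_sameCycle {σ : Perm α} {a b : α} (h : σ.SameCycle a b) :
    clen σ b = clen σ a := by
  unfold clen
  rw [h.cycleOf_eq]
  by_cases ha : σ a = a
  · rw [if_pos ha, if_pos ((h.apply_eq_self_iff).mp ha)]
  · rw [if_neg ha, if_neg (fun hh => ha ((h.apply_eq_self_iff).mpr hh))]

section insert_cycle

variable {c : Perm α} {x a : α}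

lemma support_swap_mul_cycle (hc : c.IsCycle) (hx : x ∉ c.support) (ha : a ∈ c.support) :
    (swap x a * c).support = insert x c.support := by
  have hxa : x ≠ a := fun h => hx (h ▸ ha)
  have hcx : c x = x := notMem_support.mp hx
  ext y
  rw [mem_support, mem_insert, mem_support, mul_apply]
  by_cases h1 : y = x
  · subst h1
    simp [hcx, swap_apply_left, hxa.symm]
  · by_cases h2 : c y = y
    · have hya : y ≠ a := fun h => (h ▸ mem_support.mp ha) (h ▸ h2)
      rw [h2, swap_apply_of_ne_of_ne h1 hya]
      simp [h1, h2]
    · have hcyx : c y ≠ x := by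
        intro h
        exact hx (h ▸ (apply_mem_support.mpr (mem_support.mpr h2)))
      by_cases h3 : c y = a
      · rw [h3, swap_apply_right]
        exact iff_of_true (Ne.symm h1) (Or.inr (h3 ▸ h2))
      · rw [swap_apply_of_ne_of_ne hcyx h3]
        simp [h1, h2]

lemma sameCycle_swap_mul_cycle_aux (hc : c.IsCycle) (hx : x ∉ c.support) (ha : a ∈ c.support)
    (i : ℕ) : (swap x a * c).SameCycle x ((c ^ i) a) := by
  have hcx : c x = x := notMem_support.mp hx
  have hgx : (swap x a * c) x = a := by rw [mul_apply, hcx, swap_apply_left]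
  induction i with
  | zero => exact ⟨1, by simpa using hgx⟩
  | succ i ih =>
    have key : (c ^ (i + 1)) a = c ((c ^ i) a) := by rw [pow_succ', mul_apply]
    by_cases h : c ((c ^ i) a) = a
    · rw [key, h]
      exact ⟨1, by simpa using hgx⟩
    · have hmem : (c ^ (i + 1)) a ∈ c.support := pow_apply_mem_support.mpr ha
      have hne_x : (c ^ (i + 1)) a ≠ x := fun hh => hx (hh ▸ hmem)
      have hstep : (swap x a * c) ((c ^ i) a) = (c ^ (i + 1)) a := by
        rw [mul_apply, ← key]
        exact swap_apply_of_ne_of_ne hne_x (fun hh => h (key ▸ hh))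
      exact ih.trans ⟨1, by simpa using hstep⟩

lemma isCycle_swap_mul_cycle (hc : c.IsCycle) (hx : x ∉ c.support) (ha : a ∈ c.support) :
    (swap x a * c).IsCycle := by
  have hxa : x ≠ a := fun h => hx (h ▸ ha)
  have hcx : c x = x := notMem_support.mp hx
  have hgx : (swap x a * c) x = a := by rw [mul_apply, hcx, swap_apply_left]
  refine ⟨x, by rw [hgx]; exact Ne.symm hxa, fun y hy => ?_⟩
  have hy' : y ∈ (swap x a * c).support := mem_support.mpr hy
  rw [support_swap_mul_cycle hc hx ha, mem_insert] at hy'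
  rcases hy' with rfl | hy'
  · exact SameCycle.refl _ _
  · obtain ⟨i, hi⟩ := hc.exists_pow_eq (mem_support.mp ha) (mem_support.mp hy')
    exact hi ▸ sameCycle_swap_mul_cycle_aux hc hx ha i

end insert_cycle

section ins

variable {τ : Perm α} {x a : α}

lemma ins_apply (hx : τ x = x) : (swap x a * τ) x = a := by
  rw [mul_apply, hx, swap_apply_left]

lemma ins_disjoint (hx : τ x = x) (hfa : τ a = a) : (swap x a).Disjoint τ := by
  rw [disjoint_iff_eq_or_eq]
  intro y
  by_cases h1 : y = x
  · right; rw [h1, hx]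
  · by_cases h2 : y = a
    · right; rw [h2, hfa]
    · left; exact swap_apply_of_ne_of_ne h1 h2

private lemma hb_amem (hfa : τ a ≠ a) : a ∈ (τ.cycleOf a).support :=
  mem_support_cycleOf_iff.mpr ⟨SameCycle.refl _ _, mem_support.mpr hfa⟩

private lemma hb_xnotmem (hx : τ x = x) : x ∉ (τ.cycleOf a).support := fun h =>
  (mem_support.mp ((support_cycleOf_le τ a) h)) hx

private lemma hb_rho_c_disj (hfa : τ a ≠ a) :
    (τ * (τ.cycleOf a)⁻¹).Disjoint (τ.cycleOf a) :=
  disjoint_mul_inv_of_mem_cycleFactorsFinset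
    (cycleOf_mem_cycleFactorsFinset_iff.mpr (mem_support.mpr hfa))

private lemma hb_tau_eq (hfa : τ a ≠ a) : τ.cycleOf a * (τ * (τ.cycleOf a)⁻¹) = τ := by
  rw [← (hb_rho_c_disj hfa).commute.eq, inv_mul_cancel_right]

private lemma hb_rho_x (hx : τ x = x) : (τ * (τ.cycleOf a)⁻¹) x = x := by
  have hcx : τ.cycleOf a x = x := notMem_support.mp (hb_xnotmem hx)
  have hinv : (τ.cycleOf a)⁻¹ x = x := by
    nth_rewrite 1 [← hcx]
    exact (τ.cycleOf a).symm_apply_apply x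
  rw [mul_apply, hinv, hx]

private lemma hb_h_disj_rho (hx : τ x = x) (hfa : τ a ≠ a) :
    (swap x a * τ.cycleOf a).Disjoint (τ * (τ.cycleOf a)⁻¹) := by
  rw [disjoint_iff_eq_or_eq]
  intro y
  by_cases hy : (τ * (τ.cycleOf a)⁻¹) y = y
  · right; exact hy
  · left
    have hcy : τ.cycleOf a y = y := by
      rcases disjoint_iff_eq_or_eq.mp (hb_rho_c_disj hfa) y with h | h
      · exact absurd h hy
      · exact h
    have hyx : y ≠ x := fun h => hy (h ▸ hb_rho_x hx)
    have hya : y ≠ a := fun h => hfa (by have h2 := h ▸ hcy; rwa [cycleOf_apply_self] at h2)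
    rw [mul_apply, hcy]
    exact swap_apply_of_ne_of_ne hyx hya

private lemma hb_pi_eq (hfa : τ a ≠ a) :
    swap x a * τ = (swap x a * τ.cycleOf a) * (τ * (τ.cycleOf a)⁻¹) := by
  rw [mul_assoc, hb_tau_eq hfa]

/-- Key count identity for inserting a fixed point `x` into the cycle of `a`. -/
lemma ins_count {k : ℕ} (hk : 2 ≤ k) (hx : τ x = x) (hax : a ≠ x) :
    (swap x a * τ).cycleType.count k + (if clen τ a = k then 1 else 0)
      = τ.cycleType.count k + (if clen τ a + 1 = k then 1 else 0) := by
  by_cases hfa : τ a = a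
  · have hd := ins_disjoint hx hfa
    have hct : (swap x a * τ).cycleType = (swap x a).cycleType + τ.cycleType := hd.cycleType_mul
    have hsw : (swap x a).cycleType = {2} := by
      rw [(isCycle_swap (Ne.symm hax)).cycleType, card_support_swap (Ne.symm hax)]
    rw [hct, hsw, clen_fixed hfa, Multiset.count_add, Multiset.count_singleton]
    split_ifs <;> omega
  · -- case B
    set c := τ.cycleOf a with hc
    set ρ := τ * c⁻¹ with hρ
    have hcyc : c.IsCycle := isCycle_cycleOf τ hfa
    have hdisj2 : c.Disjoint ρ := (hb_rho_c_disj hfa).symm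
    have hins : (swap x a * c).IsCycle :=
      isCycle_swap_mul_cycle hcyc (hb_xnotmem hx) (hb_amem hfa)
    have hsupp : (swap x a * c).support = insert x c.support :=
      support_swap_mul_cycle hcyc (hb_xnotmem hx) (hb_amem hfa)
    have hτct : τ.cycleType = {c.support.card} + ρ.cycleType := by
      rw [← hb_tau_eq hfa, hdisj2.cycleType_mul, hcyc.cycleType]
    have hπct : (swap x a * τ).cycleType = {c.support.card + 1} + ρ.cycleType := by
      rw [hb_pi_eq hfa, (hb_h_disj_rho hx hfa).cycleType_mul, hins.cycleType, hsupp,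
        card_insert_of_notMem (hb_xnotmem hx)]
    rw [hτct, hπct, clen_eq_card hfa, Multiset.count_add, Multiset.count_add,
      Multiset.count_singleton, Multiset.count_singleton, ← hc]
    split_ifs <;> omega

/-- The cycle of any point of the affected cycle (or `x`) after insertion has length
`clen τ a + 1`. -/
lemma ins_clen (hx : τ x = x) (hax : a ≠ x) {b : α} (hb : b = x ∨ τ.SameCycle a b) :
    clen (swap x a * τ) b = clen τ a + 1 := by
  by_cases hfa : τ a = a
  · have hb' : b = x ∨ b = a := by
      rcases hb with h | ⟨i, hi⟩
      · exact Or.inl h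
      · right
        rw [← hi, zpow_apply_eq_self_of_apply_eq_self hfa]
    have hd := ins_disjoint hx hfa
    have hgen : ∀ y, τ y = y → swap x a y ≠ y → clen (swap x a * τ) y = 2 := by
      intro y hτy hsy
      have hπy : (swap x a * τ) y ≠ y := by rw [mul_apply, hτy]; exact hsy
      have hco : (swap x a * τ).cycleOf y = swap x a := by
        rw [hd.cycleOf_mul_distrib, (isCycle_swap (Ne.symm hax)).cycleOf_eq hsy,
          (cycleOf_eq_one_iff τ).mpr hτy, mul_one]
      rw [clen_eq_card hπy, hco, card_support_swap (Ne.symm hax)]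
    rw [clen_fixed hfa]
    rcases hb' with h | h
    · rw [h]; exact hgen x hx (by rw [swap_apply_left]; exact hax)
    · rw [h]; exact hgen a hfa (by rw [swap_apply_right]; exact Ne.symm hax)
  · set c := τ.cycleOf a with hc
    set ρ := τ * c⁻¹ with hρ
    have hcyc : c.IsCycle := isCycle_cycleOf τ hfa
    have hins : (swap x a * c).IsCycle :=
      isCycle_swap_mul_cycle hcyc (hb_xnotmem hx) (hb_amem hfa)
    have hsupp : (swap x a * c).support = insert x c.support :=
      support_swap_mul_cycle hcyc (hb_xnotmem hx) (hb_amem hfa)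
    have hdisj : (swap x a * c).Disjoint ρ := hb_h_disj_rho hx hfa
    have hbmem : b ∈ (swap x a * c).support := by
      rw [hsupp, mem_insert]
      rcases hb with h | h
      · exact Or.inl h
      · exact Or.inr (mem_support_cycleOf_iff.mpr ⟨h, mem_support.mpr hfa⟩)
    have hρb : ρ b = b := by
      rcases disjoint_iff_eq_or_eq.mp hdisj b with h | h
      · exact absurd (mem_support.mp hbmem) (not_not.mpr h)
      · exact h
    have hπb : (swap x a * τ) b ≠ b := by
      rw [hb_pi_eq hfa, mul_apply, hρb]
      exact mem_support.mp hbmem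
    have hco : (swap x a * τ).cycleOf b = swap x a * c := by
      rw [hb_pi_eq hfa, hdisj.cycleOf_mul_distrib,
        hins.cycleOf_eq (mem_support.mp hbmem), (cycleOf_eq_one_iff ρ).mpr hρb, mul_one]
    rw [clen_eq_card hπb, hco, hsupp, card_insert_of_notMem (hb_xnotmem hx),
      clen_eq_card hfa]

end ins

section extend

variable {β : Type*} [DecidableEq β] [Fintype β] {p : β → Prop} [DecidablePred p]

lemma cycleOf_extendDomain (f : α ≃ Subtype p) (σ : Perm α) (b : α) :
    (σ.extendDomain f).cycleOf ↑(f b) = (σ.cycleOf b).extendDomain f := by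
  ext y
  by_cases hy : p y
  · obtain ⟨c, rfl⟩ : ∃ c, ↑(f c) = y := ⟨f.symm ⟨y, hy⟩, by simp⟩
    by_cases h : σ.SameCycle b c
    · rw [SameCycle.cycleOf_apply (sameCycle_extendDomain.mpr h),
        extendDomain_apply_image, extendDomain_apply_image, h.cycleOf_apply]
    · rw [cycleOf_apply_of_not_sameCycle (fun hh => h (sameCycle_extendDomain.mp hh)),
        extendDomain_apply_image, cycleOf_apply_of_not_sameCycle h]
  · rw [extendDomain_apply_not_subtype _ _ hy, cycleOf_apply]
    split
    · exact extendDomain_apply_not_subtype _ _ hy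
    · rfl

lemma clen_extendDomain (f : α ≃ Subtype p) (σ : Perm α) (b : α) :
    clen (σ.extendDomain f) ↑(f b) = clen σ b := by
  have happ : (σ.extendDomain f) ↑(f b) = ↑(f (σ b)) := extendDomain_apply_image σ f b
  by_cases hb : σ b = b
  · rw [clen_fixed hb, clen_fixed (by rw [happ, hb])]
  · have hb' : (σ.extendDomain f) ↑(f b) ≠ ↑(f b) := by
      rw [happ]
      exact fun h => hb (f.injective (Subtype.coe_injective h))
    rw [clen_eq_card hb, clen_eq_card hb', cycleOf_extendDomain]
    have hcyc : (σ.cycleOf b).IsCycle := isCycle_cycleOf σ hb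
    have h2 := cycleType_extendDomain f (g := σ.cycleOf b)
    rw [hcyc.cycleType, (hcyc.extendDomain f).cycleType] at h2
    have := congrArg Multiset.sum h2
    simpa using this

end extend

section counting

variable (k : ℕ)

/-- Number of permutations of `γ` with exactly `m` `k`-cycles. -/
def CCard (γ : Type*) [DecidableEq γ] [Fintype γ] (m : ℕ) : ℕ :=
  #(univ.filter fun σ : Perm γ => σ.cycleType.count k = m)

/-- `CCard` for the model type `Fin n`. -/
def CNum (n m : ℕ) : ℕ := CCard k (Fin n) m

lemma CCard_congr {γ : Type*} {δ : Type*} [DecidableEq γ] [Fintype γ]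
    [DecidableEq δ] [Fintype δ] (e : γ ≃ δ) (m : ℕ) :
    CCard k γ m = CCard k δ m := by
  classical
  let f : γ ≃ Subtype (fun _ : δ => True) := e.trans (Equiv.subtypeUnivEquiv (fun _ => trivial)).symm
  have hj : ∀ τ : Perm δ,
      ((f.symm.permCongr (τ.subtypePerm (fun _ => Iff.rfl : ∀ x, True ↔ True))).extendDomain f) = τ := by
    intro τ
    ext y
    rw [extendDomain_apply_subtype _ f trivial]
    simp [f]
  refine Finset.card_bij' (fun σ _ => σ.extendDomain f)
    (fun τ _ => f.symm.permCongr (τ.subtypePerm (fun _ => Iff.rfl))) ?_ ?_ ?_ ?_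
  · intro σ hσ
    simp only [mem_filter, mem_univ, true_and] at hσ ⊢
    rw [cycleType_extendDomain]
    exact hσ
  · intro τ hτ
    simp only [mem_filter, mem_univ, true_and] at hτ ⊢
    rw [← cycleType_extendDomain f, hj τ]
    exact hτ
  · intro σ _
    apply (extendDomainHom_injective f)
    show ((_ : Perm γ).extendDomain f) = σ.extendDomain f
    rw [hj (σ.extendDomain f)]
  · intro τ _
    exact hj τ

lemma CCard_eq_CNum {γ : Type*} [DecidableEq γ] [Fintype γ] (m : ℕ) :
    CCard k γ m = CNum k (Fintype.card γ) m :=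
  CCard_congr k (Fintype.equivFin γ) m

end counting

section fixcount

variable {γ : Type*} [DecidableEq γ] [Fintype γ]

lemma card_ne_z (z : γ) : Fintype.card {y : γ // y ≠ z} = Fintype.card γ - 1 := by
  have h1 : Fintype.card {y : γ // ¬ (y = z)} = Fintype.card γ - Fintype.card {y : γ // y = z} :=
    Fintype.card_subtype_compl _
  rw [Fintype.card_subtype_eq] at h1
  exact h1

lemma clen_le_card (σ : Perm γ) (y : γ) : clen σ y ≤ Fintype.card γ := by
  unfold clen
  split
  · have : 0 < Fintype.card γ := Fintype.card_pos_iff.mpr ⟨y⟩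
    omega
  · exact Finset.card_le_univ _ |>.trans (le_of_eq (card_univ))

lemma cnt_pos_of_clen {σ : Perm γ} {b : γ} {j : ℕ} (hj : 2 ≤ j) (h : clen σ b = j) :
    0 < σ.cycleType.count j := by
  have hb : σ b ≠ b := by
    intro hb; rw [clen_fixed hb] at h; omega
  rw [Multiset.count_pos, cycleType_def]
  refine Multiset.mem_map.mpr ⟨σ.cycleOf b, ?_, ?_⟩
  · exact Finset.mem_val.mpr (cycleOf_mem_cycleFactorsFinset_iff.mpr (mem_support.mpr hb))
  · show (σ.cycleOf b).support.card = j
    rw [← clen_eq_card hb]; exact h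

lemma card_fix (z : γ) (F : Perm γ → Prop) [DecidablePred F]
    (G : Perm {y : γ // y ≠ z} → Prop) [DecidablePred G]
    (hFG : ∀ ρ : Perm {y : γ // y ≠ z}, F (ρ.extendDomain (Equiv.refl _)) ↔ G ρ) :
    #(univ.filter fun τ : Perm γ => τ z = z ∧ F τ) = #(univ.filter G) := by
  have hpres : ∀ τ : Perm γ, τ z = z → ∀ y : γ, y ≠ z ↔ τ y ≠ z := by
    intro τ hτ y
    constructor
    · intro h hh; exact h (τ.injective (hh.trans hτ.symm))
    · intro h hh; exact h (by rw [hh, hτ])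
  have hext : ∀ (τ : Perm γ) (hτ : τ z = z),
      ((τ.subtypePerm (p := fun w => w ≠ z) (fun y => (hpres τ hτ y).symm)).extendDomain (Equiv.refl _)) = τ := by
    intro τ hτ
    ext y
    by_cases hy : y ≠ z
    · rw [extendDomain_apply_subtype (p := fun w : γ => w ≠ z) _ _ hy]
      simp [subtypePerm_apply]
    · rw [not_not.mp hy, extendDomain_apply_not_subtype _ _ (by simp), hτ]
  have hres : ∀ ρ : Perm {y : γ // y ≠ z},
      ∀ hpr, (ρ.extendDomain (Equiv.refl _)).subtypePerm hpr = ρ := by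
    intro ρ hpr
    ext y
    have : (ρ.extendDomain (Equiv.refl _)) ↑y = ↑(ρ y) :=
      extendDomain_apply_image ρ (Equiv.refl _) y
    simp [subtypePerm_apply, this]
  have hzfix : ∀ ρ : Perm {y : γ // y ≠ z}, (ρ.extendDomain (Equiv.refl _)) z = z :=
    fun ρ => extendDomain_apply_not_subtype ρ (Equiv.refl _) (by simp)
  refine Finset.card_bij'
    (fun τ hτ => τ.subtypePerm (p := fun w => w ≠ z) (fun y => (hpres τ (mem_filter.mp hτ).2.1 y).symm))
    (fun ρ _ => ρ.extendDomain (Equiv.refl _)) ?_ ?_ ?_ ?_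
  · intro τ hτ
    obtain ⟨-, hτz, hF⟩ := mem_filter.mp hτ
    simp only [mem_filter, mem_univ, true_and]
    rw [← hFG, hext τ hτz]
    exact hF
  · intro ρ hρ
    simp only [mem_filter, mem_univ, true_and] at hρ ⊢
    exact ⟨hzfix ρ, (hFG ρ).mpr hρ⟩
  · intro τ hτ
    exact hext τ (mem_filter.mp hτ).2.1
  · intro ρ _
    exact hres ρ _

lemma card_move_eq (k m : ℕ) (x a : γ) :
    #(univ.filter fun σ : Perm γ => σ x = a ∧ σ.cycleType.count k = m)
      = #(univ.filter fun τ : Perm γ => τ x = x ∧ (swap x a * τ).cycleType.count k = m) := by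
  have hcan : ∀ σ : Perm γ, swap x a * (swap x a * σ) = σ := by
    intro σ; rw [← mul_assoc, swap_mul_self, one_mul]
  refine Finset.card_bij' (fun σ _ => swap x a * σ) (fun τ _ => swap x a * τ) ?_ ?_ ?_ ?_
  · intro σ hσ
    obtain ⟨-, hσx, hcnt⟩ := mem_filter.mp hσ
    simp only [mem_filter, mem_univ, true_and]
    constructor
    · rw [mul_apply, hσx, swap_apply_right]
    · rw [hcan]; exact hcnt
  · intro τ hτ
    obtain ⟨-, hτx, hcnt⟩ := mem_filter.mp hτ
    simp only [mem_filter, mem_univ, true_and]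
    constructor
    · rw [mul_apply, hτx, swap_apply_left]
    · exact hcnt
  · intro σ _; exact hcan σ
  · intro τ _; exact hcan τ

end fixcount

section tcard

variable (k : ℕ)

/-- Number of permutations of `γ` whose cycle at `b` has length `j`, with `m'` additional
`k`-cycles (not counting the cycle of `b` when `j = k`). -/
def TCard (γ : Type*) [DecidableEq γ] [Fintype γ] (b : γ) (j m' : ℕ) : ℕ :=
  #(univ.filter fun ρ : Perm γ =>
    clen ρ b = j ∧ ρ.cycleType.count k = m' + (if j = k then 1 else 0))

lemma TCard_one (hk : 2 ≤ k) {γ : Type*} [DecidableEq γ] [Fintype γ] (b : γ) (m' : ℕ) :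
    TCard k γ b 1 m' = CNum k (Fintype.card γ - 1) m' := by
  unfold TCard
  have h1 : (if 1 = k then 1 else 0) = 0 := by split <;> omega
  have h2 : (univ.filter fun ρ : Perm γ =>
      clen ρ b = 1 ∧ ρ.cycleType.count k = m' + (if 1 = k then 1 else 0))
      = univ.filter fun ρ : Perm γ => ρ b = b ∧ ρ.cycleType.count k = m' := by
    apply filter_congr
    intro ρ _
    rw [h1, add_zero, clen_eq_one_iff]
  rw [h2, card_fix b (fun τ => τ.cycleType.count k = m')
    (fun ρ : Perm {y : γ // y ≠ b} => ρ.cycleType.count k = m')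
    (fun ρ => by simp only [cycleType_extendDomain]),
    show #(univ.filter fun ρ : Perm {y : γ // y ≠ b} => ρ.cycleType.count k = m')
      = CCard k {y : γ // y ≠ b} m' from rfl,
    CCard_eq_CNum, card_ne_z]

lemma TCard_succ (hk : 2 ≤ k) {γ : Type*} [DecidableEq γ] [Fintype γ] (b : γ) (j m' : ℕ)
    (hj : 1 ≤ j) :
    TCard k γ b (j+1) m'
      = ∑ z ∈ (univ.erase b).attach,
          TCard k {y : γ // y ≠ ↑z} ⟨b, Ne.symm (mem_erase.mp z.2).1⟩ j m' := by
  -- Step 1: fiber by the value `ρ b`.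
  have hfib : TCard k γ b (j+1) m'
      = ∑ z ∈ univ.erase b, #((univ.filter fun ρ : Perm γ =>
          clen ρ b = j + 1 ∧ ρ.cycleType.count k = m' + (if j + 1 = k then 1 else 0)).filter
            (fun ρ => ρ b = z)) := by
    apply Finset.card_eq_sum_card_fiberwise
    intro ρ hρ
    obtain ⟨-, h1, -⟩ := mem_filter.mp hρ
    have : ρ b ≠ b := by
      intro hb
      rw [clen_fixed hb] at h1
      omega
    exact mem_erase.mpr ⟨this, mem_univ _⟩
  rw [hfib, ← Finset.sum_attach (univ.erase b)]
  apply Finset.sum_congr rfl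
  intro z _
  have hzb : (z : γ) ≠ b := (mem_erase.mp z.2).1
  -- Step 2: per-fiber bijection with permutations fixing `z`.
  have hstep : ((univ.filter fun ρ : Perm γ =>
          clen ρ b = j + 1 ∧ ρ.cycleType.count k = m' + (if j + 1 = k then 1 else 0)).filter
            (fun ρ => ρ b = (z : γ))).card
      = #(univ.filter fun τ : Perm γ => τ z = z ∧
          (clen τ b = j ∧ τ.cycleType.count k = m' + (if j = k then 1 else 0))) := by
    rw [filter_filter]
    refine Finset.card_bij' (fun ρ _ => swap (z : γ) (ρ z) * ρ)
      (fun τ _ => swap (z : γ) (τ b) * τ) ?_ ?_ ?_ ?_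
    · intro ρ hρ
      obtain ⟨-, ⟨h1, h2⟩, h3⟩ := mem_filter.mp hρ
      have hρz : ρ (z : γ) ≠ (z : γ) := fun h => hzb ((ρ.injective (h3.trans h.symm)).symm)
      set τ := swap (z : γ) (ρ z) * ρ with hτ
      have hτz : τ z = z := by rw [hτ, mul_apply, swap_apply_right]
      have hback : swap (z : γ) (ρ z) * τ = ρ := by
        rw [hτ, ← mul_assoc, swap_mul_self, one_mul]
      have hτb : τ b = ρ z := by rw [hτ, mul_apply, h3, swap_apply_left]
      have hsc : τ.SameCycle (ρ z) b := ⟨-1, by rw [← hτb]; simp⟩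
      have hclen := ins_clen hτz hρz (Or.inr hsc)
      rw [hback] at hclen
      have hclen2 : clen τ (ρ z) = clen τ b := by
        rw [← hτb, clen_apply_self]
      have hcnt := ins_count hk hτz hρz
      rw [hback] at hcnt
      have hτbj : clen τ b = j := by omega
      rw [hclen2, hτbj] at hcnt
      simp only [mem_filter, mem_univ, true_and]
      refine ⟨hτz, hτbj, ?_⟩
      split_ifs at hcnt h2 ⊢ <;> omega
    · intro τ hτ
      obtain ⟨-, hτz, h1, h2⟩ := mem_filter.mp hτ
      have hab : τ b ≠ (z : γ) := fun h => hzb ((τ.injective (h.trans hτz.symm)).symm)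
      have hsc : τ.SameCycle (τ b) b := ⟨-1, by simp⟩
      have hclen := ins_clen hτz hab (Or.inr hsc)
      have hclen2 : clen τ (τ b) = clen τ b := clen_apply_self τ b
      have hcnt := ins_count hk hτz hab
      rw [hclen2, h1] at hclen hcnt
      simp only [mem_filter, mem_univ, true_and]
      refine ⟨⟨hclen, ?_⟩, by rw [mul_apply, swap_apply_right]⟩
      split_ifs at hcnt h2 ⊢ <;> omega
    · intro ρ hρ
      obtain ⟨-, -, h3⟩ := mem_filter.mp hρ
      have hτb : (swap (z : γ) (ρ z) * ρ) b = ρ z := by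
        rw [mul_apply, h3, swap_apply_left]
      show swap (z : γ) ((swap (z : γ) (ρ z) * ρ) b) * (swap (z : γ) (ρ z) * ρ) = ρ
      rw [hτb, ← mul_assoc, swap_mul_self, one_mul]
    · intro τ hτ
      obtain ⟨-, hτz, -⟩ := mem_filter.mp hτ
      have hρz : (swap (z : γ) (τ b) * τ) z = τ b := by
        rw [mul_apply, hτz, swap_apply_left]
      show swap (z : γ) ((swap (z : γ) (τ b) * τ) z) * (swap (z : γ) (τ b) * τ) = τ
      rw [hρz, ← mul_assoc, swap_mul_self, one_mul]
  rw [hstep]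
  -- Step 3: restrict to the subtype.
  rw [card_fix (z : γ)
    (fun τ => clen τ b = j ∧ τ.cycleType.count k = m' + (if j = k then 1 else 0))
    (fun ρ : Perm {y : γ // y ≠ (z : γ)} =>
      clen ρ ⟨b, hzb.symm⟩ = j ∧ ρ.cycleType.count k = m' + (if j = k then 1 else 0))
    ?_]
  · rfl
  · intro ρ
    have hc : clen (ρ.extendDomain (Equiv.refl {y : γ // y ≠ (z : γ)})) b
        = clen ρ ⟨b, hzb.symm⟩ :=
      clen_extendDomain (Equiv.refl {y : γ // y ≠ (z : γ)}) ρ ⟨b, hzb.symm⟩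
    have hct := cycleType_extendDomain (Equiv.refl {y : γ // y ≠ (z : γ)}) (g := ρ)
    constructor
    · rintro ⟨hA, hB⟩
      exact ⟨by rw [← hc]; exact hA, by rw [← hct]; exact hB⟩
    · rintro ⟨hA, hB⟩
      exact ⟨by rw [hc]; exact hA, by rw [hct]; exact hB⟩

end tcard

section tclosed

variable (k : ℕ)

lemma TCard_closed (hk : 2 ≤ k) : ∀ (j : ℕ), 1 ≤ j →
    ∀ (γ : Type*) [DecidableEq γ] [Fintype γ], ∀ (b : γ) (m' : ℕ),
    TCard k γ b j m'
      = (∏ i ∈ range (j-1), (Fintype.card γ - 1 - i)) * CNum k (Fintype.card γ - j) m' := by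
  intro j
  induction j with
  | zero => omega
  | succ jj ih =>
    intro _ γ _ _ b m'
    rcases Nat.eq_zero_or_pos jj with rfl | hpos
    · simpa using TCard_one k hk b m'
    · rw [TCard_succ k hk b jj m' hpos]
      have hterm : ∀ z ∈ (univ.erase b).attach,
          TCard k {y : γ // y ≠ (z : γ)} ⟨b, Ne.symm (mem_erase.mp z.2).1⟩ jj m'
            = (∏ i ∈ range (jj-1), (Fintype.card γ - 2 - i))
                * CNum k (Fintype.card γ - 1 - jj) m' := by
        intro z _
        rw [ih hpos {y : γ // y ≠ (z : γ)} ⟨b, Ne.symm (mem_erase.mp z.2).1⟩ m', card_ne_z]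
        congr 1
      rw [Finset.sum_congr rfl hterm, Finset.sum_const, Finset.card_attach,
        card_erase_of_mem (mem_univ b), card_univ, smul_eq_mul]
      obtain ⟨jj', rfl⟩ : ∃ jj', jj = jj' + 1 := ⟨jj - 1, by omega⟩
      have hprod : (∏ i ∈ range (jj' + 1), (Fintype.card γ - 1 - i))
          = (Fintype.card γ - 1) * ∏ i ∈ range jj', (Fintype.card γ - 2 - i) := by
        rw [prod_range_succ']
        have : ∀ i ∈ range jj', Fintype.card γ - 1 - (i + 1) = Fintype.card γ - 2 - i := by
          intro i _; omega
        rw [Finset.prod_congr rfl this, Nat.sub_zero, mul_comm]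
      have harg : Fintype.card γ - 1 - (jj' + 1) = Fintype.card γ - (jj' + 1 + 1) := by omega
      simp only [Nat.add_sub_cancel]
      rw [harg, hprod, mul_assoc]

end tclosed

section keycount

variable {γ : Type*} [DecidableEq γ] [Fintype γ]

lemma key_count (k : ℕ) (hk : 2 ≤ k) (b : γ) (m : ℕ)
    (hcard : ¬ k ∣ (Fintype.card γ + 1))
    (hrec : k ≤ Fintype.card γ → ∀ m',
      CNum k (Fintype.card γ + 1 - k) m'
        = (Fintype.card γ + 1 - k) * CNum k (Fintype.card γ - k) m') :
    #(univ.filter fun ρ : Perm γ => ρ.cycleType.count k + (if clen ρ b + 1 = k then 1 else 0)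
        = m + (if clen ρ b = k then 1 else 0))
      = #(univ.filter fun ρ : Perm γ => ρ.cycleType.count k = m) := by
  set N := Fintype.card γ with hN
  have hclen_le : ∀ ρ : Perm γ, clen ρ b ≤ N := fun ρ => clen_le_card ρ b
  by_cases hsmall : N + 1 < k
  · apply Finset.card_bij' (fun ρ _ => ρ) (fun ρ _ => ρ) ?_ ?_ (fun _ _ => rfl) (fun _ _ => rfl)
    · intro ρ hρ
      simp only [mem_filter, mem_univ, true_and] at hρ ⊢
      have := hclen_le ρ
      split_ifs at hρ <;> omega
    · intro ρ hρ
      simp only [mem_filter, mem_univ, true_and] at hρ ⊢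
      have := hclen_le ρ
      split_ifs <;> omega
  · have hkN : k ≤ N := by
      rcases Nat.lt_or_ge (N+1) k with h | h
      · exact absurd h hsmall
      · have : N + 1 ≠ k := fun hh => hcard (hh ▸ dvd_refl k)
        omega
    -- fiberwise partition by clen
    have hpart : ∀ (P : Perm γ → Prop) [DecidablePred P],
        #(univ.filter P) = ∑ j ∈ range (N+1), #(univ.filter fun ρ => P ρ ∧ clen ρ b = j) := by
      intro P _
      rw [Finset.card_eq_sum_card_fiberwise
        (f := fun ρ : Perm γ => clen ρ b) (t := range (N+1))
        (fun ρ _ => mem_range.mpr (Nat.lt_succ_of_le (hclen_le ρ)))]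
      apply Finset.sum_congr rfl
      intro j _
      rw [filter_filter]
    rw [hpart, hpart]
    -- an abstract two-index swap for sums
    have hswap : ∀ (f g : ℕ → ℕ), (∀ j ∈ range (N+1), j ≠ k - 1 → j ≠ k → f j = g j) →
        (f (k-1) + f k = g (k-1) + g k) →
        ∑ j ∈ range (N+1), f j = ∑ j ∈ range (N+1), g j := by
      intro f g hoff hcross
      have hkmem : k ∈ range (N+1) := mem_range.mpr (by omega)
      have hk1mem : k - 1 ∈ (range (N+1)).erase k := by
        rw [mem_erase]
        exact ⟨by omega, mem_range.mpr (by omega)⟩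
      rw [← Finset.sum_erase_add _ f hkmem, ← Finset.sum_erase_add _ f hk1mem,
        ← Finset.sum_erase_add _ g hkmem, ← Finset.sum_erase_add _ g hk1mem]
      have hmain : ∑ j ∈ ((range (N+1)).erase k).erase (k-1), f j
          = ∑ j ∈ ((range (N+1)).erase k).erase (k-1), g j := by
        apply Finset.sum_congr rfl
        intro j hj
        exact hoff j (mem_of_mem_erase (mem_of_mem_erase hj)) (mem_erase.mp hj).1
          (mem_erase.mp (mem_of_mem_erase hj)).1
      omega
    apply hswap
    · intro j _ hj1 hj2
      apply Finset.card_bij' (fun ρ _ => ρ) (fun ρ _ => ρ) ?_ ?_ (fun _ _ => rfl) (fun _ _ => rfl)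
      · intro ρ hρ
        simp only [mem_filter, mem_univ, true_and] at hρ ⊢
        obtain ⟨h1, h2⟩ := hρ
        refine ⟨?_, h2⟩
        split_ifs at h1 <;> omega
      · intro ρ hρ
        simp only [mem_filter, mem_univ, true_and] at hρ ⊢
        obtain ⟨h1, h2⟩ := hρ
        refine ⟨?_, h2⟩
        split_ifs <;> omega
    · -- cross identity at k-1 and k
      have hTT : ∀ m'', TCard k γ b (k-1) m'' = TCard k γ b k m'' := by
        intro m''
        rw [TCard_closed k hk (k-1) (by omega) γ b m'', TCard_closed k hk k (by omega) γ b m'']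
        have h1 : N - (k-1) = N + 1 - k := by omega
        rw [← hN, h1, hrec hkN m'']
        obtain ⟨k2, rfl⟩ : ∃ k2, k = k2 + 2 := ⟨k - 2, by omega⟩
        have h2 : k2 + 2 - 1 = k2 + 1 := by omega
        rw [h2]
        have h3 : k2 + 1 - 1 = k2 := by omega
        rw [h3, prod_range_succ]
        have h4 : N - 1 - k2 = N + 1 - (k2 + 2) := by omega
        rw [h4]
        ring
      have hu1 : #(univ.filter fun ρ : Perm γ =>
            (ρ.cycleType.count k + (if clen ρ b + 1 = k then 1 else 0)
              = m + (if clen ρ b = k then 1 else 0)) ∧ clen ρ b = k - 1)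
          = (if m = 0 then 0 else TCard k γ b (k-1) (m-1)) := by
        split_ifs with hm
        · subst hm
          rw [Finset.card_eq_zero, Finset.filter_eq_empty_iff]
          rintro ρ -
          rintro ⟨h1, h2⟩
          rw [h2] at h1
          split_ifs at h1 <;> omega
        · unfold TCard
          apply Finset.card_bij' (fun ρ _ => ρ) (fun ρ _ => ρ) ?_ ?_
            (fun _ _ => rfl) (fun _ _ => rfl)
          · intro ρ hρ
            simp only [mem_filter, mem_univ, true_and] at hρ ⊢
            obtain ⟨h1, h2⟩ := hρ
            rw [h2] at h1
            refine ⟨h2, ?_⟩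
            split_ifs at h1 ⊢ <;> omega
          · intro ρ hρ
            simp only [mem_filter, mem_univ, true_and] at hρ ⊢
            obtain ⟨h1, h2⟩ := hρ
            refine ⟨?_, h1⟩
            rw [h1]
            split_ifs at h2 ⊢ <;> omega
      have hu2 : #(univ.filter fun ρ : Perm γ =>
            (ρ.cycleType.count k + (if clen ρ b + 1 = k then 1 else 0)
              = m + (if clen ρ b = k then 1 else 0)) ∧ clen ρ b = k)
          = TCard k γ b k m := by
        unfold TCard
        apply Finset.card_bij' (fun ρ _ => ρ) (fun ρ _ => ρ) ?_ ?_
          (fun _ _ => rfl) (fun _ _ => rfl)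
        · intro ρ hρ
          simp only [mem_filter, mem_univ, true_and] at hρ ⊢
          obtain ⟨h1, h2⟩ := hρ
          rw [h2] at h1
          refine ⟨h2, ?_⟩
          split_ifs at h1 ⊢ <;> omega
        · intro ρ hρ
          simp only [mem_filter, mem_univ, true_and] at hρ ⊢
          obtain ⟨h1, h2⟩ := hρ
          refine ⟨?_, h1⟩
          rw [h1]
          split_ifs at h2 ⊢ <;> omega
      have hv1 : #(univ.filter fun ρ : Perm γ =>
            ρ.cycleType.count k = m ∧ clen ρ b = k - 1)
          = TCard k γ b (k-1) m := by
        unfold TCard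
        apply Finset.card_bij' (fun ρ _ => ρ) (fun ρ _ => ρ) ?_ ?_
          (fun _ _ => rfl) (fun _ _ => rfl)
        · intro ρ hρ
          simp only [mem_filter, mem_univ, true_and] at hρ ⊢
          obtain ⟨h1, h2⟩ := hρ
          refine ⟨h2, ?_⟩
          split_ifs <;> omega
        · intro ρ hρ
          simp only [mem_filter, mem_univ, true_and] at hρ ⊢
          obtain ⟨h1, h2⟩ := hρ
          refine ⟨?_, h1⟩
          split_ifs at h2 <;> omega
      have hv2 : #(univ.filter fun ρ : Perm γ =>
            ρ.cycleType.count k = m ∧ clen ρ b = k)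
          = (if m = 0 then 0 else TCard k γ b k (m-1)) := by
        split_ifs with hm
        · subst hm
          rw [Finset.card_eq_zero, Finset.filter_eq_empty_iff]
          rintro ρ -
          rintro ⟨h1, h2⟩
          have := cnt_pos_of_clen hk h2
          omega
        · unfold TCard
          apply Finset.card_bij' (fun ρ _ => ρ) (fun ρ _ => ρ) ?_ ?_
            (fun _ _ => rfl) (fun _ _ => rfl)
          · intro ρ hρ
            simp only [mem_filter, mem_univ, true_and] at hρ ⊢
            obtain ⟨h1, h2⟩ := hρ
            refine ⟨h2, ?_⟩
            split_ifs <;> omega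
          · intro ρ hρ
            simp only [mem_filter, mem_univ, true_and] at hρ ⊢
            obtain ⟨h1, h2⟩ := hρ
            refine ⟨?_, h1⟩
            split_ifs at h2 <;> omega
      rw [hu1, hu2, hv1, hv2]
      simp only [hTT]
      split_ifs <;> omega

end keycount

section mainsec

variable (k : ℕ)

lemma fix_case (hk : 2 ≤ k) {n : ℕ} (m : ℕ) (x : Fin n) :
    #(univ.filter fun σ : Perm (Fin n) => σ x = x ∧ σ.cycleType.count k = m)
      = CNum k (n-1) m := by
  rw [card_fix x (fun τ => τ.cycleType.count k = m)
    (fun ρ : Perm {y : Fin n // y ≠ x} => ρ.cycleType.count k = m)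
    (fun ρ => by simp only [cycleType_extendDomain]),
    show #(univ.filter fun ρ : Perm {y : Fin n // y ≠ x} => ρ.cycleType.count k = m)
      = CCard k {y : Fin n // y ≠ x} m from rfl, CCard_eq_CNum, card_ne_z, Fintype.card_fin]

lemma CNum_step (n' : ℕ) (hn' : 1 ≤ n')
    (hmain : ∀ (m : ℕ) (x a : Fin n'),
      #(univ.filter fun σ : Perm (Fin n') => σ x = a ∧ σ.cycleType.count k = m)
        = CNum k (n'-1) m) (m : ℕ) :
    CNum k n' m = n' * CNum k (n'-1) m := by
  have h1 : CNum k n' m = ∑ a ∈ (univ : Finset (Fin n')),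
      #(univ.filter fun σ : Perm (Fin n') => σ ⟨0, hn'⟩ = a ∧ σ.cycleType.count k = m) := by
    show CCard k (Fin n') m = _
    unfold CCard
    rw [Finset.card_eq_sum_card_fiberwise
      (f := fun σ : Perm (Fin n') => σ ⟨0, hn'⟩) (t := univ) (fun σ _ => mem_univ _)]
    apply Finset.sum_congr rfl
    intro a _
    rw [filter_filter]
    apply congrArg Finset.card
    apply filter_congr
    intro σ _
    exact ⟨fun ⟨u, v⟩ => ⟨v, u⟩, fun ⟨u, v⟩ => ⟨v, u⟩⟩
  rw [h1, Finset.sum_congr rfl (fun a _ => hmain m ⟨0, hn'⟩ a), Finset.sum_const,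
    card_univ, Fintype.card_fin, smul_eq_mul]

lemma main_lemma (hk : 2 ≤ k) : ∀ n : ℕ, ¬ k ∣ n → ∀ (m : ℕ) (x a : Fin n),
    #(univ.filter fun σ : Perm (Fin n) => σ x = a ∧ σ.cycleType.count k = m)
      = CNum k (n-1) m := by
  intro n
  induction n using Nat.strong_induction_on with
  | _ n IH =>
    intro hkn m x a
    have hn : 1 ≤ n := x.pos
    by_cases hax : a = x
    · rw [hax]
      exact fix_case k hk m x
    · rw [card_move_eq, card_fix x (fun τ => ((swap x a) * τ).cycleType.count k = m)
        (fun ρ : Perm {y : Fin n // y ≠ x} =>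
          ρ.cycleType.count k + (if clen ρ ⟨a, hax⟩ + 1 = k then 1 else 0)
            = m + (if clen ρ ⟨a, hax⟩ = k then 1 else 0)) ?_]
      · rw [key_count k hk (⟨a, hax⟩ : {y : Fin n // y ≠ x}) m ?_ ?_]
        · rw [show #(univ.filter fun ρ : Perm {y : Fin n // y ≠ x} =>
              ρ.cycleType.count k = m) = CCard k {y : Fin n // y ≠ x} m from rfl,
            CCard_eq_CNum, card_ne_z, Fintype.card_fin]
        · rw [card_ne_z, Fintype.card_fin, Nat.sub_add_cancel hn]
          exact hkn
        · intro hkle m'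
          rw [card_ne_z, Fintype.card_fin] at hkle ⊢
          rw [Nat.sub_add_cancel hn]
          have hk_lt : k < n := by omega
          have hlt : n - k < n := by omega
          have hdvd : ¬ k ∣ (n - k) := by
            rintro ⟨c, hc⟩
            exact hkn ⟨c + 1, by rw [Nat.mul_succ]; omega⟩
          have hstep := CNum_step k (n - k) (by omega) (IH (n - k) hlt hdvd) m'
          rw [hstep]
          congr 2
          omega
      · intro ρ
        have hτx : (ρ.extendDomain (Equiv.refl {y : Fin n // y ≠ x})) x = x :=
          extendDomain_apply_not_subtype ρ (Equiv.refl _) (by simp)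
        have hcnt := ins_count hk hτx hax
        have hc : clen (ρ.extendDomain (Equiv.refl {y : Fin n // y ≠ x})) a
            = clen ρ ⟨a, hax⟩ :=
          clen_extendDomain (Equiv.refl {y : Fin n // y ≠ x}) ρ ⟨a, hax⟩
        have hct := cycleType_extendDomain (Equiv.refl {y : Fin n // y ≠ x}) (g := ρ)
        rw [hc, hct] at hcnt
        constructor
        · intro h
          rw [h] at hcnt -- hcnt: m + [clen = k] = cnt ρ + [clen+1=k]
          omega
        · intro h
          omega
  
end mainsec

theorem stmt7_core (k n m : ℕ) (hk : 1 < k) (hn : 1 ≤ n)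
    (hpos : 0 < Nat.card {π : Equiv.Perm (Fin n) // π.cycleType.count k = m})
    (hkn : ¬ k ∣ n) :
    (∑ π : Equiv.Perm (Fin n),
        if π.cycleType.count k = m then ((π ⟨0, hn⟩ : Fin n) : ℚ) + 1 else 0)
        / (Nat.card {π : Equiv.Perm (Fin n) // π.cycleType.count k = m})
      = ((n : ℚ) + 1) / 2 := by
  classical
  set x₀ : Fin n := ⟨0, hn⟩
  have hk2 : 2 ≤ k := hk
  set F := CNum k (n-1) m with hF
  -- the cardinality
  have hC : Nat.card {π : Equiv.Perm (Fin n) // π.cycleType.count k = m}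
      = #(univ.filter fun π : Perm (Fin n) => π.cycleType.count k = m) := by
    rw [Nat.card_eq_fintype_card, Fintype.card_subtype]
  have hfiber : ∀ a : Fin n,
      #((univ.filter fun π : Perm (Fin n) => π.cycleType.count k = m).filter
          (fun π => π x₀ = a)) = F := by
    intro a
    rw [filter_filter, hF, ← main_lemma k hk2 n hkn m x₀ a]
    apply congrArg Finset.card
    apply filter_congr
    intro σ _
    exact ⟨fun ⟨u, v⟩ => ⟨v, u⟩, fun ⟨u, v⟩ => ⟨v, u⟩⟩
  have hcard : Nat.card {π : Equiv.Perm (Fin n) // π.cycleType.count k = m} = n * F := by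
    rw [hC, Finset.card_eq_sum_card_fiberwise
      (f := fun π : Perm (Fin n) => π x₀) (t := univ) (fun σ _ => mem_univ _),
      Finset.sum_congr rfl (fun a _ => hfiber a), Finset.sum_const, card_univ,
      Fintype.card_fin, smul_eq_mul]
  -- the sum
  have hsum : (∑ π : Equiv.Perm (Fin n),
      if π.cycleType.count k = m then ((π x₀ : Fin n) : ℚ) + 1 else 0)
      = (F : ℚ) * ∑ a : Fin n, ((a : ℚ) + 1) := by
    rw [← Finset.sum_filter]
    rw [← Finset.sum_fiberwise_of_maps_to
      (g := fun π : Perm (Fin n) => π x₀) (t := univ) (fun σ _ => mem_univ _)]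
    rw [Finset.mul_sum]
    apply Finset.sum_congr rfl
    intro a _
    have hconst : ∀ π ∈ (univ.filter fun π : Perm (Fin n) =>
        π.cycleType.count k = m).filter (fun π => π x₀ = a),
        ((π x₀ : Fin n) : ℚ) + 1 = ((a : ℚ) + 1) := by
      intro π hπ
      rw [(mem_filter.mp hπ).2]
    rw [Finset.sum_congr rfl hconst, Finset.sum_const, hfiber a, nsmul_eq_mul]
  -- Gauss sum
  have hgauss : (∑ a : Fin n, ((a : ℚ) + 1)) * 2 = (n : ℚ) * ((n : ℚ) + 1) := by
    have h1 : (∑ a : Fin n, ((a : ℚ) + 1)) = ∑ i ∈ range n, ((i : ℚ) + 1) :=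
      Fin.sum_univ_eq_sum_range (fun i => ((i : ℚ) + 1)) n
    have h2 : (∑ i ∈ range n, (i : ℕ)) * 2 = n * (n - 1) := Finset.sum_range_id_mul_two n
    have h3 : (∑ i ∈ range n, (i : ℚ)) * 2 = (n : ℚ) * ((n : ℚ) - 1) := by
      have hcast := congrArg (fun t : ℕ => (t : ℚ)) h2
      push_cast [Nat.cast_sub hn] at hcast
      exact hcast
    rw [h1, Finset.sum_add_distrib, Finset.sum_const, card_range, nsmul_eq_mul, mul_one]
    push_cast at h3 ⊢
    ring_nf
    ring_nf at h3
    linarith [h3]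
  -- conclude
  have hFpos : 0 < F := by
    rw [hcard] at hpos
    rcases Nat.eq_zero_or_pos F with h | h
    · rw [h, mul_zero] at hpos
      omega
    · exact h
  have hnF : ((n : ℚ) * (F : ℚ)) ≠ 0 := by
    have h1 : (0:ℚ) < n := by exact_mod_cast hn
    have h2 : (0:ℚ) < F := by exact_mod_cast hFpos
    positivity
  rw [hsum, hcard, Nat.cast_mul, div_eq_div_iff hnF two_ne_zero]
  linear_combination (F : ℚ) * hgauss

end Stmt7Aux

open Stmt7Aux in
theorem stmt7 (k n m : ℕ) (hk : 1 < k) (hn : 1 ≤ n) (hpos : 0 < C k n m)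
    (hkn : ¬ k ∣ n) :
    (∑ π : Equiv.Perm (Fin n),
        if π.cycleType.count k = m then ((π ⟨0, hn⟩ : Fin n) : ℚ) + 1 else 0)
        / C k n m
      = ((n : ℚ) + 1) / 2 := by
  unfold C at hpos ⊢
  exact stmt7_core k n m hk hn hpos hkn
end

section
/- For every integer k ≥ 2, the formal power series identity Σ_{n=0}^∞ (C_k(kn,0)·k^n/(kn)!)·x^n = exp(-x)/(1 - kx) holds in ℚ[[x]]; that is, for every n ≥ 0, C_k(kn,0)·k^n/(kn)! = Σ_{i=0}^{n} (-1)^i·k^{n-i}/i!. -/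
open Equiv Equiv.Perm Finset

set_option linter.unusedSectionVars false
set_option linter.unusedVariables false
set_option maxHeartbeats 1000000

namespace Stmt9Aux

variable {α β : Type*} [Fintype α] [DecidableEq α] [Fintype β] [DecidableEq β]

/-- The number of permutations of `α` with exactly `m` cycles of length `k`. -/
noncomputable def cnt (k m : ℕ) (α : Type*) [Fintype α] [DecidableEq α] : ℕ :=
  Nat.card {π : Equiv.Perm α // π.cycleType.count k = m}

/-- The number of `k`-cycles in `Perm α`. -/
noncomputable def Kc (k : ℕ) (α : Type*) [Fintype α] [DecidableEq α] : ℕ :=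
  Nat.card {c : Equiv.Perm α // c.IsCycle ∧ c.support.card = k}

lemma permCongr_cycleType (e : α ≃ β) (π : Perm α) :
    (e.permCongr π).cycleType = π.cycleType := by
  classical
  let f : α ≃ {b : β // (fun _ => True) b} :=
    e.trans (Equiv.subtypeUnivEquiv fun _ => trivial).symm
  have h : e.permCongr π = π.extendDomain f := by
    ext b
    rw [Equiv.Perm.extendDomain_apply_subtype _ _ trivial]
    simp [f, Equiv.permCongr_apply, Equiv.subtypeUnivEquiv]
  rw [h, Equiv.Perm.cycleType_extendDomain]

lemma cnt_congr (k m : ℕ) (e : α ≃ β) : cnt k m α = cnt k m β := by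
  apply Nat.card_congr
  exact Equiv.subtypeEquiv (e.permCongr) (fun π => by rw [permCongr_cycleType])

lemma nat_card_subtype (p : α → Prop) [DecidablePred p] :
    Nat.card {x // p x} = (univ.filter p).card := by
  rw [Nat.card_eq_fintype_card, Fintype.card_subtype]

lemma count_cycleType_eq (k : ℕ) (π : Perm α) :
    π.cycleType.count k = (π.cycleFactorsFinset.filter (fun c => c.support.card = k)).card := by
  classical
  rw [cycleType_def, Multiset.count_map, Finset.card, Finset.filter_val]
  congr 1
  apply Multiset.filter_congr
  intro c _
  simp [eq_comm, Function.comp]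

lemma count_le_of_card {k n : ℕ} (hk : 1 ≤ k) (π : Perm α) (hcard : Fintype.card α ≤ k * n) :
    π.cycleType.count k ≤ n := by
  have h1 : π.cycleType.count k * k ≤ π.cycleType.sum := by
    calc π.cycleType.count k * k = (Multiset.replicate (π.cycleType.count k) k).sum := by
          simp [Multiset.sum_replicate, mul_comm]
      _ = (π.cycleType.filter (· = k)).sum := by rw [Multiset.filter_eq']
      _ ≤ π.cycleType.sum := by
          conv_rhs => rw [← Multiset.sum_filter_add_sum_filter_not (p := (· = k))
            (s := π.cycleType)]
          exact Nat.le_add_right _ _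
  have h2 : π.cycleType.sum ≤ Fintype.card α := by
    rw [sum_cycleType]
    exact (card_le_univ _).trans_eq (by simp)
  have h3 : π.cycleType.count k * k ≤ n * k := by
    rw [mul_comm n k]; exact h1.trans (h2.trans hcard)
  exact Nat.le_of_mul_le_mul_right h3 (by omega)

lemma sum_cnt {k : ℕ} (hk : 1 ≤ k) (n : ℕ) :
    ∑ m ∈ range (n + 1), cnt k m (Fin (k * n)) = (k * n).factorial := by
  classical
  have h : ∀ m, cnt k m (Fin (k * n))
      = ((univ : Finset (Perm (Fin (k * n)))).filter fun π => π.cycleType.count k = m).card :=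
    fun m => nat_card_subtype _
  simp only [h]
  rw [← Finset.card_eq_sum_card_fiberwise (f := fun π : Perm (Fin (k*n)) => π.cycleType.count k)
      (t := range (n+1)) (fun π _ => by
        rw [Finset.mem_coe, mem_range, Nat.lt_succ_iff]
        exact count_le_of_card hk π (by simp))]
  rw [card_univ, Fintype.card_perm, Fintype.card_fin]

/-! ### Counting `k`-cycles -/

noncomputable def lists_equiv_pointed (k : ℕ) (hk : 2 ≤ k) :
    {l : List α // l.Nodup ∧ l.length = k} ≃
      {p : Perm α × α // (p.1.IsCycle ∧ p.1.support.card = k) ∧ p.2 ∈ p.1.support} := by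
  classical
  refine ⟨fun l => ⟨(l.1.formPerm, l.1.get ⟨0, by rw [l.2.2]; omega⟩), ?_⟩,
          fun p => ⟨p.1.1.toList p.1.2, ?_⟩, ?_, ?_⟩
  · obtain ⟨l, hn, hl⟩ := l
    have hne : ∀ x : α, l ≠ [x] := by rintro x rfl; simp at hl; omega
    have hsupp : l.formPerm.support = l.toFinset := List.support_formPerm_of_nodup l hn hne
    have hcycle : l.formPerm.IsCycle := List.isCycle_formPerm hn (by omega)
    refine ⟨⟨hcycle, ?_⟩, ?_⟩
    · rw [hsupp, List.toFinset_card_of_nodup hn, hl]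
    · rw [hsupp, List.mem_toFinset]
      exact l.get_mem _
  · obtain ⟨⟨c, x⟩, ⟨hc, hck⟩, hx⟩ := p
    refine ⟨nodup_toList _ _, ?_⟩
    rw [Equiv.Perm.length_toList, hc.cycleOf_eq (mem_support.mp hx), hck]
  · rintro ⟨l, hn, hl⟩
    apply Subtype.ext
    exact toList_formPerm_nontrivial l (by omega) hn
  · rintro ⟨⟨c, x⟩, ⟨hc, hck⟩, hx⟩
    apply Subtype.ext
    have h1 : (c.toList x).formPerm = c := by
      rw [formPerm_toList, hc.cycleOf_eq (mem_support.mp hx)]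
    have h2 : (c.toList x).get ⟨0, by rw [Equiv.Perm.length_toList, hc.cycleOf_eq (mem_support.mp hx), hck]; omega⟩ = x := by rw [List.get_eq_getElem]; exact toList_getElem_zero c x hx
    simp only [Prod.mk.injEq]
    exact ⟨h1, h2⟩

noncomputable def lists_equiv_emb (k : ℕ) :
    {l : List α // l.Nodup ∧ l.length = k} ≃ (Fin k ↪ α) := by
  classical
  refine ⟨fun l => ⟨fun i => l.1.get (Fin.cast l.2.2.symm i), ?_⟩,
          fun f => ⟨List.ofFn f, List.nodup_ofFn.mpr f.injective, List.length_ofFn⟩, ?_, ?_⟩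
  · intro a b hab
    have := (List.nodup_iff_injective_get.mp l.2.1) hab
    simpa [Fin.ext_iff] using this
  · rintro ⟨l, hn, hl⟩
    apply Subtype.ext
    apply List.ext_getElem (by simp [hl])
    intro i h1 h2
    simp
  · intro f
    ext i
    simp

noncomputable def pointed_equiv_sigma (k : ℕ) :
    {p : Perm α × α // (p.1.IsCycle ∧ p.1.support.card = k) ∧ p.2 ∈ p.1.support} ≃
      Σ c : {c : Perm α // c.IsCycle ∧ c.support.card = k}, {x : α // x ∈ c.1.support} :=
  ⟨fun p => ⟨⟨p.1.1, p.2.1⟩, ⟨p.1.2, p.2.2⟩⟩, fun q => ⟨(q.1.1, q.2.1), ⟨q.1.2, q.2.2⟩⟩,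
    fun ⟨⟨c, x⟩, h⟩ => rfl, fun ⟨⟨c, hc⟩, ⟨x, hx⟩⟩ => rfl⟩

lemma Kc_mul_k {k : ℕ} (hk : 2 ≤ k) :
    Kc k α * k = (Fintype.card α).descFactorial k := by
  classical
  have h1 : Nat.card {p : Perm α × α // (p.1.IsCycle ∧ p.1.support.card = k) ∧ p.2 ∈ p.1.support}
      = (Fintype.card α).descFactorial k := by
    rw [Nat.card_congr ((lists_equiv_pointed k hk).symm.trans (lists_equiv_emb k)),
      Nat.card_eq_fintype_card, Fintype.card_embedding_eq, Fintype.card_fin]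
  rw [← h1, Nat.card_congr (pointed_equiv_sigma k), Nat.card_eq_fintype_card,
    Fintype.card_sigma]
  have h2 : ∀ c : {c : Perm α // c.IsCycle ∧ c.support.card = k},
      Fintype.card {x : α // x ∈ c.1.support} = k := by
    intro c
    rw [Fintype.card_congr (Equiv.refl _), Fintype.card_coe]
    exact c.2.2
  rw [Finset.sum_congr rfl (fun c _ => h2 c), Finset.sum_const, card_univ, smul_eq_mul,
    Kc, Nat.card_eq_fintype_card]

/-! ### The recurrence -/

lemma disj_mem_iff {τ c : Perm α} (hd : Perm.Disjoint τ c) (x : α) :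
    x ∉ c.support ↔ τ x ∉ c.support := by
  by_cases hx : x ∈ τ.support
  · have hs := disjoint_iff_disjoint_support.mp hd
    have h1 : x ∉ c.support := Finset.disjoint_left.mp hs hx
    have h2 : τ x ∉ c.support := Finset.disjoint_left.mp hs (apply_mem_support.mpr hx)
    simp [h1, h2]
  · rw [notMem_support] at hx
    rw [hx]

noncomputable def fiber_equiv (k m : ℕ) (c : Perm α) (hc : c.IsCycle)
    (hck : c.support.card = k) :
    {π : Perm α // c ∈ π.cycleFactorsFinset ∧ π.cycleType.count k = m + 1} ≃
      {σ : Perm {x : α // x ∉ c.support} // σ.cycleType.count k = m} where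
  toFun := fun ⟨π, hπ, hcount⟩ =>
    ⟨(π * c⁻¹).subtypePerm (fun x => (disj_mem_iff (disjoint_mul_inv_of_mem_cycleFactorsFinset hπ) x).symm), by
      have hof : ofSubtype ((π * c⁻¹).subtypePerm
          (fun x => (disj_mem_iff (disjoint_mul_inv_of_mem_cycleFactorsFinset hπ) x).symm)) = π * c⁻¹ :=
        ofSubtype_subtypePerm _ (fun x hx =>
          Finset.disjoint_left.mp (disjoint_iff_disjoint_support.mp
            (disjoint_mul_inv_of_mem_cycleFactorsFinset hπ)) (mem_support.mpr hx))
      rw [← cycleType_ofSubtype, hof,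
        cycleType_mul_inv_mem_cycleFactorsFinset_eq_sub hπ, hc.cycleType, hck,
        Multiset.count_sub, hcount]
      simp⟩
  invFun := fun ⟨σ, hσ⟩ => by
    have hdisj : Perm.Disjoint (ofSubtype σ) c := by
      rw [disjoint_iff_disjoint_support, support_ofSubtype, Finset.disjoint_left]
      rintro x hx
      simp only [Finset.mem_map, Function.Embedding.coe_subtype, Subtype.exists] at hx
      obtain ⟨y, hy, -, rfl⟩ := hx
      exact hy
    refine ⟨ofSubtype σ * c, ?_, ?_⟩
    · rw [hdisj.cycleFactorsFinset_mul_eq_union, Finset.mem_union,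
        hc.cycleFactorsFinset_eq_singleton]
      exact Or.inr (Finset.mem_singleton_self c)
    · rw [hdisj.cycleType_mul, Multiset.count_add, cycleType_ofSubtype, hσ, hc.cycleType, hck]
      simp
  left_inv := fun ⟨π, hπ, hcount⟩ => by
    apply Subtype.ext
    simp only
    rw [ofSubtype_subtypePerm _ (fun x hx =>
      Finset.disjoint_left.mp (disjoint_iff_disjoint_support.mp
        (disjoint_mul_inv_of_mem_cycleFactorsFinset hπ)) (mem_support.mpr hx)),
      inv_mul_cancel_right]
  right_inv := fun ⟨σ, hσ⟩ => by
    apply Subtype.ext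
    simp only
    ext x
    simp [mul_inv_cancel_right]

noncomputable def S_equiv_a (k m : ℕ) :
    {p : Perm α × Perm α // p.2 ∈ p.1.cycleFactorsFinset ∧
        p.2.support.card = k ∧ p.1.cycleType.count k = m + 1} ≃
      Σ π : {π : Perm α // π.cycleType.count k = m + 1},
        {c : Perm α // c ∈ π.1.cycleFactorsFinset ∧ c.support.card = k} :=
  ⟨fun p => ⟨⟨p.1.1, p.2.2.2⟩, ⟨p.1.2, p.2.1, p.2.2.1⟩⟩,
   fun q => ⟨(q.1.1, q.2.1), q.2.2.1, q.2.2.2, q.1.2⟩,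
   fun ⟨⟨_, _⟩, _⟩ => rfl, fun ⟨⟨_, _⟩, ⟨_, _⟩⟩ => rfl⟩

noncomputable def S_equiv_b (k m : ℕ) :
    {p : Perm α × Perm α // p.2 ∈ p.1.cycleFactorsFinset ∧
        p.2.support.card = k ∧ p.1.cycleType.count k = m + 1} ≃
      Σ c : {c : Perm α // c.IsCycle ∧ c.support.card = k},
        {π : Perm α // c.1 ∈ π.cycleFactorsFinset ∧ π.cycleType.count k = m + 1} :=
  ⟨fun p => ⟨⟨p.1.2, (mem_cycleFactorsFinset_iff.mp p.2.1).1, p.2.2.1⟩, ⟨p.1.1, p.2.1, p.2.2.2⟩⟩,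
   fun q => ⟨(q.2.1, q.1.1), q.2.2.1, q.1.2.2, q.2.2.2⟩,
   fun ⟨⟨_, _⟩, _⟩ => rfl, fun ⟨⟨_, _⟩, ⟨_, _⟩⟩ => rfl⟩

lemma rec_lemma (k m : ℕ) :
    (m + 1) * cnt k (m + 1) α = Kc k α * cnt k m (Fin (Fintype.card α - k)) := by
  classical
  have ha : Nat.card {p : Perm α × Perm α // p.2 ∈ p.1.cycleFactorsFinset ∧
        p.2.support.card = k ∧ p.1.cycleType.count k = m + 1}
      = cnt k (m + 1) α * (m + 1) := by
    rw [Nat.card_congr (S_equiv_a k m), Nat.card_eq_fintype_card, Fintype.card_sigma]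
    have hfib : ∀ π : {π : Perm α // π.cycleType.count k = m + 1},
        Fintype.card {c : Perm α // c ∈ π.1.cycleFactorsFinset ∧ c.support.card = k} = m + 1 := by
      intro π
      rw [Fintype.card_subtype]
      have h : (univ.filter fun c : Perm α => c ∈ π.1.cycleFactorsFinset ∧ c.support.card = k)
          = π.1.cycleFactorsFinset.filter (fun c => c.support.card = k) := by
        ext c; simp [Finset.mem_filter]
      rw [h, ← count_cycleType_eq, π.2]
    rw [Finset.sum_congr rfl (fun π _ => hfib π), Finset.sum_const, card_univ, smul_eq_mul,
      cnt, Nat.card_eq_fintype_card]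
  have hb : Nat.card {p : Perm α × Perm α // p.2 ∈ p.1.cycleFactorsFinset ∧
        p.2.support.card = k ∧ p.1.cycleType.count k = m + 1}
      = Kc k α * cnt k m (Fin (Fintype.card α - k)) := by
    rw [Nat.card_congr (S_equiv_b k m), Nat.card_eq_fintype_card, Fintype.card_sigma]
    have hfib : ∀ c : {c : Perm α // c.IsCycle ∧ c.support.card = k},
        Fintype.card {π : Perm α // c.1 ∈ π.cycleFactorsFinset ∧ π.cycleType.count k = m + 1}
          = cnt k m (Fin (Fintype.card α - k)) := by
      intro c
      rw [← Nat.card_eq_fintype_card, Nat.card_congr (fiber_equiv k m c.1 c.2.1 c.2.2)]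
      have hcard : Fintype.card {x : α // x ∉ c.1.support} = Fintype.card α - k := by
        rw [Fintype.card_subtype_compl]
        congr 1
        rw [Fintype.card_congr (Equiv.refl _), Fintype.card_coe, c.2.2]
      exact (cnt_congr k m (Fintype.equivFinOfCardEq hcard)).trans rfl
    rw [Finset.sum_congr rfl (fun c _ => hfib c), Finset.sum_const, card_univ, smul_eq_mul,
      Kc, Nat.card_eq_fintype_card]
  rw [← hb, ha, mul_comm]

/-! ### Pure algebra -/

noncomputable def t (k j : ℕ) : ℚ := ∑ i ∈ range (j + 1), (-1 : ℚ) ^ i * k ^ (j - i) / i.factorial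

lemma binom_zero {J : ℕ} (hJ : 1 ≤ J) :
    ∑ m ∈ range (J + 1), (-1 : ℚ) ^ (J - m) / ((J - m).factorial * m.factorial) = 0 := by
  have hrefl := Finset.sum_range_reflect
    (fun m => (-1 : ℚ) ^ (J - m) / ((J - m).factorial * m.factorial)) (J + 1)
  simp only [Nat.add_sub_cancel] at hrefl
  rw [← hrefl]
  have hcongr : ∀ m ∈ range (J + 1),
      (-1 : ℚ) ^ (J - (J - m)) / ((J - (J - m)).factorial * (J - m).factorial)
        = (-1 : ℚ) ^ m * (J.choose m) / J.factorial := by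
    intro m hm
    rw [mem_range, Nat.lt_succ_iff] at hm
    rw [Nat.sub_sub_self hm]
    rw [div_eq_div_iff (by positivity) (by positivity)]
    have := Nat.choose_mul_factorial_mul_factorial hm
    have hq : ((J.choose m : ℚ)) * m.factorial * (J - m).factorial = J.factorial := by
      exact_mod_cast congrArg (Nat.cast : ℕ → ℚ) this
    rw [← hq]
    ring
  rw [Finset.sum_congr rfl hcongr, ← Finset.sum_div]
  have : ∑ m ∈ range (J + 1), (-1 : ℚ) ^ m * (J.choose m)
      = ((∑ m ∈ range (J + 1), (-1 : ℤ) ^ m * (J.choose m) : ℤ) : ℚ) := by push_cast; rfl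
  rw [this, Int.alternating_sum_range_choose_of_ne (by omega)]
  simp

lemma t_succ (k j : ℕ) :
    t k (j + 1) = k * t k j + (-1 : ℚ) ^ (j + 1) / (j + 1).factorial := by
  rw [t, Finset.sum_range_succ]
  have hcongr : ∀ i ∈ range (j + 1),
      (-1 : ℚ) ^ i * k ^ (j + 1 - i) / i.factorial
        = k * ((-1 : ℚ) ^ i * k ^ (j - i) / i.factorial) := by
    intro i hi
    rw [mem_range, Nat.lt_succ_iff] at hi
    rw [show j + 1 - i = (j - i) + 1 by omega, pow_succ]
    ring
  rw [Finset.sum_congr rfl hcongr, ← Finset.mul_sum, ← t]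
  simp

lemma conv_t (k : ℕ) : ∀ n, ∑ m ∈ range (n + 1), t k (n - m) / m.factorial = (k : ℚ) ^ n := by
  intro n
  induction n with
  | zero => simp [t]
  | succ n ih =>
    rw [Finset.sum_range_succ]
    have hcongr : ∀ m ∈ range (n + 1),
        t k (n + 1 - m) / m.factorial
          = k * (t k (n - m) / m.factorial)
            + (-1 : ℚ) ^ (n + 1 - m) / ((n + 1 - m).factorial * m.factorial) := by
      intro m hm
      rw [mem_range, Nat.lt_succ_iff] at hm
      rw [show n + 1 - m = (n - m) + 1 by omega, t_succ]
      ring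
    rw [Finset.sum_congr rfl hcongr, Finset.sum_add_distrib, ← Finset.mul_sum, ih]
    have hb := binom_zero (J := n + 1) (by omega)
    rw [Finset.sum_range_succ] at hb
    simp only [Nat.sub_self, pow_zero, Nat.factorial_zero, Nat.cast_one, one_mul] at hb
    have : ∑ m ∈ range (n + 1), (-1 : ℚ) ^ (n + 1 - m) / ((n + 1 - m).factorial * m.factorial)
        = -(1 / (n + 1).factorial) := by linarith
    rw [this]
    have ht0 : t k (n + 1 - (n + 1)) = 1 := by simp [t]
    rw [ht0, pow_succ]
    ring

lemma b_eq_t (k : ℕ) (b : ℕ → ℚ)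
    (hconv : ∀ n, ∑ m ∈ range (n + 1), b (n - m) / m.factorial = (k : ℚ) ^ n) :
    ∀ n, b n = t k n := by
  intro n
  induction n using Nat.strong_induction_on with
  | _ n ih =>
    have h1 := hconv n
    have h2 := conv_t k n
    rw [Finset.sum_range_succ'] at h1 h2
    simp only [Nat.sub_zero, Nat.factorial_zero, Nat.cast_one, div_one] at h1 h2
    have hsums : ∑ i ∈ range n, b (n - (i + 1)) / (i + 1).factorial
        = ∑ i ∈ range n, t k (n - (i + 1)) / (i + 1).factorial := by
      apply Finset.sum_congr rfl
      intro i hi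
      rw [mem_range] at hi
      rw [ih _ (by omega)]
    linarith



/-! ### Putting things together -/

lemma dag {k : ℕ} (hk : 2 ≤ k) :
    ∀ m n, m ≤ n → (cnt k m (Fin (k * n)) : ℚ) * m.factorial * (k : ℚ) ^ m
        * (k * (n - m)).factorial
      = (k * n).factorial * cnt k 0 (Fin (k * (n - m))) := by
  intro m
  induction m with
  | zero =>
    intro n _
    simp [mul_comm]
  | succ m ih =>
    intro n hmn
    obtain ⟨n', rfl⟩ : ∃ n', n = n' + 1 := ⟨n - 1, by omega⟩
    have hsub : Fintype.card (Fin (k * (n' + 1))) - k = k * n' := by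
      rw [Fintype.card_fin, Nat.mul_succ, Nat.add_sub_cancel]
    have hrec := rec_lemma (α := Fin (k * (n' + 1))) k m
    rw [hsub] at hrec
    have hrecQ : ((m : ℚ) + 1) * cnt k (m + 1) (Fin (k * (n' + 1)))
        = (Kc k (Fin (k * (n' + 1))) : ℚ) * cnt k m (Fin (k * n')) := by
      exact_mod_cast hrec
    have hKk : Kc k (Fin (k * (n' + 1))) * k = (k * (n' + 1)).descFactorial k := by
      have h := Kc_mul_k (α := Fin (k * (n' + 1))) hk
      rwa [Fintype.card_fin] at h
    have hKkQ : (Kc k (Fin (k * (n' + 1))) : ℚ) * k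
        = ((k * (n' + 1)).descFactorial k : ℚ) := by exact_mod_cast hKk
    have hfact : (k * n').factorial * (k * (n' + 1)).descFactorial k
        = (k * (n' + 1)).factorial := by
      have hle : k ≤ k * (n' + 1) := Nat.le_mul_of_pos_right k (by omega)
      have h := Nat.factorial_mul_descFactorial hle
      rwa [show k * (n' + 1) - k = k * n' by rw [Nat.mul_succ, Nat.add_sub_cancel]] at h
    have hfactQ : ((k * n').factorial : ℚ) * ((k * (n' + 1)).descFactorial k : ℚ)
        = ((k * (n' + 1)).factorial : ℚ) := by exact_mod_cast hfact
    have hidx : n' + 1 - (m + 1) = n' - m := by omega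
    have hihQ := ih n' (by omega)
    calc (cnt k (m + 1) (Fin (k * (n' + 1))) : ℚ) * (m + 1).factorial * (k : ℚ) ^ (m + 1)
          * (k * (n' + 1 - (m + 1))).factorial
        = (((m : ℚ) + 1) * cnt k (m + 1) (Fin (k * (n' + 1))))
            * (m.factorial * (k : ℚ) ^ m * k * (k * (n' - m)).factorial) := by
          rw [hidx, Nat.factorial_succ]
          push_cast
          ring
      _ = ((Kc k (Fin (k * (n' + 1))) : ℚ) * k)
            * ((cnt k m (Fin (k * n')) : ℚ) * m.factorial * (k : ℚ) ^ m
                * (k * (n' - m)).factorial) := by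
          rw [hrecQ]; ring
      _ = ((k * (n' + 1)).descFactorial k : ℚ)
            * ((k * n').factorial * cnt k 0 (Fin (k * (n' - m)))) := by
          rw [hKkQ, hihQ]
      _ = (k * (n' + 1)).factorial * cnt k 0 (Fin (k * (n' + 1 - (m + 1)))) := by
          rw [hidx, ← hfactQ]; ring

lemma conv_b {k : ℕ} (hk : 2 ≤ k) (n : ℕ) :
    ∑ m ∈ range (n + 1),
        ((cnt k 0 (Fin (k * (n - m))) : ℚ) * (k : ℚ) ^ (n - m)
          / (k * (n - m)).factorial) / m.factorial
      = (k : ℚ) ^ n := by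
  have hk0 : (k : ℚ) ≠ 0 := Nat.cast_ne_zero.mpr (by omega)
  have hQ : ∑ m ∈ range (n + 1), (cnt k m (Fin (k * n)) : ℚ) = (k * n).factorial := by
    exact_mod_cast congrArg (Nat.cast : ℕ → ℚ) (sum_cnt (by omega : 1 ≤ k) n)
  have key : ∀ m ∈ range (n + 1),
      ((cnt k 0 (Fin (k * (n - m))) : ℚ) * (k : ℚ) ^ (n - m)
          / (k * (n - m)).factorial) / m.factorial
        = (cnt k m (Fin (k * n)) : ℚ) * (k : ℚ) ^ n / (k * n).factorial := by
    intro m hm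
    rw [mem_range, Nat.lt_succ_iff] at hm
    have hd := dag hk m n hm
    have h1 : ((k * (n - m)).factorial : ℚ) > 0 := by
      exact_mod_cast Nat.factorial_pos _
    have h2 : ((m.factorial : ℚ)) > 0 := by exact_mod_cast Nat.factorial_pos _
    have h3 : ((k * n).factorial : ℚ) > 0 := by exact_mod_cast Nat.factorial_pos _
    rw [div_div, div_eq_div_iff (by positivity) (by positivity)]
    have hpow : (k : ℚ) ^ n = (k : ℚ) ^ m * (k : ℚ) ^ (n - m) := by
      rw [← pow_add]
      congr 1
      omega
    rw [hpow]
    linear_combination (-(k : ℚ) ^ (n - m)) * hd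
  rw [Finset.sum_congr rfl key, ← Finset.sum_div, ← Finset.sum_mul, hQ]
  field_simp

lemma b_formula {k : ℕ} (hk : 2 ≤ k) (n : ℕ) :
    (cnt k 0 (Fin (k * n)) : ℚ) * (k : ℚ) ^ n / (k * n).factorial = t k n := by
  exact b_eq_t k
    (fun j => (cnt k 0 (Fin (k * j)) : ℚ) * (k : ℚ) ^ j / (k * j).factorial)
    (fun n => conv_b hk n) n

end Stmt9Aux

theorem stmt9 (k : ℕ) (hk : 2 ≤ k) (n : ℕ) :
    (C k (k * n) 0 : ℚ) * k ^ n / (k * n).factorial =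
      ∑ i ∈ Finset.range (n + 1), (-1 : ℚ) ^ i * k ^ (n - i) / i.factorial := by
  have hC : C k (k * n) 0 = Stmt9Aux.cnt k 0 (Fin (k * n)) := rfl
  rw [hC]
  exact Stmt9Aux.b_formula hk n
end

section
/- For all integers k > 1 and n ≥ 0, the number of derangements of the generalized symmetric group S(k,n) is D(k,n) = k^n·n!·Σ_{i=0}^{n} (-1)^i/(k^i·i!). -/
open Finset


def eA {α β : Type*} (P : α × β → Prop) :
    {p : α × β // P p} ≃ Σ b : β, {a : α // P (a, b)} where
  toFun p := ⟨p.1.2, p.1.1, by simpa using p.2⟩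
  invFun q := ⟨(q.2.1, q.1), q.2.2⟩
  left_inv p := rfl
  right_inv q := rfl

/-- `D k n` is the number of derangements (fixed-point-free elements) of the
generalized symmetric group `S(k, n) = (ℤ/kℤ) ≀ Sₙ`: pairs `((x₁,…,xₙ), π)`
such that for every `i`, either `π i ≠ i` or `xᵢ ≠ 0`. -/
noncomputable def D (k n : ℕ) : ℕ :=
  Nat.card {p : (Fin n → ZMod k) × Equiv.Perm (Fin n) // ∀ i, p.2 i ≠ i ∨ p.1 i ≠ 0}

theorem stmt10 (k n : ℕ) (hk : 1 < k) :
    (D k n : ℚ) =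
      k ^ n * n.factorial *
        ∑ i ∈ Finset.range (n + 1), (-1 : ℚ) ^ i / (k ^ i * i.factorial) := by
  haveI : NeZero k := ⟨by omega⟩
  -- Step 1: D k n = ∑ π, ∏ i, (if π i = i then k-1 else k)
  have step1 : D k n = ∑ π : Equiv.Perm (Fin n), ∏ i : Fin n,
      (if π i = i then k - 1 else k) := by
    rw [D, Nat.card_congr (eA _), Nat.card_eq_fintype_card, Fintype.card_sigma]
    refine Finset.sum_congr rfl fun π _ => ?_
    rw [Fintype.card_subtype]
    have : (univ.filter fun x : Fin n → ZMod k => ∀ i, π i ≠ i ∨ x i ≠ 0)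
        = Fintype.piFinset (fun i => if π i = i then ({0}ᶜ : Finset (ZMod k)) else univ) := by
      ext x
      simp only [mem_filter, mem_univ, true_and, Fintype.mem_piFinset]
      constructor
      · intro h i
        by_cases hi : π i = i
        · simp [hi, (h i).resolve_left (by simp [hi])]
        · simp [hi]
      · intro h i
        by_cases hi : π i = i
        · have := h i; rw [if_pos hi] at this; simp at this; exact Or.inr this
        · exact Or.inl hi
    rw [this, Fintype.card_piFinset]
    refine Finset.prod_congr rfl fun i _ => ?_
    rw [apply_ite Finset.card]
    simp [Finset.card_compl, ZMod.card]
  -- cast to ℚ and expand products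
  have step2 : (D k n : ℚ) = ∑ t ∈ (univ : Finset (Fin n)).powerset,
      ((univ.filter fun π : Equiv.Perm (Fin n) => ∀ i ∈ t, π i = i).card : ℚ) *
        ((-1) ^ t.card * k ^ (n - t.card)) := by
    rw [step1, Nat.cast_sum]
    have key : ∀ π : Equiv.Perm (Fin n),
        ((∏ i : Fin n, (if π i = i then k - 1 else k) : ℕ) : ℚ)
        = ∑ t ∈ (univ : Finset (Fin n)).powerset,
            (if ∀ i ∈ t, π i = i then ((-1 : ℚ)) ^ t.card else 0) * k ^ (n - t.card) := by
      intro π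
      rw [Nat.cast_prod]
      have : ∀ i : Fin n, ((if π i = i then k - 1 else k : ℕ) : ℚ)
          = (if π i = i then (-1 : ℚ) else 0) + k := by
        intro i
        by_cases hi : π i = i <;> simp [hi, Nat.cast_sub (by omega : 1 ≤ k)]
        ring
      rw [Finset.prod_congr rfl fun i _ => this i, Finset.prod_add]
      refine Finset.sum_congr rfl fun t ht => ?_
      congr 1
      · by_cases h : ∀ i ∈ t, π i = i
        · rw [if_pos h]
          rw [Finset.prod_congr rfl fun i hi => if_pos (h i hi), Finset.prod_const]
        · rw [if_neg h]
          push_neg at h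
          obtain ⟨i, hi, hne⟩ := h
          exact Finset.prod_eq_zero hi (if_neg hne)
      · rw [Finset.prod_const]
        congr 1
        rw [Finset.card_sdiff_of_subset (Finset.subset_univ t), Finset.card_univ, Fintype.card_fin]
    rw [Finset.sum_congr rfl fun π _ => key π, Finset.sum_comm]
    refine Finset.sum_congr rfl fun t ht => ?_
    simp only [ite_mul, zero_mul]
    rw [← Finset.sum_filter, Finset.sum_const, nsmul_eq_mul]
  have cardfix : ∀ t : Finset (Fin n),
      (univ.filter fun π : Equiv.Perm (Fin n) => ∀ i ∈ t, π i = i).card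
        = (n - t.card).factorial := by
    intro t
    rw [← Fintype.card_subtype]
    have e1 : {π : Equiv.Perm (Fin n) // ∀ i ∈ t, π i = i}
        ≃ Equiv.Perm {i : Fin n // i ∉ t} := by
      refine (Equiv.subtypeEquivRight fun π => ?_).trans
        (Equiv.Perm.subtypeEquivSubtypePerm (fun i => i ∉ t)).symm
      constructor
      · intro h a ha; exact h a (not_not.mp ha)
      · intro h a ha; exact h a (not_not.mpr ha)
    rw [Fintype.card_congr e1, Fintype.card_perm]
    congr 1
    rw [Fintype.card_subtype_compl, Fintype.card_fin]
    congr 1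
    exact Fintype.card_coe t
  rw [step2, Finset.sum_congr rfl (fun t _ => by rw [cardfix t]), Finset.sum_powerset]
  have hcard : #(univ : Finset (Fin n)) = n := by simp
  rw [hcard, Finset.mul_sum]
  refine Finset.sum_congr rfl fun j hj => ?_
  rw [Finset.mem_range] at hj
  have hjn : j ≤ n := by omega
  have hconst : ∀ t ∈ Finset.powersetCard j (univ : Finset (Fin n)),
      (((n - #t).factorial : ℚ)) * ((-1) ^ #t * (k : ℚ) ^ (n - #t))
        = ((n - j).factorial : ℚ) * ((-1) ^ j * (k : ℚ) ^ (n - j)) := by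
    intro t ht
    rw [(Finset.mem_powersetCard.mp ht).2]
  rw [Finset.sum_congr rfl hconst, Finset.sum_const, Finset.card_powersetCard, hcard,
    nsmul_eq_mul]
  have hk0 : (k : ℚ) ≠ 0 := by positivity
  have hj0 : ((j.factorial : ℚ)) ≠ 0 := by positivity
  have h1 : (n.choose j : ℚ) * j.factorial * (n - j).factorial = n.factorial := by
    exact_mod_cast Nat.choose_mul_factorial_mul_factorial hjn
  have h2 : (k : ℚ) ^ (n - j) * (k : ℚ) ^ j = (k : ℚ) ^ n := by
    rw [← pow_add, Nat.sub_add_cancel hjn]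
  field_simp
  linear_combination ((k : ℚ) ^ (n - j) * (k : ℚ) ^ j) * h1
    + (n.factorial : ℚ) * h2
end

section
/- For all integers k > 1 and n ≥ 0, the formal power series identity Σ_{n=0}^∞ (D(k,n)/n!)·x^n = exp(-x)/(1 - kx) holds in ℚ[[x]]. -/
open Finset

lemma count_aux (k : ℕ) [NeZero k] (n : ℕ) (m : Finset (Fin n)) :
    (Finset.univ.filter
      (fun p : (Fin n → ZMod k) × Equiv.Perm (Fin n) => ∀ i ∈ m, p.2 i = i ∧ p.1 i = 0)).card
      = k ^ (n - m.card) * (n - m.card).factorial := by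
  classical
  rw [← Fintype.card_subtype]
  have e1 : {p : (Fin n → ZMod k) × Equiv.Perm (Fin n) // ∀ i ∈ m, p.2 i = i ∧ p.1 i = 0}
      ≃ {x : Fin n → ZMod k // ∀ i ∈ m, x i = 0} ×
        {π : Equiv.Perm (Fin n) // ∀ i ∈ m, π i = i} :=
    (Equiv.subtypeEquivRight (fun p => by
      constructor
      · intro h
        exact ⟨fun i hi => (h i hi).2, fun i hi => (h i hi).1⟩
      · intro h i hi
        exact ⟨h.2 i hi, h.1 i hi⟩)).trans Equiv.subtypeProdEquivProd
  have e2 : {x : Fin n → ZMod k // ∀ i ∈ m, x i = 0} ≃ ({i : Fin n // i ∉ m} → ZMod k) :=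
    { toFun := fun x i => x.1 i.1
      invFun := fun f => ⟨fun i => if h : i ∈ m then 0 else f ⟨i, h⟩, by
        intro i hi; simp [hi]⟩
      left_inv := by
        rintro ⟨x, hx⟩
        ext i
        by_cases h : i ∈ m
        · simp [h, hx i h]
        · simp [h]
      right_inv := by
        intro f
        funext i
        simp [i.2] }
  have e3 : {π : Equiv.Perm (Fin n) // ∀ i ∈ m, π i = i} ≃ Equiv.Perm {i : Fin n // i ∉ m} :=
    (Equiv.subtypeEquivRight (fun π => by
      constructor
      · intro h a ha
        exact h a (not_not.mp ha)
      · intro h i hi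
        exact h i (fun h' => h' hi))).trans
      (Equiv.Perm.subtypeEquivSubtypePerm (fun i => i ∉ m)).symm
  have hcompl : Fintype.card {i : Fin n // i ∉ m} = n - m.card := by
    rw [Fintype.card_subtype_compl]
    congr 1
    · exact Fintype.card_fin n
    · simp [Fintype.card_subtype]
  trans (Fintype.card (({i : Fin n // i ∉ m} → ZMod k) × Equiv.Perm {i : Fin n // i ∉ m}))
  · exact Fintype.card_congr (e1.trans (e2.prodCongr e3))
  · rw [Fintype.card_prod, Fintype.card_fun, Fintype.card_perm, hcompl, ZMod.card]

lemma D_eq (k : ℕ) (hk : 0 < k) (n : ℕ) :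
    (D k n : ℤ) = ∑ i ∈ Finset.range (n + 1),
      (n.choose i : ℤ) * ((-1) ^ i * ((k : ℤ) ^ (n - i) * (n - i).factorial)) := by
  haveI : NeZero k := ⟨hk.ne'⟩
  classical
  set α := (Fin n → ZMod k) × Equiv.Perm (Fin n)
  set Bad : α → Finset (Fin n) := fun p => Finset.univ.filter (fun i => p.2 i = i ∧ p.1 i = 0)
    with hBad
  have hiff : ∀ p : α, (∀ i, p.2 i ≠ i ∨ p.1 i ≠ 0) ↔ Bad p = ∅ := by
    intro p
    simp only [hBad, Finset.filter_eq_empty_iff]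
    constructor
    · intro h i _
      have := h i
      tauto
    · intro h i
      have := h (Finset.mem_univ i)
      tauto
  have h1 : (D k n : ℤ) = ∑ p : α, if Bad p = ∅ then (1 : ℤ) else 0 := by
    rw [Finset.sum_boole, D, Nat.card_eq_fintype_card, Fintype.card_subtype]
    norm_cast
    congr 1
    exact Finset.filter_congr (fun p _ => hiff p)
  rw [h1]
  have h2 : ∀ p : α, (if Bad p = ∅ then (1 : ℤ) else 0)
      = ∑ m ∈ (Finset.univ : Finset (Fin n)).powerset,
          if m ⊆ Bad p then (-1 : ℤ) ^ m.card else 0 := by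
    intro p
    rw [← Finset.sum_filter]
    have : Finset.filter (· ⊆ Bad p) (Finset.univ : Finset (Fin n)).powerset
        = (Bad p).powerset := by
      ext s
      simp [Finset.mem_powerset]
    rw [this, Finset.sum_powerset_neg_one_pow_card]
  simp_rw [h2]
  rw [Finset.sum_comm]
  have h3 : ∀ m : Finset (Fin n),
      (∑ p : α, if m ⊆ Bad p then (-1 : ℤ) ^ m.card else 0)
        = (-1 : ℤ) ^ m.card * ((k : ℤ) ^ (n - m.card) * ((n - m.card).factorial : ℤ)) := by
    intro m
    have hiff : ∀ p : α, m ⊆ Bad p ↔ ∀ i ∈ m, p.2 i = i ∧ p.1 i = 0 := by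
      intro p
      simp [hBad, Finset.subset_iff]
    simp_rw [hiff]
    rw [← Finset.sum_filter, Finset.sum_const, count_aux k n m]
    ring
  simp_rw [h3]
  rw [Finset.sum_powerset_apply_card
    (f := fun j => (-1 : ℤ) ^ j * ((k : ℤ) ^ (n - j) * ((n - j).factorial : ℤ)))]
  simp only [Finset.card_univ, Fintype.card_fin, nsmul_eq_mul]

lemma geom_inv (k : ℕ) :
    (1 - PowerSeries.C (k : ℚ) * PowerSeries.X)⁻¹ = PowerSeries.mk fun n => (k : ℚ) ^ n := by
  rw [PowerSeries.inv_eq_iff_mul_eq_one (by simp)]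
  have h : (PowerSeries.mk fun n => (k : ℚ) ^ n) * (1 - PowerSeries.C (k : ℚ) * PowerSeries.X)
      = (PowerSeries.mk fun n => (k : ℚ) ^ n)
        - PowerSeries.C (k : ℚ) * ((PowerSeries.mk fun n => (k : ℚ) ^ n) * PowerSeries.X) := by
    ring
  rw [h]
  ext n
  rw [map_sub, PowerSeries.coeff_C_mul]
  cases n with
  | zero => simp
  | succ n =>
    rw [PowerSeries.coeff_succ_mul_X, PowerSeries.coeff_mk, PowerSeries.coeff_mk,
      PowerSeries.coeff_one]
    simp [pow_succ]
    ring

theorem stmt11 (k : ℕ) (hk : 1 < k) :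
    (PowerSeries.mk fun n => (D k n : ℚ) / n.factorial) =
      PowerSeries.rescale (-1) (PowerSeries.exp ℚ) *
        (1 - PowerSeries.C (k : ℚ) * PowerSeries.X)⁻¹ := by
  rw [geom_inv]
  ext n
  rw [PowerSeries.coeff_mk, PowerSeries.coeff_mul]
  simp_rw [PowerSeries.coeff_rescale, PowerSeries.coeff_exp, PowerSeries.coeff_mk]
  rw [Finset.Nat.sum_antidiagonal_eq_sum_range_succ_mk]
  have hD : (D k n : ℚ) = ∑ i ∈ Finset.range (n + 1),
      (n.choose i : ℚ) * ((-1) ^ i * ((k : ℚ) ^ (n - i) * ((n - i).factorial : ℚ))) := by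
    exact_mod_cast congrArg (Int.cast : ℤ → ℚ) (D_eq k (by omega) n)
  rw [div_eq_iff (by exact_mod_cast n.factorial_ne_zero), hD, Finset.sum_mul]
  apply Finset.sum_congr rfl
  intro i hi
  have hin : i ≤ n := Nat.lt_succ_iff.mp (Finset.mem_range.mp hi)
  have hfact : (n.factorial : ℚ) = (n.choose i : ℚ) * i.factorial * (n - i).factorial := by
    exact_mod_cast (Nat.choose_mul_factorial_mul_factorial hin).symm
  rw [hfact]
  have h1 : (i.factorial : ℚ) ≠ 0 := by exact_mod_cast i.factorial_ne_zero
  simp only [Algebra.algebraMap_self, RingHom.id_apply]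
  field_simp
end

section
/- For all integers k ≥ 2, n ≥ 0 and 0 ≤ m ≤ n, the proportion of permutations in S_{kn} with exactly m k-cycles equals the proportion of elements of S(k,n) with exactly m fixed points: C_k(kn,m)/(kn)! = binom(n,m)·D(k,n-m)/(k^n·n!); equivalently, k^n·n!·C_k(kn,m) = (kn)!·binom(n,m)·D(k,n-m). -/
open Finset Equiv Equiv.Perm Function

/-- periodicity helper -/
lemma pow_apply_mod {β : Type*} (f : Equiv.Perm β) (a : β) {d : ℕ} (h : (f ^ d) a = a) (n : ℕ) :
    (f ^ n) a = (f ^ (n % d)) a := by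
  have hq : ∀ q : ℕ, ((f ^ d) ^ q) a = a := by
    intro q
    induction q with
    | zero => simp
    | succ q ih => rw [pow_succ, Equiv.Perm.mul_apply, h, ih]
  conv_lhs => rw [← Nat.mod_add_div n d]
  rw [pow_add, pow_mul, Equiv.Perm.mul_apply, hq]

section CardLemmas

variable {ι α β : Type*} [Fintype ι] [Fintype α] [DecidableEq α]

/-- Permutations fixing the image of an injective map pointwise. -/
lemma card_perm_fixed (g : ι → α) (hg : Function.Injective g) :
    Nat.card {σ : Equiv.Perm α // ∀ x, σ (g x) = g x} =
      (Fintype.card α - Fintype.card ι).factorial := by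
  classical
  have e1 : {σ : Equiv.Perm α // ∀ x, σ (g x) = g x} ≃
      {σ : Equiv.Perm α // ∀ a, ¬ (a ∉ Set.range g) → σ a = a} := by
    refine Equiv.subtypeEquiv (Equiv.refl _) fun σ => ⟨fun h a ha => ?_, fun h x => h _ ?_⟩
    · rw [not_not] at ha; obtain ⟨x, rfl⟩ := ha; exact h x
    · rw [not_not]; exact ⟨x, rfl⟩
  have e2 := (Equiv.Perm.subtypeEquivSubtypePerm (fun a : α => a ∉ Set.range g)).symm
  have ecard : Fintype.card {a : α // a ∈ Set.range g} = Fintype.card ι :=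
    (Fintype.card_congr (Equiv.ofInjective g hg).symm)
  rw [Nat.card_eq_fintype_card, Fintype.card_congr (e1.trans e2), Fintype.card_perm,
    Fintype.card_subtype_compl, ecard]

/-- Permutations agreeing with a prescribed permutation pattern on the image. -/
lemma card_perm_agree (e : Equiv.Perm ι) (g : ι → α) (hg : Function.Injective g) :
    Nat.card {σ : Equiv.Perm α // ∀ x, σ (g x) = g (e x)} =
      (Fintype.card α - Fintype.card ι).factorial := by
  classical
  set c : Equiv.Perm α := e.viaEmbedding ⟨g, hg⟩ with hc
  have hcg : ∀ x, c (g x) = g (e x) := fun x => Equiv.Perm.viaEmbedding_apply e ⟨g, hg⟩ x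
  have e1 : {σ : Equiv.Perm α // ∀ x, σ (g x) = g (e x)} ≃
      {σ : Equiv.Perm α // ∀ x, σ (g x) = g x} := by
    refine ⟨fun σ => ⟨c⁻¹ * σ.1, fun x => ?_⟩, fun τ => ⟨c * τ.1, fun x => ?_⟩, fun σ => ?_, fun τ => ?_⟩
    · rw [Equiv.Perm.mul_apply, σ.2 x, ← hcg, Equiv.Perm.inv_def, Equiv.symm_apply_apply]
    · rw [Equiv.Perm.mul_apply, τ.2 x, hcg]
    · exact Subtype.ext (by simp)
    · exact Subtype.ext (by simp)
  rw [Nat.card_congr e1, card_perm_fixed g hg]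

/-- Injective functions. -/
lemma card_inj : Nat.card {g : ι → α // Function.Injective g} =
    (Fintype.card α).descFactorial (Fintype.card ι) := by
  classical
  rw [Nat.card_congr (Equiv.subtypeInjectiveEquivEmbedding ι α), Nat.card_eq_fintype_card,
    Fintype.card_embedding_eq]

/-- Injective functions into a finset. -/
lemma card_inj_mem (s : Finset α) :
    Nat.card {g : ι → α // Function.Injective g ∧ ∀ x, g x ∈ s} =
      s.card.descFactorial (Fintype.card ι) := by
  classical
  have e1 : {g : ι → α // Function.Injective g ∧ ∀ x, g x ∈ s} ≃
      {G : ι → {a : α // a ∈ s} // Function.Injective G} := by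
    refine ⟨fun g => ⟨fun x => ⟨g.1 x, g.2.2 x⟩, fun a b h => g.2.1 (congrArg Subtype.val h)⟩,
      fun G => ⟨fun x => (G.1 x).1, fun a b h => G.2 (Subtype.ext h), fun x => (G.1 x).2⟩,
      fun g => Subtype.ext rfl, fun G => Subtype.ext (funext fun x => Subtype.ext rfl)⟩
  rw [Nat.card_congr e1, card_inj, Fintype.card_coe]

/-- Functions vanishing on the image of an injective map. -/
lemma card_fun_zero [Fintype β] (g : ι → α) (hg : Function.Injective g) (b₀ : β) :
    Nat.card {v : α → β // ∀ x, v (g x) = b₀} =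
      (Fintype.card β) ^ (Fintype.card α - Fintype.card ι) := by
  classical
  have e1 : {v : α → β // ∀ x, v (g x) = b₀} ≃ ({a : α // a ∉ Set.range g} → β) := by
    refine ⟨fun v a => v.1 a.1,
      fun w => ⟨fun a => if h : a ∈ Set.range g then b₀ else w ⟨a, h⟩, fun x => dif_pos ⟨x, rfl⟩⟩,
      fun v => Subtype.ext (funext fun a => ?_), fun w => funext fun a => dif_neg a.2⟩
    by_cases h : a ∈ Set.range g
    · obtain ⟨x, rfl⟩ := h
      simp [v.2 x]
    · simp [h]
  have ecard : Fintype.card {a : α // a ∈ Set.range g} = Fintype.card ι :=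
    (Fintype.card_congr (Equiv.ofInjective g hg).symm)
  rw [Nat.card_congr e1, Nat.card_eq_fintype_card, Fintype.card_fun,
    Fintype.card_subtype_compl, ecard]

end CardLemmas

section GenericEquivs

variable {α β : Type*} {P : α → Prop} {R : α → β → Prop}

def fiberFst : {x : α × β // P x.1 ∧ R x.1 x.2} ≃ (a : Subtype P) × {b : β // R a.1 b} where
  toFun x := ⟨⟨x.1.1, x.2.1⟩, ⟨x.1.2, x.2.2⟩⟩
  invFun y := ⟨(y.1.1, y.2.1), y.1.2, y.2.2⟩
  left_inv x := rfl
  right_inv y := rfl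

def fiberSnd : {x : α × β // P x.1 ∧ R x.1 x.2} ≃ (b : β) × {a : α // P a ∧ R a b} where
  toFun x := ⟨x.1.2, ⟨x.1.1, x.2⟩⟩
  invFun y := ⟨(y.2.1, y.1), y.2.2⟩
  left_inv x := rfl
  right_inv y := rfl

end GenericEquivs

section Main

variable {k N j : ℕ}

lemma card_compat [NeZero k] (hk : 2 ≤ k) (π : Equiv.Perm (Fin N)) :
    Nat.card {g : Fin j × Fin k → Fin N //
        Function.Injective g ∧ ∀ x, π (g x) = g (x.1, x.2 + 1)} =
      Nat.card {p : Fin j → Fin N // (∀ i, (π.cycleOf (p i)).support.card = k) ∧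
        Function.Injective (fun i => π.cycleOf (p i))} := by
  classical
  have hk0 : 0 < k := by omega
  have hone : ((1 : Fin k) : ℕ) = 1 := by
    rw [Fin.val_one']; exact Nat.mod_eq_of_lt hk
  have hvadd : ∀ t : Fin k, ((t + 1 : Fin k) : ℕ) = ((t : ℕ) + 1) % k := by
    intro t; rw [Fin.val_add, hone]
  -- facts about compatible g
  have key_g : ∀ (g : Fin j × Fin k → Fin N), (∀ x, π (g x) = g (x.1, x.2 + 1)) →
      ∀ (i : Fin j) (s : ℕ) (hs : s < k), (π ^ s) (g (i, 0)) = g (i, ⟨s, hs⟩) := by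
    intro g hgc i s
    induction s with
    | zero => intro hs; exact congrArg g (Prod.ext rfl (Fin.ext (by simp)))
    | succ s ih =>
      intro hs
      have hs' : s < k := by omega
      rw [pow_succ', Equiv.Perm.mul_apply, ih hs', hgc]
      exact congrArg g (Prod.ext rfl (Fin.ext (by
        rw [hvadd]; exact Nat.mod_eq_of_lt hs)))
  have key_g2 : ∀ (g : Fin j × Fin k → Fin N), (∀ x, π (g x) = g (x.1, x.2 + 1)) →
      ∀ i : Fin j, (π ^ k) (g (i, 0)) = g (i, 0) := by
    intro g hgc i
    have h1 : π ^ k = π * π ^ (k - 1) := by rw [← pow_succ']; congr 1; omega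
    rw [h1, Equiv.Perm.mul_apply, key_g g hgc i (k - 1) (by omega), hgc]
    exact congrArg g (Prod.ext rfl (Fin.ext (by
      rw [hvadd, Fin.val_zero, Nat.sub_add_cancel (by omega : 1 ≤ k), Nat.mod_self])))
  have key_g3 : ∀ (g : Fin j × Fin k → Fin N), (∀ x, π (g x) = g (x.1, x.2 + 1)) →
      ∀ (i : Fin j) (s : ℕ), (π ^ s) (g (i, 0)) = g (i, ⟨s % k, Nat.mod_lt _ hk0⟩) := by
    intro g hgc i s
    rw [pow_apply_mod π _ (key_g2 g hgc i) s, key_g g hgc i (s % k) (Nat.mod_lt _ hk0)]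
  have mem_supp : ∀ (g : Fin j × Fin k → Fin N), Function.Injective g →
      (∀ x, π (g x) = g (x.1, x.2 + 1)) → ∀ i : Fin j, g (i, 0) ∈ π.support := by
    intro g hgi hgc i
    rw [Equiv.Perm.mem_support, hgc (i, 0)]
    intro h
    have h2 := (Prod.ext_iff.1 (hgi h)).2
    rw [Fin.ext_iff, hvadd, Fin.val_zero, Nat.mod_eq_of_lt (by omega : 0 + 1 < k)] at h2
    exact absurd h2 (by omega)
  have supp_eq : ∀ (g : Fin j × Fin k → Fin N), Function.Injective g →
      (∀ x, π (g x) = g (x.1, x.2 + 1)) → ∀ i : Fin j,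
      (π.cycleOf (g (i, 0))).support = (univ : Finset (Fin k)).image (fun t => g (i, t)) := by
    intro g hgi hgc i
    ext y
    constructor
    · intro hy
      rw [Equiv.Perm.mem_support_cycleOf_iff] at hy
      obtain ⟨s, -, rfl⟩ := hy.1.exists_pow_eq'
      rw [key_g3 g hgc i s]
      exact Finset.mem_image.2 ⟨_, Finset.mem_univ _, rfl⟩
    · intro hy
      obtain ⟨t, -, rfl⟩ := Finset.mem_image.1 hy
      rw [Equiv.Perm.mem_support_cycleOf_iff]
      refine ⟨⟨(t : ℕ), ?_⟩, mem_supp g hgi hgc i⟩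
      rw [zpow_natCast, key_g g hgc i (t : ℕ) t.2]
  -- facts about the p side
  have pP0 : ∀ (p : Fin j → Fin N), (∀ i, (π.cycleOf (p i)).support.card = k) →
      ∀ i, π (p i) ≠ p i := by
    intro p hc i h
    have h1 := hc i
    rw [(Equiv.Perm.cycleOf_eq_one_iff π).2 h] at h1
    simp only [Equiv.Perm.support_one, Finset.card_empty] at h1
    omega
  have pP1 : ∀ (p : Fin j → Fin N), (∀ i, (π.cycleOf (p i)).support.card = k) →
      ∀ i, (π ^ k) (p i) = p i := by
    intro p hc i
    have hcy : (π.cycleOf (p i)).IsCycle := Equiv.Perm.isCycle_cycleOf π (pP0 p hc i)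
    have ho : orderOf (π.cycleOf (p i)) = k := by rw [hcy.orderOf, hc i]
    rw [← Equiv.Perm.cycleOf_pow_apply_self π (p i) k, ← ho, pow_orderOf_eq_one]
    rfl
  have pP2 : ∀ (p : Fin j → Fin N), (∀ i, (π.cycleOf (p i)).support.card = k) →
      ∀ (i : Fin j) (t t' : ℕ), t < k → t' < k → (π ^ t) (p i) = (π ^ t') (p i) → t = t' := by
    intro p hc
    suffices aux : ∀ (i : Fin j) (t t' : ℕ), t ≤ t' → t' < k →
        (π ^ t) (p i) = (π ^ t') (p i) → t = t' by
      intro i t t' ht ht' h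
      rcases le_total t t' with h1 | h1
      · exact aux i t t' h1 ht' h
      · exact (aux i t' t h1 ht h.symm).symm
    intro i t t' htt ht' heq
    by_contra hne
    set d := t' - t with hd
    have hdpos : 0 < d := by omega
    have hb : (π ^ d) ((π ^ t) (p i)) = (π ^ t) (p i) := by
      rw [← Equiv.Perm.mul_apply, ← pow_add]
      have hdt : d + t = t' := by omega
      rw [hdt, ← heq]
    set b := (π ^ t) (p i) with hbdef
    have hcb : π.cycleOf b = π.cycleOf (p i) := Equiv.Perm.cycleOf_self_apply_pow π t (p i)
    have hsub : (π.cycleOf b).support ⊆ (Finset.range d).image (fun s => (π ^ s) b) := by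
      intro y hy
      rw [Equiv.Perm.mem_support_cycleOf_iff] at hy
      obtain ⟨s, -, rfl⟩ := hy.1.exists_pow_eq'
      rw [pow_apply_mod π b hb s]
      exact Finset.mem_image.2 ⟨s % d, Finset.mem_range.2 (Nat.mod_lt _ hdpos), rfl⟩
    have hcard := Finset.card_le_card hsub
    rw [hcb, hc i] at hcard
    have hile := Finset.card_image_le (s := Finset.range d) (f := fun s => (π ^ s) b)
    rw [Finset.card_range] at hile
    omega
  refine Nat.card_congr
    ⟨fun g => ⟨fun i => g.1 (i, 0), ?_, ?_⟩,
     fun p => ⟨fun x => (π ^ (x.2 : ℕ)) (p.1 x.1), ?_, ?_⟩, ?_, ?_⟩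
  · -- cards
    intro i
    rw [supp_eq g.1 g.2.1 g.2.2 i]
    have hinj : Function.Injective (fun t : Fin k => g.1 (i, t)) := by
      intro a b h
      exact (Prod.ext_iff.1 (g.2.1 h)).2
    rw [Finset.card_image_of_injective _ hinj, Finset.card_univ, Fintype.card_fin]
  · -- injectivity of cycles
    intro a b h
    have ha : g.1 (a, 0) ∈ (π.cycleOf (g.1 (a, 0))).support :=
      Equiv.Perm.mem_support_cycleOf_iff.2 ⟨Equiv.Perm.SameCycle.refl _ _,
        mem_supp g.1 g.2.1 g.2.2 a⟩
    rw [show π.cycleOf (g.1 (a, 0)) = π.cycleOf (g.1 (b, 0)) from h] at ha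
    rw [supp_eq g.1 g.2.1 g.2.2 b] at ha
    obtain ⟨t, -, ht⟩ := Finset.mem_image.1 ha
    exact ((Prod.ext_iff.1 (g.2.1 ht)).1).symm
  · -- injectivity of constructed g
    rintro ⟨a, t⟩ ⟨b, s⟩ h
    simp only at h
    have hca : π.cycleOf ((π ^ (t : ℕ)) (p.1 a)) = π.cycleOf (p.1 a) :=
      Equiv.Perm.cycleOf_self_apply_pow π _ _
    have hcb : π.cycleOf ((π ^ (s : ℕ)) (p.1 b)) = π.cycleOf (p.1 b) :=
      Equiv.Perm.cycleOf_self_apply_pow π _ _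
    have hab : a = b := by
      apply p.2.2
      simp only
      rw [← hca, ← hcb, h]
    subst hab
    have hts : (t : ℕ) = (s : ℕ) := pP2 p.1 p.2.1 a _ _ t.2 s.2 h
    exact Prod.ext rfl (Fin.ext hts)
  · -- compatibility of constructed g
    rintro ⟨i, t⟩
    simp only
    rw [hvadd, ← pow_apply_mod π _ (pP1 p.1 p.2.1 i) ((t : ℕ) + 1), pow_succ',
      Equiv.Perm.mul_apply]
  · -- left inverse
    rintro ⟨g, hgi, hgc⟩
    refine Subtype.ext (funext ?_)
    rintro ⟨i, t⟩
    simp only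
    rw [key_g g hgc i (t : ℕ) t.2]
  · -- right inverse
    rintro ⟨p, hp⟩
    refine Subtype.ext (funext fun i => ?_)
    simp

end Main



lemma cycleType_count_eq {α : Type*} [Fintype α] [DecidableEq α] (π : Equiv.Perm α) (k : ℕ) :
    π.cycleType.count k =
      (π.cycleFactorsFinset.filter (fun c => c.support.card = k)).card := by
  classical
  rw [Equiv.Perm.cycleType_def, Multiset.count_map]
  rw [show (π.cycleFactorsFinset.filter (fun c => c.support.card = k)).card =
    Multiset.card (π.cycleFactorsFinset.1.filter (fun c => c.support.card = k)) from rfl]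
  congr 1
  apply Multiset.filter_congr
  intro c _
  simp [eq_comm, Function.comp]

variable {k N j : ℕ}

lemma card_pcond (hk : 2 ≤ k) (π : Equiv.Perm (Fin N)) :
    Nat.card {p : Fin j → Fin N // (∀ i, (π.cycleOf (p i)).support.card = k) ∧
        Function.Injective (fun i => π.cycleOf (p i))} =
      (π.cycleType.count k).descFactorial j * k ^ j := by
  classical
  set KC := π.cycleFactorsFinset.filter (fun c => c.support.card = k) with hKC
  have hmemsupp : ∀ x : Fin N, (π.cycleOf x).support.card = k → x ∈ π.support := by
    intro x hx
    by_contra h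
    rw [Equiv.Perm.notMem_support] at h
    rw [(Equiv.Perm.cycleOf_eq_one_iff π).2 h] at hx
    simp only [Equiv.Perm.support_one, Finset.card_empty] at hx
    omega
  have e1 : {p : Fin j → Fin N // (∀ i, (π.cycleOf (p i)).support.card = k) ∧
        Function.Injective (fun i => π.cycleOf (p i))} ≃
      {x : (Fin j → Equiv.Perm (Fin N)) × (Fin j → Fin N) //
        (Function.Injective x.1 ∧ ∀ i, x.1 i ∈ KC) ∧ ∀ i, x.2 i ∈ (x.1 i).support} := by
    refine ⟨fun p => ⟨(fun i => π.cycleOf (p.1 i), p.1), ⟨⟨p.2.2, fun i => ?_⟩, fun i => ?_⟩⟩,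
      fun x => ⟨x.1.2, ?_, ?_⟩, fun p => Subtype.ext rfl, fun x => Subtype.ext ?_⟩
    · exact Finset.mem_filter.2 ⟨Equiv.Perm.cycleOf_mem_cycleFactorsFinset_iff.2
        (hmemsupp _ (p.2.1 i)), p.2.1 i⟩
    · exact Equiv.Perm.mem_support_cycleOf_iff.2
        ⟨Equiv.Perm.SameCycle.refl _ _, hmemsupp _ (p.2.1 i)⟩
    · intro i
      rw [← Equiv.Perm.cycle_is_cycleOf (x.2.2 i) (Finset.mem_filter.1 (x.2.1.2 i)).1]
      exact (Finset.mem_filter.1 (x.2.1.2 i)).2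
    · have : (fun i => π.cycleOf (x.1.2 i)) = x.1.1 := funext fun i =>
        (Equiv.Perm.cycle_is_cycleOf (x.2.2 i) (Finset.mem_filter.1 (x.2.1.2 i)).1).symm
      rw [this]
      exact x.2.1.1
    · refine Prod.ext (funext fun i =>
        (Equiv.Perm.cycle_is_cycleOf (x.2.2 i) (Finset.mem_filter.1 (x.2.1.2 i)).1).symm) rfl
  rw [Nat.card_congr (e1.trans (fiberFst (P := fun F : Fin j → Equiv.Perm (Fin N) => Function.Injective F ∧ ∀ i, F i ∈ KC) (R := fun F (pts : Fin j → Fin N) => ∀ i, pts i ∈ (F i).support))), Nat.card_eq_fintype_card, Fintype.card_sigma]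
  have hfiber : ∀ F : {F : Fin j → Equiv.Perm (Fin N) //
      Function.Injective F ∧ ∀ i, F i ∈ KC},
      Fintype.card {pts : Fin j → Fin N // ∀ i, pts i ∈ (F.1 i).support} = k ^ j := by
    intro F
    rw [Fintype.card_congr (Equiv.subtypePiEquivPi), Fintype.card_pi]
    have hc : ∀ i, Fintype.card {b : Fin N // b ∈ (F.1 i).support} = k := by
      intro i
      rw [Fintype.card_coe]
      exact (Finset.mem_filter.1 (F.2.2 i)).2
    rw [Finset.prod_congr rfl (fun i _ => hc i), Finset.prod_const, Finset.card_univ,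
      Fintype.card_fin]
  rw [Finset.sum_congr rfl (fun F _ => hfiber F), Finset.sum_const, Finset.card_univ,
    smul_eq_mul, ← Nat.card_eq_fintype_card, card_inj_mem, Fintype.card_fin,
    cycleType_count_eq π k]

lemma lemA {k n : ℕ} (j : ℕ) (hk : 2 ≤ k) (hj : j ≤ n) :
    (∑ π : Equiv.Perm (Fin (k * n)), ((π.cycleType.count k).choose j)) *
      (k ^ j * j.factorial) = (k * n).factorial := by
  classical
  haveI : NeZero k := ⟨by omega⟩
  have hjk : j * k ≤ k * n := by
    rw [mul_comm]
    exact Nat.mul_le_mul_left k hj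
  set Q := {x : ((Fin j × Fin k) → Fin (k * n)) × Equiv.Perm (Fin (k * n)) //
      Function.Injective x.1 ∧ ∀ s, x.2 (x.1 s) = x.1 (s.1, s.2 + 1)} with hQ
  have h1 : Nat.card Q = ((k * n).descFactorial (j * k)) * (k * n - j * k).factorial := by
    rw [Nat.card_congr (fiberFst (P := fun g : (Fin j × Fin k) → Fin (k * n) =>
      Function.Injective g)
      (R := fun g (π : Equiv.Perm (Fin (k * n))) => ∀ s, π (g s) = g (s.1, s.2 + 1))),
      Nat.card_eq_fintype_card, Fintype.card_sigma]
    have hfib : ∀ gg : {g : (Fin j × Fin k) → Fin (k * n) // Function.Injective g},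
        Fintype.card {π : Equiv.Perm (Fin (k * n)) // ∀ s, π (gg.1 s) = gg.1 (s.1, s.2 + 1)} =
          (k * n - j * k).factorial := by
      intro gg
      rw [← Nat.card_eq_fintype_card]
      have hca := card_perm_agree ((Equiv.refl (Fin j)).prodCongr (Equiv.addRight (1 : Fin k)))
        gg.1 gg.2
      rw [Fintype.card_fin, Fintype.card_prod, Fintype.card_fin, Fintype.card_fin] at hca
      rw [← hca]
      apply Nat.card_congr
      apply Equiv.subtypeEquivRight
      intro π
      constructor
      · intro h s; rw [h s]; rfl
      · intro h s; rw [h s]; rfl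
    rw [Finset.sum_congr rfl (fun gg _ => hfib gg), Finset.sum_const, Finset.card_univ,
      smul_eq_mul, ← Nat.card_eq_fintype_card, card_inj, Fintype.card_fin,
      Fintype.card_prod, Fintype.card_fin, Fintype.card_fin]
  have h2 : Nat.card Q = ∑ π : Equiv.Perm (Fin (k * n)),
      ((π.cycleType.count k).descFactorial j * k ^ j) := by
    rw [Nat.card_congr (fiberSnd (P := fun g : (Fin j × Fin k) → Fin (k * n) =>
      Function.Injective g)
      (R := fun g (π : Equiv.Perm (Fin (k * n))) => ∀ s, π (g s) = g (s.1, s.2 + 1))),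
      Nat.card_eq_fintype_card, Fintype.card_sigma]
    apply Finset.sum_congr rfl
    intro π _
    rw [← Nat.card_eq_fintype_card, card_compat hk π, card_pcond hk π]
  have h3 : (k * n).descFactorial (j * k) * (k * n - j * k).factorial = (k * n).factorial := by
    rw [mul_comm]
    exact Nat.factorial_mul_descFactorial hjk
  rw [← h3, ← h1, h2]
  rw [Finset.sum_mul]
  apply Finset.sum_congr rfl
  intro π _
  rw [Nat.descFactorial_eq_factorial_mul_choose]
  ring

/-- the fixed-point statistic on the generalized symmetric group -/
noncomputable def statD (k r : ℕ) (x : (Fin r → ZMod k) × Equiv.Perm (Fin r)) : ℕ :=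
  (Finset.univ.filter (fun a => x.2 a = a ∧ x.1 a = 0)).card

lemma lemB {k r : ℕ} [NeZero k] (i : ℕ) (hk : 2 ≤ k) (hi : i ≤ r) :
    (∑ x : (Fin r → ZMod k) × Equiv.Perm (Fin r), ((statD k r x).choose i)) * i.factorial =
      r.choose i * i.factorial * (k ^ (r - i) * (r - i).factorial) := by
  classical
  set QB := {y : (Fin i → Fin r) × ((Fin r → ZMod k) × Equiv.Perm (Fin r)) //
      Function.Injective y.1 ∧ ∀ s, y.2.2 (y.1 s) = y.1 s ∧ y.2.1 (y.1 s) = 0} with hQB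
  have h1 : Nat.card QB = r.descFactorial i * (k ^ (r - i) * (r - i).factorial) := by
    rw [Nat.card_congr (fiberFst (P := fun g : Fin i → Fin r => Function.Injective g)
      (R := fun g (x : (Fin r → ZMod k) × Equiv.Perm (Fin r)) =>
        ∀ s, x.2 (g s) = g s ∧ x.1 (g s) = 0)),
      Nat.card_eq_fintype_card, Fintype.card_sigma]
    have hfib : ∀ gg : {g : Fin i → Fin r // Function.Injective g},
        Fintype.card {x : (Fin r → ZMod k) × Equiv.Perm (Fin r) //
          ∀ s, x.2 (gg.1 s) = gg.1 s ∧ x.1 (gg.1 s) = 0} =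
        k ^ (r - i) * (r - i).factorial := by
      intro gg
      have e1 : {x : (Fin r → ZMod k) × Equiv.Perm (Fin r) //
          ∀ s, x.2 (gg.1 s) = gg.1 s ∧ x.1 (gg.1 s) = 0} ≃
          {v : Fin r → ZMod k // ∀ s, v (gg.1 s) = 0} ×
          {σ : Equiv.Perm (Fin r) // ∀ s, σ (gg.1 s) = gg.1 s} := by
        refine (Equiv.subtypeEquivRight (fun x => ?_)).trans
          (Equiv.subtypeProdEquivProd (p := fun v : Fin r → ZMod k => ∀ s, v (gg.1 s) = 0)
            (q := fun σ : Equiv.Perm (Fin r) => ∀ s, σ (gg.1 s) = gg.1 s))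
        constructor
        · intro h; exact ⟨fun s => (h s).2, fun s => (h s).1⟩
        · intro h s; exact ⟨h.2 s, h.1 s⟩
      rw [Fintype.card_congr e1, Fintype.card_prod, ← Nat.card_eq_fintype_card,
        ← Nat.card_eq_fintype_card]
      have hv := card_fun_zero gg.1 gg.2 (0 : ZMod k)
      have hp := card_perm_fixed gg.1 gg.2
      simp only [Fintype.card_fin, ZMod.card] at hv hp
      rw [hv, hp]
    rw [Finset.sum_congr rfl (fun gg _ => hfib gg), Finset.sum_const, Finset.card_univ,
      smul_eq_mul, ← Nat.card_eq_fintype_card, card_inj, Fintype.card_fin, Fintype.card_fin]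
  have h2 : Nat.card QB = ∑ x : (Fin r → ZMod k) × Equiv.Perm (Fin r),
      ((statD k r x).descFactorial i) := by
    rw [Nat.card_congr (fiberSnd (P := fun g : Fin i → Fin r => Function.Injective g)
      (R := fun g (x : (Fin r → ZMod k) × Equiv.Perm (Fin r)) =>
        ∀ s, x.2 (g s) = g s ∧ x.1 (g s) = 0)),
      Nat.card_eq_fintype_card, Fintype.card_sigma]
    apply Finset.sum_congr rfl
    intro x _
    rw [← Nat.card_eq_fintype_card]
    have e2 : {g : Fin i → Fin r // Function.Injective g ∧
        ∀ s, x.2 (g s) = g s ∧ x.1 (g s) = 0} ≃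
        {g : Fin i → Fin r // Function.Injective g ∧
          ∀ s, g s ∈ Finset.univ.filter (fun a => x.2 a = a ∧ x.1 a = 0)} := by
      apply Equiv.subtypeEquivRight
      intro g
      simp only [Finset.mem_filter, Finset.mem_univ, true_and]
    rw [Nat.card_congr e2, card_inj_mem, Fintype.card_fin]
    rfl
  have h4 := h1.symm.trans h2
  rw [Finset.sum_congr rfl (fun x _ => Nat.descFactorial_eq_factorial_mul_choose (statD k r x) i),
    ← Finset.mul_sum, Nat.descFactorial_eq_factorial_mul_choose r i] at h4
  calc (∑ x : (Fin r → ZMod k) × Equiv.Perm (Fin r), ((statD k r x).choose i)) * i.factorial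
      = i.factorial * ∑ x : (Fin r → ZMod k) × Equiv.Perm (Fin r), ((statD k r x).choose i) := by
        ring
    _ = r.choose i * i.factorial * (k ^ (r - i) * (r - i).factorial) := by rw [← h4]; ring

lemma choose_mul_choose (t m i : ℕ) :
    t.choose (m + i) * (m + i).choose m = t.choose m * (t - m).choose i := by
  by_cases h : m + i ≤ t
  · have hm : m ≤ t := le_trans (Nat.le_add_right m i) h
    have hi : i ≤ t - m := by omega
    have hA := Nat.choose_mul_factorial_mul_factorial (show m ≤ m + i from Nat.le_add_right m i)
    have hB := Nat.choose_mul_factorial_mul_factorial h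
    have hC := Nat.choose_mul_factorial_mul_factorial hm
    have hD := Nat.choose_mul_factorial_mul_factorial hi
    rw [Nat.add_sub_cancel_left] at hA
    have hsub : t - (m + i) = t - m - i := by omega
    rw [hsub] at hB
    apply Nat.eq_of_mul_eq_mul_right
      (show 0 < m.factorial * (i.factorial * (t - m - i).factorial) by positivity)
    have expand : ∀ a b : ℕ, a = b → a = b := fun _ _ h => h
    zify at hA hB hC hD ⊢
    linear_combination (t.choose (m + i) : ℤ) * (t - m - i).factorial * hA +
      hB - hC - (t.choose m : ℤ) * m.factorial * hD
  · push_neg at h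
    rw [Nat.choose_eq_zero_of_lt h, zero_mul]
    rcases le_or_gt m t with hm | hm
    · rw [Nat.choose_eq_zero_of_lt (show t - m < i by omega), mul_zero]
    · rw [Nat.choose_eq_zero_of_lt hm, zero_mul]

lemma alt_sum (n m t : ℕ) (ht : t ≤ n) :
    ∑ i ∈ Finset.range (n - m + 1),
      (-1 : ℤ) ^ i * ((m + i).choose m) * (t.choose (m + i)) =
      if t = m then 1 else 0 := by
  have hterm : ∀ i : ℕ, (((m + i).choose m : ℤ)) * (t.choose (m + i)) =
      (t.choose m : ℤ) * ((t - m).choose i) := by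
    intro i
    rw [mul_comm]
    exact_mod_cast congrArg (Nat.cast (R := ℤ)) (choose_mul_choose t m i)
  have h1 : ∑ i ∈ Finset.range (n - m + 1),
      (-1 : ℤ) ^ i * ((m + i).choose m) * (t.choose (m + i)) =
      (t.choose m : ℤ) * ∑ i ∈ Finset.range (n - m + 1), (-1 : ℤ) ^ i * ((t - m).choose i) := by
    rw [Finset.mul_sum]
    apply Finset.sum_congr rfl
    intro i _
    rw [mul_assoc, hterm i]
    ring
  rw [h1]
  rcases Nat.lt_trichotomy t m with hlt | heq | hgt
  · rw [Nat.choose_eq_zero_of_lt hlt, if_neg (by omega)]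
    simp
  · subst heq
    rw [if_pos rfl, Nat.choose_self, Nat.sub_self, Nat.cast_one, one_mul]
    rw [Finset.sum_eq_single 0]
    · simp
    · intro b _ hb
      rw [Nat.choose_eq_zero_of_lt (by omega : 0 < b)]
      simp
    · intro habs
      exact absurd (Finset.mem_range.2 (by omega)) habs
  · rw [if_neg (by omega)]
    have hd : 0 < t - m := by omega
    have hsub : ∑ i ∈ Finset.range (t - m + 1), (-1 : ℤ) ^ i * ((t - m).choose i) =
        ∑ i ∈ Finset.range (n - m + 1), (-1 : ℤ) ^ i * ((t - m).choose i) := by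
      apply Finset.sum_subset
      · apply Finset.range_subset_range.2; omega
      · intro x _ hx
        rw [Finset.mem_range] at hx
        rw [Nat.choose_eq_zero_of_lt (by omega)]
        simp
    rw [← hsub, Int.alternating_sum_range_choose_of_ne (by omega)]
    simp

lemma inversion {X : Type*} [Fintype X] (stat : X → ℕ) (n m : ℕ)
    (hs : ∀ x, stat x ≤ n) (hm : m ≤ n) :
    (Nat.card {x : X // stat x = m} : ℤ) =
      ∑ i ∈ Finset.range (n - m + 1), (-1 : ℤ) ^ i * ((m + i).choose m) *
        (∑ x : X, ((stat x).choose (m + i) : ℤ)) := by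
  classical
  have hrhs : ∑ i ∈ Finset.range (n - m + 1), (-1 : ℤ) ^ i * ((m + i).choose m) *
      (∑ x : X, ((stat x).choose (m + i) : ℤ)) =
      ∑ x : X, ∑ i ∈ Finset.range (n - m + 1),
        (-1 : ℤ) ^ i * ((m + i).choose m) * ((stat x).choose (m + i)) := by
    simp_rw [Finset.mul_sum]
    rw [Finset.sum_comm]
  rw [hrhs]
  have hx : ∀ x : X, ∑ i ∈ Finset.range (n - m + 1),
      (-1 : ℤ) ^ i * ((m + i).choose m) * ((stat x).choose (m + i)) =
      if stat x = m then 1 else 0 := fun x => alt_sum n m (stat x) (hs x)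
  rw [Finset.sum_congr rfl (fun x _ => hx x), Finset.sum_boole,
    Nat.card_eq_fintype_card, Fintype.card_subtype]

lemma statC_le {k n : ℕ} (hk : 2 ≤ k) (π : Equiv.Perm (Fin (k * n))) :
    π.cycleType.count k ≤ n := by
  have h1 : π.cycleType.count k * k ≤ π.cycleType.sum := by
    conv_rhs => rw [← Multiset.filter_add_not (fun x => x = k) π.cycleType]
    rw [Multiset.sum_add]
    have hf : (π.cycleType.filter (fun x => x = k)).sum = π.cycleType.count k * k := by
      rw [Multiset.filter_eq', Multiset.sum_replicate, smul_eq_mul]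
    omega
  have h2 := Equiv.Perm.sum_cycleType π
  have h3 : π.support.card ≤ k * n := by
    calc π.support.card ≤ (Finset.univ : Finset (Fin (k * n))).card := Finset.card_le_univ _
    _ = k * n := by rw [Finset.card_univ, Fintype.card_fin]
  have h4 : π.cycleType.count k * k ≤ k * n := by omega
  have h5 : k * π.cycleType.count k ≤ k * n := by
    rw [mul_comm k]
    omega
  exact Nat.le_of_mul_le_mul_left h5 (by omega)

lemma D_eq_s13 (k r : ℕ) :
    D k r = Nat.card {x : (Fin r → ZMod k) × Equiv.Perm (Fin r) // statD k r x = 0} := by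
  classical
  apply Nat.card_congr
  apply Equiv.subtypeEquivRight
  intro x
  unfold statD
  rw [Finset.card_eq_zero, Finset.filter_eq_empty_iff]
  constructor
  · intro h a _ hand
    rcases h a with h' | h'
    · exact h' hand.1
    · exact h' hand.2
  · intro h a
    by_cases ha : x.2 a = a
    · exact Or.inr fun hz => h (Finset.mem_univ a) ⟨ha, hz⟩
    · exact Or.inl ha

theorem stmt13 (k n m : ℕ) (hk : 2 ≤ k) (hm : m ≤ n) :
    k ^ n * n.factorial * C k (k * n) m =
      (k * n).factorial * n.choose m * D k (n - m) := by
  classical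
  haveI : NeZero k := ⟨by omega⟩
  -- C-side inversion
  have hC : (C k (k * n) m : ℤ) =
      ∑ i ∈ Finset.range ((n - m) + 1), (-1 : ℤ) ^ i * ((m + i).choose m) *
        (∑ π : Equiv.Perm (Fin (k * n)), ((π.cycleType.count k).choose (m + i) : ℤ)) := by
    have e : C k (k * n) m = Nat.card {π : Equiv.Perm (Fin (k * n)) //
        (fun π : Equiv.Perm (Fin (k * n)) => π.cycleType.count k) π = m} := rfl
    rw [e]
    exact inversion (fun π : Equiv.Perm (Fin (k * n)) => π.cycleType.count k) n m
      (fun π => statC_le hk π) hm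
  -- D-side inversion
  have hD : (D k (n - m) : ℤ) =
      ∑ i ∈ Finset.range ((n - m) + 1), (-1 : ℤ) ^ i * (((n - m).choose i : ℤ) *
        ((k : ℤ) ^ ((n - m) - i) * (((n - m) - i).factorial : ℤ))) := by
    have h0 := inversion (statD k (n - m)) (n - m) 0
      (fun x => le_trans (Finset.card_filter_le _ _) (by simp)) (Nat.zero_le _)
    simp only [Nat.sub_zero, Nat.zero_add, Nat.choose_zero_right, Nat.cast_one, mul_one] at h0
    rw [D_eq_s13, h0]
    apply Finset.sum_congr rfl
    intro i hi
    have hle : i ≤ n - m := by have := Finset.mem_range.1 hi; omega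
    have hBi : (∑ x : (Fin (n - m) → ZMod k) × Equiv.Perm (Fin (n - m)),
        ((statD k (n - m) x).choose i)) =
        (n - m).choose i * (k ^ ((n - m) - i) * ((n - m) - i).factorial) := by
      apply Nat.eq_of_mul_eq_mul_right (Nat.factorial_pos i)
      rw [lemB i hk hle]
      ring
    have hBiz : (∑ x : (Fin (n - m) → ZMod k) × Equiv.Perm (Fin (n - m)),
        ((statD k (n - m) x).choose i : ℤ)) =
        ((n - m).choose i : ℤ) * ((k : ℤ) ^ ((n - m) - i) * (((n - m) - i).factorial : ℤ)) := by
      exact_mod_cast congrArg (Nat.cast (R := ℤ)) hBi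
    rw [hBiz]
  -- key termwise identity in ℚ
  have key : ∀ i, i ≤ n - m →
      ((k : ℚ) ^ n * (n.factorial : ℚ) * (((m + i).choose m : ℕ) : ℚ) *
        (∑ π : Equiv.Perm (Fin (k * n)), ((π.cycleType.count k).choose (m + i) : ℚ))) =
      (((k * n).factorial : ℕ) : ℚ) * ((n.choose m : ℕ) : ℚ) *
        ((((n - m).choose i : ℕ) : ℚ) *
          ((k : ℚ) ^ ((n - m) - i) * ((((n - m) - i).factorial : ℕ) : ℚ))) := by
    intro i hi
    have hAi := lemA (k := k) (n := n) (m + i) hk (by omega)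
    have hsum : (∑ π : Equiv.Perm (Fin (k * n)), ((π.cycleType.count k).choose (m + i) : ℚ)) =
        (((k * n).factorial : ℕ) : ℚ) / ((k : ℚ) ^ (m + i) * (((m + i).factorial : ℕ) : ℚ)) := by
      rw [eq_div_iff (by positivity)]
      exact_mod_cast hAi
    rw [hsum]
    have hks : (k : ℚ) ^ n = (k : ℚ) ^ (m + i) * (k : ℚ) ^ ((n - m) - i) := by
      rw [← pow_add]; congr 1; omega
    rw [Nat.cast_choose ℚ (show m ≤ m + i by omega), Nat.cast_choose ℚ hm,
      Nat.cast_choose ℚ hi, Nat.add_sub_cancel_left, hks]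
    have hne : ∀ t : ℕ, ((t.factorial : ℕ) : ℚ) ≠ 0 :=
      fun t => Nat.cast_ne_zero.2 (Nat.factorial_ne_zero t)
    have hkne : (k : ℚ) ≠ 0 := Nat.cast_ne_zero.2 (by omega)
    field_simp
  -- assemble
  have hCQ : (C k (k * n) m : ℚ) =
      ∑ i ∈ Finset.range ((n - m) + 1), (-1 : ℚ) ^ i * (((m + i).choose m : ℕ) : ℚ) *
        (∑ π : Equiv.Perm (Fin (k * n)), ((π.cycleType.count k).choose (m + i) : ℚ)) := by
    exact_mod_cast hC
  have hDQ : (D k (n - m) : ℚ) =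
      ∑ i ∈ Finset.range ((n - m) + 1), (-1 : ℚ) ^ i * ((((n - m).choose i : ℕ) : ℚ) *
        ((k : ℚ) ^ ((n - m) - i) * ((((n - m) - i).factorial : ℕ) : ℚ))) := by
    exact_mod_cast hD
  have main : ((k ^ n * n.factorial * C k (k * n) m : ℕ) : ℚ) =
      (((k * n).factorial * n.choose m * D k (n - m) : ℕ) : ℚ) := by
    push_cast
    rw [hCQ, hDQ, Finset.mul_sum, Finset.mul_sum]
    apply Finset.sum_congr rfl
    intro i hi
    have hle : i ≤ n - m := by have := Finset.mem_range.1 hi; omega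
    have hk2 := key i hle
    push_cast at hk2 ⊢
    linear_combination ((-1 : ℚ) ^ i) * hk2
  exact_mod_cast main
end

section
/- For all integers k ≥ 1 and n ≥ 1 with k not dividing n, there exists a bijection φ : S_{n-1} × {1,…,n} → S_n such that for every permutation π ∈ S_{n-1} and every x ∈ {1,…,n}, the number of k-cycles in the cycle decomposition of φ(π, x) equals the number of k-cycles in the cycle decomposition of π. -/
open Equiv Equiv.Perm Finset

namespace Stmt16Aux

variable {α β γ : Type*} [DecidableEq α] [Fintype α] [DecidableEq β] [Fintype β]
  [DecidableEq γ] [Fintype γ]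

lemma cycleType_permCongr (e : β ≃ γ) (σ : Perm β) :
    (e.permCongr σ).cycleType = σ.cycleType := by
  have h : e.permCongr σ
      = σ.extendDomain (e.trans (Equiv.subtypeUnivEquiv (fun _ : γ => trivial)).symm) := by
    ext c
    rw [Perm.extendDomain_apply_subtype _ _ trivial]
    simp [Equiv.subtypeUnivEquiv]
  rw [h, Equiv.Perm.cycleType_extendDomain]

lemma card_perm_congr (e : β ≃ γ) (P : Multiset ℕ → Prop) [DecidablePred P] :
    Fintype.card {σ : Perm β // P σ.cycleType} = Fintype.card {σ : Perm γ // P σ.cycleType} :=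
  Fintype.card_congr ((e.permCongr).subtypeEquiv fun σ => by rw [cycleType_permCongr])

lemma cycleType_eq_singleton_iff {c : Perm α} {k : ℕ} :
    c.cycleType = {k} ↔ c.IsCycle ∧ c.support.card = k := by
  constructor
  · intro h
    have h1 : c.IsCycle := card_cycleType_eq_one.mp (by rw [h]; rfl)
    refine ⟨h1, ?_⟩
    have := c.sum_cycleType
    rw [h] at this
    simpa using this.symm
  · rintro ⟨h1, h2⟩
    rw [h1.cycleType, h2]

lemma count_eq_card (σ : Perm α) (k : ℕ) :
    σ.cycleType.count k
      = Fintype.card {c : Perm α // c ∈ σ.cycleFactorsFinset ∧ c.support.card = k} := by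
  rw [Fintype.card_subtype, cycleType_def, Multiset.count_map]
  have : Finset.filter (fun c => c ∈ σ.cycleFactorsFinset ∧ c.support.card = k) Finset.univ
      = Finset.filter (fun c => k = (Finset.card ∘ Equiv.Perm.support) c) σ.cycleFactorsFinset := by
    ext c
    simp [eq_comm, and_comm]
  rw [this]
  rfl

lemma key_iff {σ c : Perm α} (hσ : c ∈ σ.cycleFactorsFinset) (x : α) :
    x ∉ c.support ↔ (σ * c⁻¹) x ∉ c.support := by
  have hd := Equiv.Perm.disjoint_mul_inv_of_mem_cycleFactorsFinset hσ
  have hfix : ∀ y ∈ c.support, (σ * c⁻¹) y = y := by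
    intro y hy
    have : y ∉ (σ * c⁻¹).support := Finset.disjoint_right.mp hd.disjoint_support hy
    simpa using Equiv.Perm.notMem_support.mp this
  constructor
  · intro hx hmem
    have h1 : (σ * c⁻¹) ((σ * c⁻¹) x) = (σ * c⁻¹) x := hfix _ hmem
    have := (σ * c⁻¹).injective h1
    rw [this] at hmem
    exact hx hmem
  · intro hx hmem
    rw [hfix x hmem] at hx
    exact hx hmem

lemma h2aux {σ c : Perm α} (hσ : c ∈ σ.cycleFactorsFinset) :
    ∀ x : α, (σ * c⁻¹) x ≠ x → x ∉ c.support := by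
  intro x hx hmem
  have hd := Equiv.Perm.disjoint_mul_inv_of_mem_cycleFactorsFinset hσ
  have : x ∉ (σ * c⁻¹).support := Finset.disjoint_right.mp hd.disjoint_support hmem
  exact hx (Equiv.Perm.notMem_support.mp this)

def fiberEquiv {k : ℕ} {c : Perm α} (hc : c.cycleType = {k}) (m : ℕ) :
    {σ : Perm α // c ∈ σ.cycleFactorsFinset ∧ σ.cycleType.count k = m} ≃
    {τ : Perm {x : α // x ∉ c.support} // τ.cycleType.count k + 1 = m} where
  toFun := fun ⟨σ, hσ, hm⟩ =>
    ⟨(σ * c⁻¹).subtypePerm (fun x => (key_iff hσ x).symm), by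
      have hd := Equiv.Perm.disjoint_mul_inv_of_mem_cycleFactorsFinset hσ
      have hof : ofSubtype ((σ * c⁻¹).subtypePerm (fun x => (key_iff hσ x).symm)) = σ * c⁻¹ :=
        Equiv.Perm.ofSubtype_subtypePerm _ (h2aux hσ)
      have hmul : (σ * c⁻¹) * c = σ := by group
      have hct := hd.cycleType_mul
      rw [hmul] at hct
      have hsub : (σ * c⁻¹).cycleType = ((σ * c⁻¹).subtypePerm (p := fun x => x ∉ c.support) (fun x => (key_iff hσ x).symm)).cycleType := by
        conv_lhs => rw [← hof]
        rw [Equiv.Perm.cycleType_ofSubtype]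
      rw [hct, hc, hsub, Multiset.count_add] at hm
      simpa using hm⟩
  invFun := fun ⟨τ, hτ⟩ =>
    ⟨ofSubtype τ * c, by
      have hcyc : c.IsCycle := (cycleType_eq_singleton_iff.mp hc).1
      have hdisj : Equiv.Perm.Disjoint (ofSubtype τ) c := by
        rw [Equiv.Perm.disjoint_iff_disjoint_support, Equiv.Perm.support_ofSubtype]
        rw [Finset.disjoint_left]
        rintro x hx
        simp only [Finset.mem_map, Function.Embedding.coe_subtype] at hx
        obtain ⟨⟨y, hy⟩, -, rfl⟩ := hx
        exact hy
      constructor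
      · rw [Equiv.Perm.mem_cycleFactorsFinset_iff]
        refine ⟨hcyc, fun a ha => ?_⟩
        rw [Equiv.Perm.mul_apply, Equiv.Perm.ofSubtype_apply_of_not_mem]
        simp only [not_not]
        exact Equiv.Perm.apply_mem_support.mpr ha
      · rw [hdisj.cycleType_mul, hc, Multiset.count_add, Equiv.Perm.cycleType_ofSubtype]
        simpa using hτ⟩
  left_inv := fun ⟨σ, hσ, hm⟩ => by
    apply Subtype.ext
    show ofSubtype ((σ * c⁻¹).subtypePerm (fun x => (key_iff hσ x).symm)) * c = σ
    rw [Equiv.Perm.ofSubtype_subtypePerm _ (h2aux hσ)]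
    group
  right_inv := fun ⟨τ, hτ⟩ => by
    apply Subtype.ext
    apply Equiv.ext
    rintro ⟨x, hx⟩
    apply Subtype.ext
    have h1 : (ofSubtype τ * c) * c⁻¹ = ofSubtype τ := by group
    show ((ofSubtype τ * c) * c⁻¹) x = (τ ⟨x, hx⟩ : {x : α // x ∉ c.support}).1
    rw [h1, Equiv.Perm.ofSubtype_apply_of_mem τ hx]

lemma card_compl_support {c : Perm α} {k : ℕ} (hc : c.cycleType = {k}) :
    Fintype.card {x : α // x ∉ c.support} = Fintype.card α - k := by
  have h2 : c.support.card = k := (cycleType_eq_singleton_iff.mp hc).2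
  rw [Fintype.card_subtype_compl]
  congr 1
  rw [← h2]
  exact Fintype.card_coe c.support

lemma marked (k m : ℕ) :
    m * Fintype.card {σ : Perm α // σ.cycleType.count k = m}
      = Fintype.card {c : Perm α // c.cycleType = {k}}
        * Fintype.card {τ : Perm (Fin (Fintype.card α - k)) // τ.cycleType.count k + 1 = m} := by
  classical
  let e : (Σ σ : {σ : Perm α // σ.cycleType.count k = m},
        {c : Perm α // c ∈ σ.1.cycleFactorsFinset ∧ c.support.card = k}) ≃
      (Σ c : {c : Perm α // c.cycleType = {k}},
        {σ : Perm α // c.1 ∈ σ.cycleFactorsFinset ∧ σ.cycleType.count k = m}) :=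
    { toFun := fun ⟨⟨σ, h1⟩, ⟨c, h2, h3⟩⟩ =>
        ⟨⟨c, cycleType_eq_singleton_iff.mpr ⟨(mem_cycleFactorsFinset_iff.mp h2).1, h3⟩⟩,
          ⟨σ, h2, h1⟩⟩
      invFun := fun ⟨⟨c, h1⟩, ⟨σ, h2, h3⟩⟩ =>
        ⟨⟨σ, h3⟩, ⟨c, h2, (cycleType_eq_singleton_iff.mp h1).2⟩⟩
      left_inv := fun ⟨⟨σ, h1⟩, ⟨c, h2, h3⟩⟩ => rfl
      right_inv := fun ⟨⟨c, h1⟩, ⟨σ, h2, h3⟩⟩ => rfl }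
  have hcard := Fintype.card_congr e
  rw [Fintype.card_sigma, Fintype.card_sigma] at hcard
  have hL : ∀ σ : {σ : Perm α // σ.cycleType.count k = m},
      Fintype.card {c : Perm α // c ∈ σ.1.cycleFactorsFinset ∧ c.support.card = k} = m :=
    fun σ => (count_eq_card σ.1 k).symm.trans σ.2
  have hR : ∀ c : {c : Perm α // c.cycleType = {k}},
      Fintype.card {σ : Perm α // c.1 ∈ σ.cycleFactorsFinset ∧ σ.cycleType.count k = m}
        = Fintype.card {τ : Perm (Fin (Fintype.card α - k)) // τ.cycleType.count k + 1 = m} := by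
    intro c
    rw [Fintype.card_congr (fiberEquiv c.2 m)]
    exact card_perm_congr (Fintype.equivFinOfCardEq (card_compl_support c.2))
      (fun M => M.count k + 1 = m)
  rw [Finset.sum_congr rfl (fun σ _ => hL σ), Finset.sum_congr rfl (fun c _ => hR c)] at hcard
  simp only [Finset.sum_const, smul_eq_mul, Finset.card_univ] at hcard
  rw [mul_comm]; exact hcard

-- new part:
lemma key_iff' {c : Perm α} {x : α} (hx : x ∉ c.support) (y : α) :
    y ≠ x ↔ c y ≠ x := by
  have hcx : c x = x := Equiv.Perm.notMem_support.mp hx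
  constructor
  · intro h hc2
    apply h
    apply c.injective
    rw [hc2, hcx]
  · intro h he
    rw [he] at h
    exact h hcx

def cycleRestrictEquiv (k : ℕ) (x : α) :
    {c : Perm α // c.cycleType = {k} ∧ x ∉ c.support} ≃
    {c' : Perm {y : α // y ≠ x} // c'.cycleType = {k}} where
  toFun := fun ⟨c, hc, hx⟩ =>
    ⟨c.subtypePerm (fun y => (key_iff' hx y).symm), by
      have hof : ofSubtype (c.subtypePerm (p := fun y => y ≠ x) (fun y => (key_iff' hx y).symm)) = c :=
        Equiv.Perm.ofSubtype_subtypePerm _ (fun y hy => by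
          intro he; rw [he] at hy; exact hy (Equiv.Perm.notMem_support.mp hx))
      have : (c.subtypePerm (p := fun y => y ≠ x) (fun y => (key_iff' hx y).symm)).cycleType = c.cycleType := by
        conv_rhs => rw [← hof]
        rw [Equiv.Perm.cycleType_ofSubtype]
      rw [this, hc]⟩
  invFun := fun ⟨c', hc'⟩ =>
    ⟨ofSubtype c', by
      refine ⟨by rw [Equiv.Perm.cycleType_ofSubtype]; exact hc', ?_⟩
      rw [Equiv.Perm.support_ofSubtype]
      intro hmem
      simp only [Finset.mem_map, Function.Embedding.coe_subtype] at hmem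
      obtain ⟨⟨y, hy⟩, -, h⟩ := hmem
      exact hy h⟩
  left_inv := fun ⟨c, hc, hx⟩ => by
    apply Subtype.ext
    show ofSubtype (c.subtypePerm (fun y => (key_iff' hx y).symm)) = c
    exact Equiv.Perm.ofSubtype_subtypePerm _ (fun y hy => by
      intro he; rw [he] at hy; exact hy (Equiv.Perm.notMem_support.mp hx))
  right_inv := fun ⟨c', hc'⟩ => by
    apply Subtype.ext
    apply Equiv.ext
    rintro ⟨y, hy⟩
    apply Subtype.ext
    show (ofSubtype c') y = ↑(c' ⟨y, hy⟩)
    rw [Equiv.Perm.ofSubtype_apply_of_mem c' hy]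

lemma cyc_count (k : ℕ) :
    Fintype.card {c : Perm α // c.cycleType = {k}} * (Fintype.card α - k)
      = Fintype.card α
        * Fintype.card {c : Perm (Fin (Fintype.card α - 1)) // c.cycleType = {k}} := by
  classical
  let e : (Σ c : {c : Perm α // c.cycleType = {k}}, {x : α // x ∉ c.1.support}) ≃
      (Σ x : α, {c : Perm α // c.cycleType = {k} ∧ x ∉ c.support}) :=
    { toFun := fun ⟨⟨c, hc⟩, ⟨x, hx⟩⟩ => ⟨x, ⟨c, hc, hx⟩⟩
      invFun := fun ⟨x, ⟨c, hc, hx⟩⟩ => ⟨⟨c, hc⟩, ⟨x, hx⟩⟩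
      left_inv := fun ⟨⟨c, hc⟩, ⟨x, hx⟩⟩ => rfl
      right_inv := fun ⟨x, ⟨c, hc, hx⟩⟩ => rfl }
  have hcard := Fintype.card_congr e
  rw [Fintype.card_sigma, Fintype.card_sigma] at hcard
  have hL : ∀ c : {c : Perm α // c.cycleType = {k}},
      Fintype.card {x : α // x ∉ c.1.support} = Fintype.card α - k :=
    fun c => card_compl_support c.2
  have hR : ∀ x : α,
      Fintype.card {c : Perm α // c.cycleType = {k} ∧ x ∉ c.support}
        = Fintype.card {c : Perm (Fin (Fintype.card α - 1)) // c.cycleType = {k}} := by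
    intro x
    rw [Fintype.card_congr (cycleRestrictEquiv k x)]
    have hcy : Fintype.card {y : α // y ≠ x} = Fintype.card α - 1 := by
      rw [Fintype.card_subtype_compl, Fintype.card_subtype_eq]
    exact card_perm_congr (Fintype.equivFinOfCardEq hcy) (fun M => M = {k})
  rw [Finset.sum_congr rfl (fun c _ => hL c), Finset.sum_congr rfl (fun x _ => hR x)] at hcard
  simp only [Finset.sum_const, smul_eq_mul, Finset.card_univ] at hcard
  exact hcard


end Stmt16Aux
-- PART 3 (to be appended): Nk machinery and main induction
namespace Stmt16Aux
open Equiv Equiv.Perm Finset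

lemma count_le_card_perm {α : Type*} [DecidableEq α] [Fintype α] (k : ℕ) (hk : 1 ≤ k)
    (σ : Perm α) : σ.cycleType.count k ≤ Fintype.card α := by
  have h1 : σ.cycleType.count k ≤ Multiset.card σ.cycleType := Multiset.count_le_card _ _
  have h2 : Multiset.card σ.cycleType ≤ σ.cycleType.sum := by
    have : ∀ s : Multiset ℕ, (∀ x ∈ s, 1 ≤ x) → Multiset.card s ≤ s.sum := by
      intro s
      induction s using Multiset.induction with
      | empty => simp
      | cons a s ih =>
        intro h
        rw [Multiset.card_cons, Multiset.sum_cons]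
        have ha : 1 ≤ a := h a (Multiset.mem_cons_self a s)
        have := ih (fun x hx => h x (Multiset.mem_cons_of_mem hx))
        omega
    exact this _ (fun x hx => le_of_lt (one_lt_of_mem_cycleType hx))
  have h3 : σ.cycleType.sum = σ.support.card := σ.sum_cycleType
  have h4 : σ.support.card ≤ Fintype.card α := by
    rw [← Finset.card_univ]
    exact Finset.card_le_card (Finset.subset_univ _)
  omega

def Nk (k n m : ℕ) : ℕ := Fintype.card {σ : Perm (Fin n) // σ.cycleType.count k = m}

def CkF (k n : ℕ) : ℕ := Fintype.card {c : Perm (Fin n) // c.cycleType = {k}}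

lemma markedN (k n m : ℕ) :
    m * Nk k n m = CkF k n * Fintype.card
      {τ : Perm (Fin (n - k)) // τ.cycleType.count k + 1 = m} := by
  have h := marked (α := Fin n) k m
  have e : Fintype.card {τ : Perm (Fin (Fintype.card (Fin n) - k)) //
        τ.cycleType.count k + 1 = m}
      = Fintype.card {τ : Perm (Fin (n - k)) // τ.cycleType.count k + 1 = m} :=
    card_perm_congr (finCongr (by rw [Fintype.card_fin]))
      (fun M => M.count k + 1 = m)
  rw [e] at h
  exact h

lemma cyc_countN (k n : ℕ) :
    CkF k n * (n - k) = n * CkF k (n - 1) := by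
  have h := cyc_count (α := Fin n) k
  have e : Fintype.card {c : Perm (Fin (Fintype.card (Fin n) - 1)) // c.cycleType = {k}}
      = Fintype.card {c : Perm (Fin (n - 1)) // c.cycleType = {k}} :=
    card_perm_congr (finCongr (by rw [Fintype.card_fin])) (fun M => M = {k})
  rw [e, Fintype.card_fin] at h
  exact h

lemma sum_Nk (k n B : ℕ) (hk : 1 ≤ k) (hn : n ≤ B) :
    ∑ m ∈ Finset.range (B + 1), Nk k n m = n.factorial := by
  classical
  have hb : ∀ σ : Perm (Fin n), σ.cycleType.count k ∈ Finset.range (B + 1) := by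
    intro σ
    rw [Finset.mem_range, Nat.lt_succ_iff]
    calc σ.cycleType.count k ≤ Fintype.card (Fin n) := count_le_card_perm k hk σ
      _ = n := Fintype.card_fin n
      _ ≤ B := hn
  have hpart := Finset.card_eq_sum_card_fiberwise
    (f := fun σ : Perm (Fin n) => σ.cycleType.count k)
    (s := Finset.univ) (t := Finset.range (B + 1)) (fun σ _ => hb σ)
  have hcardP : (Finset.univ : Finset (Perm (Fin n))).card = n.factorial := by
    rw [Finset.card_univ, Fintype.card_perm, Fintype.card_fin]
  rw [hcardP] at hpart
  rw [hpart]
  apply Finset.sum_congr rfl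
  intro m _
  rw [Nk, Fintype.card_subtype]

lemma Nk_eq_zero_of_gt (k n m : ℕ) (hkn : n < k) (hm : 1 ≤ m) : Nk k n m = 0 := by
  rw [Nk, Fintype.card_eq_zero_iff]
  constructor
  rintro ⟨σ, hσ⟩
  have : σ.cycleType.count k = 0 := by
    rw [Multiset.count_eq_zero]
    intro hmem
    have h1 : k ≤ σ.cycleType.sum := Multiset.le_sum_of_mem hmem
    have h2 := σ.sum_cycleType
    have h3 : σ.support.card ≤ n := by
      have := Finset.card_le_card (Finset.subset_univ σ.support)
      simpa using this
    omega
  omega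

lemma Nk_zero_of_gt (k n : ℕ) (hkn : n < k) : Nk k n 0 = n.factorial := by
  rw [Nk]
  have : ∀ σ : Perm (Fin n), σ.cycleType.count k = 0 := by
    intro σ
    rw [Multiset.count_eq_zero]
    intro hmem
    have h1 : k ≤ σ.cycleType.sum := Multiset.le_sum_of_mem hmem
    have h2 := σ.sum_cycleType
    have h3 : σ.support.card ≤ n := by
      have := Finset.card_le_card (Finset.subset_univ σ.support)
      simpa using this
    omega
  rw [Fintype.card_congr (Equiv.subtypeUnivEquiv this)]
  rw [Fintype.card_perm, Fintype.card_fin]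

theorem mainN (k : ℕ) (hk2 : 2 ≤ k) :
    ∀ n, 1 ≤ n → ¬ k ∣ n → ∀ m, Nk k n m = n * Nk k (n - 1) m := by
  intro n
  induction n using Nat.strong_induction_on with
  | _ n IH =>
    intro hn hkn m
    rcases lt_trichotomy n k with hlt | heq | hgt
    · -- n < k
      cases m with
      | zero =>
        rw [Nk_zero_of_gt k n hlt, Nk_zero_of_gt k (n - 1) (by omega)]
        exact (Nat.mul_factorial_pred (by omega)).symm
      | succ mm =>
        rw [Nk_eq_zero_of_gt k n mm.succ hlt (by omega),
          Nk_eq_zero_of_gt k (n - 1) mm.succ (by omega) (by omega)]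
        simp
    · exact absurd (heq ▸ dvd_refl k) hkn
    · -- n > k
      have hpos : ∀ mm : ℕ, Nk k n (mm + 1) = n * Nk k (n - 1) (mm + 1) := by
        intro mm
        have key1 := markedN k n (mm + 1)
        have key2 := markedN k (n - 1) (mm + 1)
        have cycid := cyc_countN k n
        have hTk1 : Fintype.card {τ : Perm (Fin (n - k)) // τ.cycleType.count k + 1 = mm + 1}
            = Nk k (n - k) mm :=
          Fintype.card_congr (Equiv.subtypeEquivRight fun τ => by omega)
        have hTk2 : Fintype.card
              {τ : Perm (Fin (n - 1 - k)) // τ.cycleType.count k + 1 = mm + 1}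
            = Nk k (n - 1 - k) mm :=
          Fintype.card_congr (Equiv.subtypeEquivRight fun τ => by omega)
        have hIH := IH (n - k) (by omega) (by omega)
          (fun hdvd => hkn (by
            have : n = (n - k) + k := by omega
            rw [this]; exact Nat.dvd_add hdvd dvd_rfl)) mm
        have hidx : n - k - 1 = n - 1 - k := by omega
        have main : (mm + 1) * Nk k n (mm + 1) = (mm + 1) * (n * Nk k (n - 1) (mm + 1)) := by
          calc (mm + 1) * Nk k n (mm + 1)
              = CkF k n * Nk k (n - k) mm := by rw [key1, hTk1]
            _ = CkF k n * ((n - k) * Nk k (n - k - 1) mm) := by rw [hIH]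
            _ = (CkF k n * (n - k)) * Nk k (n - k - 1) mm := by ring
            _ = (n * CkF k (n - 1)) * Nk k (n - 1 - k) mm := by rw [cycid, hidx]
            _ = n * (CkF k (n - 1) * Nk k (n - 1 - k) mm) := by ring
            _ = n * ((mm + 1) * Nk k (n - 1) (mm + 1)) := by rw [← hTk2, ← key2]
            _ = (mm + 1) * (n * Nk k (n - 1) (mm + 1)) := by ring
        exact Nat.eq_of_mul_eq_mul_left (by omega) main
      cases m with
      | succ mm => exact hpos mm
      | zero =>
        have hsum1 := sum_Nk k n n (by omega) le_rfl
        have hsum2 := sum_Nk k (n - 1) n (by omega) (by omega)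
        rw [Finset.sum_range_succ'] at hsum1 hsum2
        have hterm : ∑ i ∈ Finset.range n, Nk k n (i + 1)
            = n * ∑ i ∈ Finset.range n, Nk k (n - 1) (i + 1) := by
          rw [Finset.mul_sum]
          exact Finset.sum_congr rfl (fun i _ => hpos i)
        have hfac : n.factorial = n * (n - 1).factorial :=
          (Nat.mul_factorial_pred (by omega)).symm
        have hmul : n * (∑ i ∈ Finset.range n, Nk k (n - 1) (i + 1) + Nk k (n - 1) 0)
            = n.factorial := by rw [hsum2, ← hfac]
        rw [Nat.mul_add, ← hterm] at hmul
        omega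

end Stmt16Aux

theorem stmt16 (k n : ℕ) (hk : 1 ≤ k) (hn : 1 ≤ n) (hkn : ¬ k ∣ n) :
    ∃ φ : Equiv.Perm (Fin (n - 1)) × Fin n ≃ Equiv.Perm (Fin n),
      ∀ (π : Equiv.Perm (Fin (n - 1))) (x : Fin n),
        (φ (π, x)).cycleType.count k = π.cycleType.count k := by
  classical
  have hk2 : 2 ≤ k := by
    rcases Nat.lt_or_ge k 2 with h | h
    · have : k = 1 := by omega
      rw [this] at hkn
      exact absurd (one_dvd n) hkn
    · exact h
  have key := Stmt16Aux.mainN k hk2 n hn hkn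
  have cardeq : ∀ m : ℕ,
      Fintype.card {p : Equiv.Perm (Fin (n - 1)) × Fin n //
        (fun q : Equiv.Perm (Fin (n - 1)) × Fin n => q.1.cycleType.count k) p = m}
      = Fintype.card {σ : Equiv.Perm (Fin n) //
        (fun σ : Equiv.Perm (Fin n) => σ.cycleType.count k) σ = m} := by
    intro m
    have e1 : {p : Equiv.Perm (Fin (n - 1)) × Fin n //
          (fun q : Equiv.Perm (Fin (n - 1)) × Fin n => q.1.cycleType.count k) p = m}
        ≃ ({π : Equiv.Perm (Fin (n - 1)) // π.cycleType.count k = m} × Fin n) :=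
      { toFun := fun ⟨(a, b), h⟩ => (⟨a, h⟩, b)
        invFun := fun ⟨⟨a, h⟩, b⟩ => ⟨(a, b), h⟩
        left_inv := fun ⟨(a, b), h⟩ => rfl
        right_inv := fun ⟨⟨a, h⟩, b⟩ => rfl }
    rw [Fintype.card_congr e1, Fintype.card_prod, Fintype.card_fin]
    show Stmt16Aux.Nk k (n - 1) m * n = Stmt16Aux.Nk k n m
    rw [key m]
    ring
  exact ⟨Equiv.ofFiberEquiv (fun m => Fintype.equivOfCardEq (cardeq m)),
    fun π x => Equiv.ofFiberEquiv_map (fun m => Fintype.equivOfCardEq (cardeq m)) (π, x)⟩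
end
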